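/- arXiv:1205.6455 — 6 statements merged into one kernel-verified Lean document; each statement's English description precedes it below -/
import Mathlib

section
/- Let s be a solution of the p-flow on [0,T). Then the minimum of the speed is non-decreasing in time: for all 0 ≤ t₁ ≤ t₂ < T, min over θ ∈ [0,2π] of v(θ,t₁) is less than or equal to min over θ ∈ [0,2π] of v(θ,t₂). -/
open Real Set Filter MeasureTheory

noncomputable section

/-- Radius of curvature of the curve with support function `f`: `𝔯[f] = f'' + f`. -/
def rad (f : ℝ → ℝ) (θ : ℝ) : ℝ := iteratedDeriv 2 f θ + f θ

/-- The time domain `[0, T)`, where `0 < T ≤ ∞` is an extended real number. -/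
def timeDom (T : EReal) : Set ℝ := {t : ℝ | 0 ≤ t ∧ (t : EReal) < T}

/-- The speed `v(θ,t) = Ψ(θ) s(θ,t)^((2-2p)/(p+2)) 𝔯(θ,t)^(-p/(p+2))` of the `p`-flow. -/
def speed (p : ℝ) (Ψ : ℝ → ℝ) (s : ℝ → ℝ → ℝ) (θ t : ℝ) : ℝ :=
  Ψ θ * s θ t ^ ((2 - 2 * p) / (p + 2)) * rad (fun θ' => s θ' t) θ ^ (-p / (p + 2))

/-- `s : ℝ × [0,T) → ℝ` is a solution of the `p`-flow with weight `Ψ` on `[0, T)`,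
`0 < T ≤ ∞`: it is smooth, `π`-periodic in `θ`, positive, has positive radius of
curvature, and satisfies
`∂ₜ s = -Ψ(θ) s^((2-2p)/(p+2)) 𝔯^(-p/(p+2))`. -/
structure IsPFlow (p : ℝ) (Ψ : ℝ → ℝ) (T : EReal) (s : ℝ → ℝ → ℝ) : Prop where
  hp₁ : 1 < p
  hp₂ : p < 2
  hT : 0 < T
  hΨsmooth : ContDiff ℝ (⊤ : ℕ∞) Ψ
  hΨpos : ∀ θ, 0 < Ψ θ
  hΨper : Function.Periodic Ψ Real.pi
  hsmooth : ContDiffOn ℝ (⊤ : ℕ∞) (Function.uncurry s) (Set.univ ×ˢ timeDom T)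
  hper : ∀ t ∈ timeDom T, Function.Periodic (fun θ => s θ t) Real.pi
  hpos : ∀ θ : ℝ, ∀ t ∈ timeDom T, 0 < s θ t
  hconv : ∀ θ : ℝ, ∀ t ∈ timeDom T, 0 < rad (fun θ' => s θ' t) θ
  heq : ∀ θ : ℝ, ∀ t ∈ timeDom T,
    HasDerivWithinAt (fun τ => s θ τ) (-speed p Ψ s θ t) (timeDom T) t

/-- The area `A(t)` enclosed by the evolving curve. -/
def area (s : ℝ → ℝ → ℝ) (t : ℝ) : ℝ :=
  (1 / 2) * ∫ θ in (0:ℝ)..(2 * Real.pi), s θ t * rad (fun θ' => s θ' t) θ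

/-- The weighted `p`-affine length `Ω_p^Ψ(t)` of the evolving curve. -/
def wAffLen (p : ℝ) (Ψ : ℝ → ℝ) (s : ℝ → ℝ → ℝ) (t : ℝ) : ℝ :=
  ∫ θ in (0:ℝ)..(2 * Real.pi),
    Ψ θ * s θ t ^ ((2 - 2 * p) / (p + 2)) * rad (fun θ' => s θ' t) θ ^ ((2:ℝ) / (p + 2))


namespace MinSpeedAux

/-- The space-time domain. -/
def SS (T : EReal) : Set (ℝ × ℝ) := Set.univ ×ˢ timeDom T

lemma mem_SS {T : EReal} {x : ℝ × ℝ} : x ∈ SS T ↔ x.2 ∈ timeDom T := by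
  simp [SS]

lemma convex_timeDom (T : EReal) : Convex ℝ (timeDom T) := by
  rw [convex_iff_ordConnected]
  constructor
  intro x hx y hy z hz
  exact ⟨le_trans hx.1 hz.1, lt_of_le_of_lt (EReal.coe_le_coe_iff.2 hz.2) hy.2⟩

lemma isOpen_timeDomInt (T : EReal) : IsOpen {t : ℝ | 0 < t ∧ (t : EReal) < T} := by
  have : {t : ℝ | 0 < t ∧ (t : EReal) < T} = Ioi 0 ∩ (fun t : ℝ => (t : EReal)) ⁻¹' (Iio T) := by
    ext t; simp only [mem_setOf_eq, mem_inter_iff, mem_Ioi, mem_preimage, mem_Iio]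
  rw [this]
  exact isOpen_Ioi.inter (isOpen_Iio.preimage continuous_coe_real_ereal)

lemma timeDomInt_subset (T : EReal) : {t : ℝ | 0 < t ∧ (t : EReal) < T} ⊆ timeDom T :=
  fun t ht => ⟨le_of_lt ht.1, ht.2⟩

lemma exists_t0 {T : EReal} (hT : 0 < T) : ∃ t0 : ℝ, 0 < t0 ∧ (t0 : EReal) < T := by
  rcases EReal.lt_iff_exists_real_btwn.1 hT with ⟨x, hx0, hxT⟩
  exact ⟨x, by exact_mod_cast hx0, hxT⟩

lemma timeDomInt_subset_interior (T : EReal) :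
    {t : ℝ | 0 < t ∧ (t : EReal) < T} ⊆ interior (timeDom T) :=
  (isOpen_timeDomInt T).subset_interior_iff.2 (timeDomInt_subset T)

lemma interior_timeDom_nonempty {T : EReal} (hT : 0 < T) : (interior (timeDom T)).Nonempty := by
  rcases exists_t0 hT with ⟨t0, h1, h2⟩
  exact ⟨t0, timeDomInt_subset_interior T ⟨h1, h2⟩⟩

lemma uniqueDiffOn_timeDom {T : EReal} (hT : 0 < T) : UniqueDiffOn ℝ (timeDom T) :=
  uniqueDiffOn_convex (convex_timeDom T) (interior_timeDom_nonempty hT)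

lemma uniqueDiffOn_SS {T : EReal} (hT : 0 < T) : UniqueDiffOn ℝ (SS T) :=
  uniqueDiffOn_univ.prod (uniqueDiffOn_timeDom hT)

lemma mem_closure_interior_timeDom {T : EReal} (hT : 0 < T) {t : ℝ} (ht : t ∈ timeDom T) :
    t ∈ closure (interior (timeDom T)) := by
  rcases exists_t0 hT with ⟨t0, h1, h2⟩
  rcases lt_or_ge t t0 with h | h
  · have hsub : Ioo t t0 ⊆ interior (timeDom T) := by
      intro z hz
      exact timeDomInt_subset_interior T ⟨lt_of_le_of_lt ht.1 hz.1,
        lt_trans (by exact_mod_cast hz.2) h2⟩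
    have : t ∈ closure (Ioo t t0) := by
      rw [closure_Ioo (ne_of_lt h)]
      exact ⟨le_refl t, le_of_lt h⟩
    exact closure_mono hsub this
  · exact subset_closure (timeDomInt_subset_interior T ⟨lt_of_lt_of_le h1 h, ht.2⟩)

lemma mem_closure_interior_SS {T : EReal} (hT : 0 < T) {x : ℝ × ℝ} (hx : x ∈ SS T) :
    x ∈ closure (interior (SS T)) := by
  rw [SS, interior_prod_eq, closure_prod_eq, interior_univ, closure_univ]
  exact ⟨trivial, mem_closure_interior_timeDom hT (mem_SS.1 hx)⟩

/-- Partial derivative in the space direction. -/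
def pd1 (T : EReal) (G : ℝ × ℝ → ℝ) (x : ℝ × ℝ) : ℝ := fderivWithin ℝ G (SS T) x (1, 0)

/-- Partial derivative in the time direction. -/
def pd2 (T : EReal) (G : ℝ × ℝ → ℝ) (x : ℝ × ℝ) : ℝ := fderivWithin ℝ G (SS T) x (0, 1)

lemma slice1 {T : EReal} {G : ℝ × ℝ → ℝ} (hG : DifferentiableOn ℝ G (SS T)) {t : ℝ}
    (ht : t ∈ timeDom T) (θ : ℝ) :
    HasDerivAt (fun θ' => G (θ', t)) (pd1 T G (θ, t)) θ := by
  have hx : ((θ, t) : ℝ × ℝ) ∈ SS T := mem_SS.2 ht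
  have h := (hG _ hx).hasFDerivWithinAt
  have hline : HasFDerivAt (fun θ' : ℝ => ((θ' : ℝ), t))
      ((ContinuousLinearMap.id ℝ ℝ).prod (0 : ℝ →L[ℝ] ℝ)) θ :=
    (hasFDerivAt_id θ).prodMk (hasFDerivAt_const t θ)
  have hcomp := h.comp θ (hline.hasFDerivWithinAt (s := (univ : Set ℝ)))
    (fun y _ => mem_SS.2 ht)
  rw [hasFDerivWithinAt_univ] at hcomp
  have := hcomp.hasDerivAt
  exact this

lemma slice2 {T : EReal} {G : ℝ × ℝ → ℝ} (hG : DifferentiableOn ℝ G (SS T)) (θ : ℝ) {t : ℝ}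
    (ht : t ∈ timeDom T) :
    HasDerivWithinAt (fun τ => G (θ, τ)) (pd2 T G (θ, t)) (timeDom T) t := by
  have hx : ((θ, t) : ℝ × ℝ) ∈ SS T := mem_SS.2 ht
  have h := (hG _ hx).hasFDerivWithinAt
  have hline : HasFDerivAt (fun τ : ℝ => ((θ : ℝ), τ))
      ((0 : ℝ →L[ℝ] ℝ).prod (ContinuousLinearMap.id ℝ ℝ)) t :=
    (hasFDerivAt_const θ t).prodMk (hasFDerivAt_id t)
  have hcomp := h.comp t (hline.hasFDerivWithinAt (s := timeDom T))
    (fun y hy => mem_SS.2 hy)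
  have := hcomp.hasDerivWithinAt
  exact this


lemma contDiffOn_pd1 {T : EReal} (hT : 0 < T) {G : ℝ × ℝ → ℝ}
    (hG : ContDiffOn ℝ (⊤ : ℕ∞) G (SS T)) : ContDiffOn ℝ (⊤ : ℕ∞) (pd1 T G) (SS T) :=
  (hG.fderivWithin (uniqueDiffOn_SS hT) (by simp)).clm_apply contDiffOn_const

lemma contDiffOn_pd2 {T : EReal} (hT : 0 < T) {G : ℝ × ℝ → ℝ}
    (hG : ContDiffOn ℝ (⊤ : ℕ∞) G (SS T)) : ContDiffOn ℝ (⊤ : ℕ∞) (pd2 T G) (SS T) :=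
  (hG.fderivWithin (uniqueDiffOn_SS hT) (by simp)).clm_apply contDiffOn_const

lemma iteratedDeriv_two_slice {T : EReal} (hT : 0 < T) {G : ℝ × ℝ → ℝ}
    (hG : ContDiffOn ℝ (⊤ : ℕ∞) G (SS T)) {t : ℝ} (ht : t ∈ timeDom T) (θ : ℝ) :
    iteratedDeriv 2 (fun θ' => G (θ', t)) θ = pd1 T (pd1 T G) (θ, t) := by
  have hG' : DifferentiableOn ℝ G (SS T) := hG.differentiableOn (by decide)
  have hpd : DifferentiableOn ℝ (pd1 T G) (SS T) :=
    (contDiffOn_pd1 hT hG).differentiableOn (by decide)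
  have h1 : deriv (fun θ'' => G (θ'', t)) = fun θ' => pd1 T G (θ', t) := by
    funext θ'
    exact (slice1 hG' ht θ').deriv
  rw [show (2 : ℕ) = 1 + 1 from rfl, iteratedDeriv_succ, iteratedDeriv_one, h1]
  exact (slice1 hpd ht θ).deriv

lemma pd_comm {T : EReal} (hT : 0 < T) {G : ℝ × ℝ → ℝ}
    (hG : ContDiffOn ℝ (⊤ : ℕ∞) G (SS T)) {x : ℝ × ℝ} (hx : x ∈ SS T) :
    pd2 T (pd1 T G) x = pd1 T (pd2 T G) x := by
  have hS := uniqueDiffOn_SS hT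
  have hsym : ∀ v w, fderivWithin ℝ (fderivWithin ℝ G (SS T)) (SS T) x v w =
      fderivWithin ℝ (fderivWithin ℝ G (SS T)) (SS T) x w v :=
    (hG x hx).isSymmSndFDerivWithinAt (by simp; exact WithTop.coe_le_coe.2 (le_top : (2:ℕ∞) ≤ ⊤)) hS
      (mem_closure_interior_SS hT hx) hx
  have hdiff : DifferentiableWithinAt ℝ (fderivWithin ℝ G (SS T)) (SS T) x :=
    ((hG.fderivWithin (m := (⊤:ℕ∞)) hS (by simp)).differentiableOn (by decide)) x hx
  have e1 : ∀ (v w : ℝ × ℝ), fderivWithin ℝ (fun y => fderivWithin ℝ G (SS T) y v) (SS T) x w =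
      fderivWithin ℝ (fderivWithin ℝ G (SS T)) (SS T) x w v := by
    intro v w
    rw [fderivWithin_clm_apply (hS x hx) hdiff (differentiableWithinAt_const v),
      fderivWithin_const_apply v]
    simp
  have h2 : pd2 T (pd1 T G) x = fderivWithin ℝ (fderivWithin ℝ G (SS T)) (SS T) x (0, 1) (1, 0) :=
    e1 (1, 0) (0, 1)
  have h1 : pd1 T (pd2 T G) x = fderivWithin ℝ (fderivWithin ℝ G (SS T)) (SS T) x (1, 0) (0, 1) :=
    e1 (0, 1) (1, 0)
  rw [h2, h1, hsym]


/-- The support function as a joint function. -/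
def Fj (s : ℝ → ℝ → ℝ) : ℝ × ℝ → ℝ := Function.uncurry s

/-- The radius of curvature as a joint function. -/
def Rj (T : EReal) (s : ℝ → ℝ → ℝ) : ℝ × ℝ → ℝ := fun x => pd1 T (pd1 T (Fj s)) x + Fj s x

/-- The speed as a joint function. -/
def Vj (p : ℝ) (Ψ : ℝ → ℝ) (T : EReal) (s : ℝ → ℝ → ℝ) : ℝ × ℝ → ℝ :=
  fun x => Ψ x.1 * Fj s x ^ ((2 - 2 * p) / (p + 2)) * Rj T s x ^ (-p / (p + 2))

/-- The time derivative of the speed, as a joint function. -/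
def Wj (p : ℝ) (Ψ : ℝ → ℝ) (T : EReal) (s : ℝ → ℝ → ℝ) : ℝ × ℝ → ℝ := fun x =>
  Ψ x.1 * (pd2 T (Fj s) x * ((2 - 2 * p) / (p + 2)) * Fj s x ^ ((2 - 2 * p) / (p + 2) - 1) *
      Rj T s x ^ (-p / (p + 2)) +
    Fj s x ^ ((2 - 2 * p) / (p + 2)) *
      (pd2 T (Rj T s) x * (-p / (p + 2)) * Rj T s x ^ (-p / (p + 2) - 1)))

variable {p : ℝ} {Ψ : ℝ → ℝ} {T : EReal} {s : ℝ → ℝ → ℝ}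

lemma hF (hflow : IsPFlow p Ψ T s) : ContDiffOn ℝ (⊤ : ℕ∞) (Fj s) (SS T) := hflow.hsmooth

lemma Fj_pos (hflow : IsPFlow p Ψ T s) {x : ℝ × ℝ} (hx : x ∈ SS T) : 0 < Fj s x :=
  hflow.hpos x.1 x.2 (mem_SS.1 hx)

lemma Rj_eq_rad (hflow : IsPFlow p Ψ T s) {t : ℝ} (ht : t ∈ timeDom T) (θ : ℝ) :
    Rj T s (θ, t) = rad (fun θ' => s θ' t) θ := by
  have h := iteratedDeriv_two_slice hflow.hT (hF hflow) ht θ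
  show pd1 T (pd1 T (Fj s)) (θ, t) + Fj s (θ, t) = _
  rw [rad, ← h]
  rfl

lemma Rj_pos (hflow : IsPFlow p Ψ T s) {x : ℝ × ℝ} (hx : x ∈ SS T) : 0 < Rj T s x := by
  have h := Rj_eq_rad hflow (mem_SS.1 hx) x.1
  have h2 := hflow.hconv x.1 x.2 (mem_SS.1 hx)
  rw [show x = (x.1, x.2) from rfl, h]
  exact h2

lemma hR (hflow : IsPFlow p Ψ T s) : ContDiffOn ℝ (⊤ : ℕ∞) (Rj T s) (SS T) :=
  (contDiffOn_pd1 hflow.hT (contDiffOn_pd1 hflow.hT (hF hflow))).add (hF hflow)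

lemma hV (hflow : IsPFlow p Ψ T s) : ContDiffOn ℝ (⊤ : ℕ∞) (Vj p Ψ T s) (SS T) := by
  refine ContDiffOn.mul (ContDiffOn.mul ?_ ?_) ?_
  · exact (hflow.hΨsmooth.comp contDiff_fst).contDiffOn
  · exact (hF hflow).rpow_const_of_ne fun x hx => ne_of_gt (Fj_pos hflow hx)
  · exact (hR hflow).rpow_const_of_ne fun x hx => ne_of_gt (Rj_pos hflow hx)

lemma Vj_pos (hflow : IsPFlow p Ψ T s) {x : ℝ × ℝ} (hx : x ∈ SS T) : 0 < Vj p Ψ T s x :=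
  mul_pos (mul_pos (hflow.hΨpos x.1) (Real.rpow_pos_of_pos (Fj_pos hflow hx) _))
    (Real.rpow_pos_of_pos (Rj_pos hflow hx) _)

lemma Vj_eq_speed (hflow : IsPFlow p Ψ T s) {t : ℝ} (ht : t ∈ timeDom T) (θ : ℝ) :
    Vj p Ψ T s (θ, t) = speed p Ψ s θ t := by
  rw [speed, ← Rj_eq_rad hflow ht]
  rfl

lemma pd2_Fj (hflow : IsPFlow p Ψ T s) {t : ℝ} (ht : t ∈ timeDom T) (θ : ℝ) :
    pd2 T (Fj s) (θ, t) = -Vj p Ψ T s (θ, t) := by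
  have hUt := uniqueDiffOn_timeDom hflow.hT t ht
  have h1 := (slice2 ((hF hflow).differentiableOn (by decide)) θ ht).derivWithin hUt
  have h2 := (hflow.heq θ t ht).derivWithin hUt
  rw [Vj_eq_speed hflow ht]
  exact (h1.symm.trans h2).symm ▸ (h1.symm.trans h2)

variable {p : ℝ} {Ψ : ℝ → ℝ} {T : EReal} {s : ℝ → ℝ → ℝ}

lemma pd2_Rj (hflow : IsPFlow p Ψ T s) {t : ℝ} (ht : t ∈ timeDom T) (θ : ℝ) :
    pd2 T (Rj T s) (θ, t) = -(pd1 T (pd1 T (Vj p Ψ T s)) (θ, t) + Vj p Ψ T s (θ, t)) := by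
  have hT := hflow.hT
  have hUD := uniqueDiffOn_SS hT
  have hx : ((θ, t) : ℝ × ℝ) ∈ SS T := mem_SS.2 ht
  have hdiff1 : DifferentiableWithinAt ℝ (pd1 T (pd1 T (Fj s))) (SS T) (θ, t) :=
    ((contDiffOn_pd1 hT (contDiffOn_pd1 hT (hF hflow))).differentiableOn (by decide)) _ hx
  have hdiffF : DifferentiableWithinAt ℝ (Fj s) (SS T) (θ, t) :=
    ((hF hflow).differentiableOn (by decide)) _ hx
  have hadd : pd2 T (Rj T s) (θ, t) =
      pd2 T (pd1 T (pd1 T (Fj s))) (θ, t) + pd2 T (Fj s) (θ, t) := by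
    unfold pd2 Rj
    rw [fderivWithin_fun_add (hUD _ hx) hdiff1 hdiffF]
    simp
  have hcomm1 : pd2 T (pd1 T (pd1 T (Fj s))) (θ, t) = pd1 T (pd2 T (pd1 T (Fj s))) (θ, t) :=
    pd_comm hT (contDiffOn_pd1 hT (hF hflow)) hx
  have heqon : Set.EqOn (pd2 T (pd1 T (Fj s))) (pd1 T (pd2 T (Fj s))) (SS T) :=
    fun y hy => pd_comm hT (hF hflow) hy
  have hcomm2 : pd1 T (pd2 T (pd1 T (Fj s))) (θ, t) = pd1 T (pd1 T (pd2 T (Fj s))) (θ, t) := by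
    show fderivWithin ℝ (pd2 T (pd1 T (Fj s))) (SS T) (θ, t) (1, 0) =
      fderivWithin ℝ (pd1 T (pd2 T (Fj s))) (SS T) (θ, t) (1, 0)
    rw [fderivWithin_congr' heqon hx]
  have heqon2 : Set.EqOn (pd2 T (Fj s)) (fun y => -Vj p Ψ T s y) (SS T) := by
    intro y hy
    exact pd2_Fj hflow (mem_SS.1 hy) y.1
  have hstep : Set.EqOn (pd1 T (pd2 T (Fj s))) (fun y => -(pd1 T (Vj p Ψ T s) y)) (SS T) := by
    intro y hy
    show fderivWithin ℝ (pd2 T (Fj s)) (SS T) y (1, 0) =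
      -(fderivWithin ℝ (Vj p Ψ T s) (SS T) y (1, 0))
    rw [fderivWithin_congr' heqon2 hy, fderivWithin_fun_neg (hUD y hy)]
    simp
  have hcomm3 : pd1 T (pd1 T (pd2 T (Fj s))) (θ, t) = -(pd1 T (pd1 T (Vj p Ψ T s)) (θ, t)) := by
    show fderivWithin ℝ (pd1 T (pd2 T (Fj s))) (SS T) (θ, t) (1, 0) = _
    rw [fderivWithin_congr' hstep hx, fderivWithin_fun_neg (hUD _ hx)]
    simp [pd1]
  rw [hadd, hcomm1, hcomm2, hcomm3, pd2_Fj hflow ht]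
  ring

lemma hasDerivWithinAt_Vj (hflow : IsPFlow p Ψ T s) (θ : ℝ) {t : ℝ} (ht : t ∈ timeDom T) :
    HasDerivWithinAt (fun τ => Vj p Ψ T s (θ, τ)) (Wj p Ψ T s (θ, t)) (timeDom T) t := by
  have hT := hflow.hT
  have hx : ((θ, t) : ℝ × ℝ) ∈ SS T := mem_SS.2 ht
  have hf : HasDerivWithinAt (fun τ => Fj s (θ, τ)) (pd2 T (Fj s) (θ, t)) (timeDom T) t :=
    slice2 ((hF hflow).differentiableOn (by decide)) θ ht
  have hg : HasDerivWithinAt (fun τ => Rj T s (θ, τ)) (pd2 T (Rj T s) (θ, t)) (timeDom T) t :=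
    slice2 ((hR hflow).differentiableOn (by decide)) θ ht
  have hfA := hf.rpow_const (p := (2 - 2 * p) / (p + 2)) (Or.inl (ne_of_gt (Fj_pos hflow hx)))
  have hgB := hg.rpow_const (p := -p / (p + 2)) (Or.inl (ne_of_gt (Rj_pos hflow hx)))
  have h1 := (hfA.const_mul (Ψ θ)).mul hgB
  show HasDerivWithinAt
    (fun τ => Ψ θ * Fj s (θ, τ) ^ ((2 - 2 * p) / (p + 2)) * Rj T s (θ, τ) ^ (-p / (p + 2)))
    (Wj p Ψ T s (θ, t)) (timeDom T) t
  refine h1.congr_deriv ?_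
  unfold Wj
  ring

lemma Wj_continuousOn (hflow : IsPFlow p Ψ T s) : ContinuousOn (Wj p Ψ T s) (SS T) := by
  have hT := hflow.hT
  have hcF : ContinuousOn (Fj s) (SS T) := (hF hflow).continuousOn
  have hcR : ContinuousOn (Rj T s) (SS T) := (hR hflow).continuousOn
  have hc2F : ContinuousOn (pd2 T (Fj s)) (SS T) := (contDiffOn_pd2 hT (hF hflow)).continuousOn
  have hc2R : ContinuousOn (pd2 T (Rj T s)) (SS T) := (contDiffOn_pd2 hT (hR hflow)).continuousOn
  have hΨc : ContinuousOn (fun x : ℝ × ℝ => Ψ x.1) (SS T) :=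
    (hflow.hΨsmooth.continuous.comp continuous_fst).continuousOn
  refine hΨc.mul (ContinuousOn.add ?_ ?_)
  · exact ((hc2F.mul continuousOn_const).mul
      (hcF.rpow_const fun x hx => Or.inl (ne_of_gt (Fj_pos hflow hx)))).mul
      (hcR.rpow_const fun x hx => Or.inl (ne_of_gt (Rj_pos hflow hx)))
  · exact (hcF.rpow_const fun x hx => Or.inl (ne_of_gt (Fj_pos hflow hx))).mul
      ((hc2R.mul continuousOn_const).mul
        (hcR.rpow_const fun x hx => Or.inl (ne_of_gt (Rj_pos hflow hx))))

open Topology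
variable {p : ℝ} {Ψ : ℝ → ℝ} {T : EReal} {s : ℝ → ℝ → ℝ}

/-- Second derivative test: at a local minimum the second derivative is nonnegative. -/
lemma deriv2_nonneg_of_isLocalMin {f f' : ℝ → ℝ} {c x : ℝ}
    (hf : ∀ y, HasDerivAt f (f' y) y) (hf' : HasDerivAt f' c x)
    (hmin : IsLocalMin f x) : 0 ≤ c := by
  by_contra hc
  push_neg at hc
  have hfx : f' x = 0 := by
    have := hmin.deriv_eq_zero
    rwa [(hf x).deriv] at this
  have hslope : Tendsto (slope f' x) (𝓝[≠] x) (𝓝 c) :=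
    hasDerivAt_iff_tendsto_slope.1 hf'
  have hev : ∀ᶠ y in 𝓝[>] x, slope f' x y < c / 2 := by
    have hmem : Iio (c / 2) ∈ 𝓝 c := Iio_mem_nhds (by linarith)
    have h2 := hslope (hmem)
    exact nhdsWithin_mono x (fun y (hy : y ∈ Ioi x) => ne_of_gt hy) h2
  rcases (mem_nhdsGT_iff_exists_Ioc_subset).1 hev with ⟨u, hu, hub⟩
  have hu' : x < u := hu
  -- f' is negative on (x, u]
  have hneg : ∀ y ∈ Ioc x u, f' y < 0 := by
    intro y hy
    have h1 : slope f' x y < c / 2 := hub hy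
    rw [slope_def_field, hfx, sub_zero, div_lt_iff₀ (by linarith [hy.1])] at h1
    nlinarith [hy.1, hc]
  -- hence f is strictly decreasing on [x, u]
  have hanti : StrictAntiOn f (Icc x u) := by
    apply strictAntiOn_of_deriv_neg (convex_Icc x u)
    · exact fun y _ => (hf y).continuousAt.continuousWithinAt
    · intro y hy
      rw [interior_Icc] at hy
      rw [(hf y).deriv]
      exact hneg y ⟨hy.1, le_of_lt hy.2⟩
  -- contradiction with local minimum
  rcases Metric.mem_nhds_iff.1 hmin with ⟨ε, hε, hball⟩
  set y := min u (x + ε / 2) with hy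
  have hxy : x < y := lt_min hu' (by linarith)
  have h1 : f y < f x := hanti (left_mem_Icc.2 (le_of_lt hu'))
    ⟨le_of_lt hxy, min_le_left _ _⟩ hxy
  have h2 : f x ≤ f y := by
    apply hball
    rw [Metric.mem_ball, Real.dist_eq, abs_sub_lt_iff]
    constructor
    · have : y ≤ x + ε / 2 := min_le_right _ _
      linarith
    · linarith
  linarith

lemma periodic_deriv' (f : ℝ → ℝ) (c : ℝ) (h : Function.Periodic f c) :
    Function.Periodic (deriv f) c := by
  intro x
  have : (fun z => f (z + c)) = f := funext h
  rw [← deriv_comp_add_const f c, this]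

lemma Vslice_periodic (hflow : IsPFlow p Ψ T s) {t : ℝ} (ht : t ∈ timeDom T) :
    Function.Periodic (fun θ => Vj p Ψ T s (θ, t)) Real.pi := by
  intro θ
  have hs : Function.Periodic (fun θ' => s θ' t) Real.pi := hflow.hper t ht
  have hrad : Function.Periodic (rad (fun θ' => s θ' t)) Real.pi := by
    intro y
    have hiter : iteratedDeriv 2 (fun θ' => s θ' t) (y + Real.pi)
        = iteratedDeriv 2 (fun θ' => s θ' t) y := by
      have h1 : (fun z => s (z + Real.pi) t) = fun z => s z t := funext fun z => hs z
      calc iteratedDeriv 2 (fun θ' => s θ' t) (y + Real.pi)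
          = iteratedDeriv 2 (fun z => s (z + Real.pi) t) y :=
            (congrFun (iteratedDeriv_comp_add_const 2 (fun θ' => s θ' t) Real.pi) y).symm
        _ = iteratedDeriv 2 (fun z => s z t) y := by rw [h1]
    have hsy : s (y + Real.pi) t = s y t := hs y
    simp only [rad]
    rw [hiter, hsy]
  show Vj p Ψ T s (θ + Real.pi, t) = Vj p Ψ T s (θ, t)
  rw [Vj_eq_speed hflow ht, Vj_eq_speed hflow ht]
  unfold speed
  have hsθ : s (θ + Real.pi) t = s θ t := hs θ
  have hradθ : rad (fun θ' => s θ' t) (θ + Real.pi) = rad (fun θ' => s θ' t) θ := hrad θ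
  rw [hflow.hΨper θ, hsθ, hradθ]

open Topology
variable {p : ℝ} {Ψ : ℝ → ℝ} {T : EReal} {s : ℝ → ℝ → ℝ}

/-- The minimum of the speed at time `t`. -/
def mV (p : ℝ) (Ψ : ℝ → ℝ) (T : EReal) (s : ℝ → ℝ → ℝ) (t : ℝ) : ℝ :=
  sInf ((fun θ => Vj p Ψ T s (θ, t)) '' Icc 0 (2 * Real.pi))

lemma Vslice_cont (hflow : IsPFlow p Ψ T s) {t : ℝ} (ht : t ∈ timeDom T) :
    Continuous (fun θ => Vj p Ψ T s (θ, t)) := by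
  rw [continuous_iff_continuousAt]
  intro θ
  exact (slice1 ((hV hflow).differentiableOn (by decide)) ht θ).continuousAt

lemma image_nonempty {t : ℝ} :
    ((fun θ => Vj p Ψ T s (θ, t)) '' Icc 0 (2 * Real.pi)).Nonempty :=
  Nonempty.image _ ((nonempty_Icc (a := (0:ℝ)) (b := 2 * Real.pi)).2 (by linarith [Real.pi_pos]))

lemma exists_minimizer (hflow : IsPFlow p Ψ T s) {t : ℝ} (ht : t ∈ timeDom T) :
    ∃ θ0 ∈ Icc 0 (2 * Real.pi), mV p Ψ T s t = Vj p Ψ T s (θ0, t) ∧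
      IsLeast ((fun θ => Vj p Ψ T s (θ, t)) '' Icc 0 (2 * Real.pi)) (Vj p Ψ T s (θ0, t)) := by
  obtain ⟨θ0, hθ0, hmin⟩ := isCompact_Icc.exists_isMinOn
    ((nonempty_Icc (a := (0:ℝ)) (b := 2 * Real.pi)).2 (by linarith [Real.pi_pos]))
    ((Vslice_cont hflow ht).continuousOn)
  have hleast : IsLeast ((fun θ => Vj p Ψ T s (θ, t)) '' Icc 0 (2 * Real.pi))
      (Vj p Ψ T s (θ0, t)) := by
    constructor
    · exact mem_image_of_mem _ hθ0
    · rintro y ⟨θ, hθ, rfl⟩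
      exact hmin hθ
  exact ⟨θ0, hθ0, hleast.csInf_eq, hleast⟩

lemma mV_le (hflow : IsPFlow p Ψ T s) {t : ℝ} (ht : t ∈ timeDom T) {θ : ℝ}
    (hθ : θ ∈ Icc 0 (2 * Real.pi)) : mV p Ψ T s t ≤ Vj p Ψ T s (θ, t) := by
  obtain ⟨θ0, _, heq, hleast⟩ := exists_minimizer hflow ht
  rw [heq]
  exact hleast.2 (mem_image_of_mem _ hθ)

lemma mV_le_global (hflow : IsPFlow p Ψ T s) {t : ℝ} (ht : t ∈ timeDom T) (θ : ℝ) :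
    mV p Ψ T s t ≤ Vj p Ψ T s (θ, t) := by
  obtain ⟨y, hy, hEq⟩ := (Vslice_periodic hflow ht).exists_mem_Ico₀ Real.pi_pos θ
  have hy2 : y ∈ Icc 0 (2 * Real.pi) := ⟨hy.1, by linarith [hy.2, Real.pi_pos]⟩
  calc mV p Ψ T s t ≤ Vj p Ψ T s (y, t) := mV_le hflow ht hy2
    _ = Vj p Ψ T s (θ, t) := hEq.symm

lemma Wj_pos_at_min (hflow : IsPFlow p Ψ T s) {t : ℝ} (ht : t ∈ timeDom T) {θ0 : ℝ}
    (hmin : ∀ θ : ℝ, Vj p Ψ T s (θ0, t) ≤ Vj p Ψ T s (θ, t)) :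
    0 < Wj p Ψ T s (θ0, t) := by
  have hT := hflow.hT
  have hx : ((θ0, t) : ℝ × ℝ) ∈ SS T := mem_SS.2 ht
  -- second derivative of the speed in space is nonnegative at the minimum
  have hdd : 0 ≤ pd1 T (pd1 T (Vj p Ψ T s)) (θ0, t) := by
    apply deriv2_nonneg_of_isLocalMin
      (f := fun θ => Vj p Ψ T s (θ, t)) (f' := fun θ => pd1 T (Vj p Ψ T s) (θ, t))
    · exact fun y => slice1 ((hV hflow).differentiableOn (by decide)) ht y
    · exact slice1 ((contDiffOn_pd1 hT (hV hflow)).differentiableOn (by decide)) ht θ0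
    · exact Filter.Eventually.of_forall hmin
  have hΨ0 : 0 < Ψ θ0 := hflow.hΨpos θ0
  have hv : 0 < Vj p Ψ T s (θ0, t) := Vj_pos hflow hx
  have hFp : 0 < Fj s (θ0, t) := Fj_pos hflow hx
  have hRp : 0 < Rj T s (θ0, t) := Rj_pos hflow hx
  have hA : (2 - 2 * p) / (p + 2) < 0 := by
    apply div_neg_of_neg_of_pos <;> nlinarith [hflow.hp₁, hflow.hp₂]
  have hB : -p / (p + 2) < 0 := by
    apply div_neg_of_neg_of_pos <;> nlinarith [hflow.hp₁, hflow.hp₂]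
  unfold Wj
  rw [pd2_Fj hflow ht, pd2_Rj hflow ht]
  set A := (2 - 2 * p) / (p + 2)
  set B := -p / (p + 2)
  set v := Vj p Ψ T s (θ0, t)
  set q := pd1 T (pd1 T (Vj p Ψ T s)) (θ0, t)
  set F := Fj s (θ0, t)
  set R := Rj T s (θ0, t)
  have key : -v * A * F ^ (A - 1) * R ^ B + F ^ A * (-(q + v) * B * R ^ (B - 1))
      = (-A) * (v * (F ^ (A - 1) * R ^ B)) + (-B) * ((q + v) * (F ^ A * R ^ (B - 1))) := by
    ring
  rw [key]
  have h1 : 0 < (-A) * (v * (F ^ (A - 1) * R ^ B)) := by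
    apply mul_pos (by linarith)
    exact mul_pos hv (mul_pos (Real.rpow_pos_of_pos hFp _) (Real.rpow_pos_of_pos hRp _))
  have h2 : 0 < (-B) * ((q + v) * (F ^ A * R ^ (B - 1))) := by
    apply mul_pos (by linarith)
    exact mul_pos (by linarith)
      (mul_pos (Real.rpow_pos_of_pos hFp _) (Real.rpow_pos_of_pos hRp _))
  exact mul_pos hΨ0 (by linarith)

open Topology
variable {p : ℝ} {Ψ : ℝ → ℝ} {T : EReal} {s : ℝ → ℝ → ℝ}

lemma mV_local_mono (hflow : IsPFlow p Ψ T s) {t t₂ : ℝ} (ht : t ∈ timeDom T)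
    (ht₂ : t₂ ∈ timeDom T) (htt : t < t₂) :
    ∃ δ > 0, ∀ u, t < u → u ≤ t + δ → mV p Ψ T s t ≤ mV p Ψ T s u := by
  have hT := hflow.hT
  have hIccD : Icc t t₂ ⊆ timeDom T := (convex_timeDom T).ordConnected.out ht ht₂
  set g : ℝ → ℝ := fun θ => Vj p Ψ T s (θ, t) with hg
  set m := mV p Ψ T s t with hm
  set K := Icc 0 (2 * Real.pi) ∩ g ⁻¹' {m} with hK
  have hKcompact : IsCompact K :=
    isCompact_Icc.inter_right ((isClosed_singleton).preimage (Vslice_cont hflow ht))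
  -- W is positive on K × {t}
  have hWpos : ∀ θ ∈ K, 0 < Wj p Ψ T s (θ, t) := by
    intro θ hθ
    apply Wj_pos_at_min hflow ht
    intro θ'
    have : g θ = m := hθ.2
    show Vj p Ψ T s (θ, t) ≤ Vj p Ψ T s (θ', t)
    rw [show Vj p Ψ T s (θ, t) = m from this]
    exact mV_le_global hflow ht θ'
  -- an open set on which W is positive (within the domain)
  set P := {x : ℝ × ℝ | ∃ U : Set (ℝ × ℝ), IsOpen U ∧ x ∈ U ∧
    ∀ y ∈ U ∩ SS T, 0 < Wj p Ψ T s y} with hP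
  have hPopen : IsOpen P := by
    rw [isOpen_iff_forall_mem_open]
    rintro x ⟨U, hUo, hxU, hUp⟩
    exact ⟨U, fun y hy => ⟨U, hUo, hy, hUp⟩, hUo, hxU⟩
  have hKP : K ×ˢ ({t} : Set ℝ) ⊆ P := by
    rintro ⟨θ, τ⟩ ⟨hθ, hτ⟩
    rcases hτ with rfl
    have hc := (Wj_continuousOn hflow) (θ, τ) (mem_SS.2 ht)
    have hev : Wj p Ψ T s ⁻¹' (Ioi 0) ∈ 𝓝[SS T] (θ, τ) := hc (Ioi_mem_nhds (hWpos θ hθ))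
    rcases mem_nhdsWithin.1 hev with ⟨U, hUopen, hxU, hUsub⟩
    exact ⟨U, hUopen, hxU, fun y hy => hUsub hy⟩
  obtain ⟨O, v, hOopen, hvopen, hKO, htv, hOv⟩ :=
    generalized_tube_lemma hKcompact isCompact_singleton hPopen hKP
  have htv' : t ∈ v := htv rfl
  rcases Metric.isOpen_iff.1 hvopen t htv' with ⟨δ1, hδ1, hball⟩
  -- a gap on the complement of O
  set C := Icc 0 (2 * Real.pi) \ O with hC
  have hCcomp : IsCompact C := isCompact_Icc.diff hOopen
  obtain ⟨η, hη, hCbound⟩ : ∃ η > 0, ∀ θ ∈ C, m + η ≤ g θ := by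
    by_cases hCe : C.Nonempty
    · obtain ⟨θC, hθC, hminC⟩ := hCcomp.exists_isMinOn hCe
        ((Vslice_cont hflow ht).continuousOn)
      have h0 : m ≤ g θC := mV_le hflow ht hθC.1
      have h1 : m < g θC := by
        rcases eq_or_lt_of_le h0 with h | h
        · exact absurd (hKO ⟨hθC.1, h.symm⟩) hθC.2
        · exact h
      exact ⟨g θC - m, by linarith, fun θ hθ => by linarith [(isMinOn_iff.1 hminC) θ hθ]⟩
    · exact ⟨1, one_pos, fun θ hθ => absurd ⟨θ, hθ⟩ hCe⟩
  -- uniform continuity on a compact space-time block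
  set Q := Icc 0 (2 * Real.pi) ×ˢ Icc t t₂ with hQdef
  have hQ : IsCompact Q := isCompact_Icc.prod isCompact_Icc
  have hQS : Q ⊆ SS T := fun x hx => mem_SS.2 (hIccD hx.2)
  have hVQ : ContinuousOn (Vj p Ψ T s) Q := ((hV hflow).continuousOn).mono hQS
  have hUC := hQ.uniformContinuousOn_of_continuous hVQ
  rcases Metric.uniformContinuousOn_iff.1 hUC (η / 2) (by linarith) with ⟨δ2, hδ2, hδ2p⟩
  refine ⟨min (δ1 / 2) (min (δ2 / 2) (t₂ - t)),
    lt_min (by linarith) (lt_min (by linarith) (by linarith)), ?_⟩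
  intro u hu1 hu2
  have hu3 : u ≤ t₂ := by
    have := min_le_right (δ1 / 2) (min (δ2 / 2) (t₂ - t))
    have := min_le_right (δ2 / 2) (t₂ - t)
    linarith [le_trans hu2 (by linarith : t + min (δ1 / 2) (min (δ2 / 2) (t₂ - t)) ≤ t₂)]
  have huδ1 : u - t < δ1 := by
    have h1 := min_le_left (δ1 / 2) (min (δ2 / 2) (t₂ - t))
    linarith
  have huδ2 : u - t < δ2 := by
    have h1 := min_le_right (δ1 / 2) (min (δ2 / 2) (t₂ - t))
    have h2 := min_le_left (δ2 / 2) (t₂ - t)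
    linarith
  have huD : u ∈ timeDom T := hIccD ⟨le_of_lt hu1, hu3⟩
  apply le_csInf image_nonempty
  rintro b ⟨θ, hθ, rfl⟩
  by_cases hθO : θ ∈ O
  · -- on O, the speed is monotone in time
    have hvsub : Icc t u ⊆ v := by
      intro τ hτ
      apply hball
      rw [Metric.mem_ball, Real.dist_eq, abs_sub_lt_iff]
      constructor <;> [linarith [hτ.2, hτ.1]; linarith [hτ.1, hδ1]]
    have hIuD : Icc t u ⊆ timeDom T := fun τ hτ => hIccD ⟨hτ.1, le_trans hτ.2 hu3⟩
    have hmono : MonotoneOn (fun τ => Vj p Ψ T s (θ, τ)) (Icc t u) := by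
      apply monotoneOn_of_deriv_nonneg (convex_Icc t u)
      · intro τ hτ
        exact ((hasDerivWithinAt_Vj hflow θ (hIuD hτ)).continuousWithinAt).mono hIuD
      · intro τ hτ
        rw [interior_Icc] at hτ
        have hτD : τ ∈ timeDom T := hIuD ⟨le_of_lt hτ.1, le_of_lt hτ.2⟩
        have hτT : (τ : EReal) < T := lt_of_le_of_lt
          (EReal.coe_le_coe_iff.2 (le_trans (le_of_lt hτ.2) hu3)) ht₂.2
        have hDn : timeDom T ∈ 𝓝 τ := mem_nhds_iff.2
          ⟨_, timeDomInt_subset T, isOpen_timeDomInt T,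
            ⟨lt_of_le_of_lt ht.1 hτ.1, hτT⟩⟩
        exact (((hasDerivWithinAt_Vj hflow θ hτD).hasDerivAt hDn)).differentiableAt.differentiableWithinAt
      · intro τ hτ
        rw [interior_Icc] at hτ
        have hτD : τ ∈ timeDom T := hIuD ⟨le_of_lt hτ.1, le_of_lt hτ.2⟩
        have hτT : (τ : EReal) < T := lt_of_le_of_lt
          (EReal.coe_le_coe_iff.2 (le_trans (le_of_lt hτ.2) hu3)) ht₂.2
        have hDn : timeDom T ∈ 𝓝 τ := mem_nhds_iff.2
          ⟨_, timeDomInt_subset T, isOpen_timeDomInt T,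
            ⟨lt_of_le_of_lt ht.1 hτ.1, hτT⟩⟩
        have hda := (hasDerivWithinAt_Vj hflow θ hτD).hasDerivAt hDn
        rw [hda.deriv]
        -- (θ, τ) lies in O ×ˢ v ⊆ P
        have hmemP : ((θ, τ) : ℝ × ℝ) ∈ P := hOv ⟨hθO, hvsub ⟨le_of_lt hτ.1, le_of_lt hτ.2⟩⟩
        rcases hmemP with ⟨U, hUo, hxU, hUp⟩
        exact le_of_lt (hUp _ ⟨hxU, mem_SS.2 hτD⟩)
    have h1 : Vj p Ψ T s (θ, t) ≤ Vj p Ψ T s (θ, u) :=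
      hmono (left_mem_Icc.2 (le_of_lt hu1)) (right_mem_Icc.2 (le_of_lt hu1)) (le_of_lt hu1)
    exact le_trans (mV_le hflow ht hθ) h1
  · -- on the complement, use the gap and uniform continuity
    have hθC : θ ∈ C := ⟨hθ, hθO⟩
    have hmem1 : ((θ, u) : ℝ × ℝ) ∈ Q := ⟨hθ, ⟨le_of_lt hu1, hu3⟩⟩
    have hmem2 : ((θ, t) : ℝ × ℝ) ∈ Q := ⟨hθ, left_mem_Icc.2 (le_trans (le_of_lt hu1) hu3)⟩
    have hdist : dist ((θ, u) : ℝ × ℝ) ((θ, t) : ℝ × ℝ) < δ2 := by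
      rw [Prod.dist_eq]
      apply max_lt (by simpa using hδ2)
      rw [Real.dist_eq, abs_sub_lt_iff]
      constructor <;> linarith
    have hd := hδ2p (θ, u) hmem1 (θ, t) hmem2 hdist
    rw [Real.dist_eq] at hd
    have hb := hCbound θ hθC
    rcases abs_lt.1 hd with ⟨h1, h2⟩
    show m ≤ Vj p Ψ T s (θ, u)
    have : g θ = Vj p Ψ T s (θ, t) := rfl
    linarith [hb]
  done

open Topology
variable {p : ℝ} {Ψ : ℝ → ℝ} {T : EReal} {s : ℝ → ℝ → ℝ}

lemma mV_continuousOn (hflow : IsPFlow p Ψ T s) {t₁ t₂ : ℝ} (h1 : t₁ ∈ timeDom T)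
    (h2 : t₂ ∈ timeDom T) :
    ContinuousOn (mV p Ψ T s) (Icc t₁ t₂) := by
  have hIccD : Icc t₁ t₂ ⊆ timeDom T := (convex_timeDom T).ordConnected.out h1 h2
  set Q := Icc 0 (2 * Real.pi) ×ˢ Icc t₁ t₂ with hQdef
  have hQ : IsCompact Q := isCompact_Icc.prod isCompact_Icc
  have hQS : Q ⊆ SS T := fun x hx => mem_SS.2 (hIccD hx.2)
  have hVQ : ContinuousOn (Vj p Ψ T s) Q := ((hV hflow).continuousOn).mono hQS
  have hUC := hQ.uniformContinuousOn_of_continuous hVQ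
  rw [Metric.continuousOn_iff]
  intro a ha ε hε
  rcases Metric.uniformContinuousOn_iff.1 hUC (ε / 2) (by linarith) with ⟨δ, hδ, hδp⟩
  refine ⟨δ, hδ, ?_⟩
  intro u hu hdist
  have haD : a ∈ timeDom T := hIccD ha
  have huD : u ∈ timeDom T := hIccD hu
  have key : ∀ w z : ℝ, w ∈ Icc t₁ t₂ → z ∈ Icc t₁ t₂ → dist w z < δ →
      mV p Ψ T s w ≤ mV p Ψ T s z + ε / 2 := by
    intro w z hw hz hd
    obtain ⟨θz, hθz, heqz, _⟩ := exists_minimizer hflow (hIccD hz)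
    have h1 : mV p Ψ T s w ≤ Vj p Ψ T s (θz, w) := mV_le hflow (hIccD hw) hθz
    have h2 : dist ((θz, w) : ℝ × ℝ) ((θz, z) : ℝ × ℝ) < δ := by
      rw [Prod.dist_eq]
      exact max_lt (by simpa using hδ) hd
    have h3 := hδp (θz, w) ⟨hθz, hw⟩ (θz, z) ⟨hθz, hz⟩ h2
    rw [Real.dist_eq] at h3
    rcases abs_lt.1 h3 with ⟨h4, h5⟩
    rw [heqz]
    linarith
  have hb1 := key u a hu ha hdist
  have hb2 := key a u ha hu (by rwa [dist_comm])
  rw [Real.dist_eq, abs_sub_lt_iff]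
  constructor <;> linarith

lemma mV_mono (hflow : IsPFlow p Ψ T s) {t₁ t₂ : ℝ} (ht₁ : t₁ ∈ timeDom T)
    (ht₂ : t₂ ∈ timeDom T) (hle : t₁ ≤ t₂) : mV p Ψ T s t₁ ≤ mV p Ψ T s t₂ := by
  rcases eq_or_lt_of_le hle with rfl | hlt
  · exact le_refl _
  have hIccD : Icc t₁ t₂ ⊆ timeDom T := (convex_timeDom T).ordConnected.out ht₁ ht₂
  have hcont : ContinuousOn (fun x => mV p Ψ T s t₁ - mV p Ψ T s x) (Icc t₁ t₂) :=
    continuousOn_const.sub (mV_continuousOn hflow ht₁ ht₂)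
  have main := image_le_of_liminf_slope_right_le_deriv_boundary
    (f := fun x => mV p Ψ T s t₁ - mV p Ψ T s x) (a := t₁) (b := t₂)
    (B := fun _ => 0) (B' := fun _ => 0) hcont (by simp)
    continuousOn_const (fun x _ => hasDerivWithinAt_const x _ 0) ?_
  · have := main (right_mem_Icc.2 hle)
    linarith [this]
  · intro x hx r hr
    have hr2 : (0 : ℝ) < r := hr
    have hxD : x ∈ timeDom T := hIccD ⟨hx.1, le_of_lt hx.2⟩
    obtain ⟨δ, hδ, hmon⟩ := mV_local_mono hflow hxD ht₂ hx.2
    have hev : ∀ᶠ z in 𝓝[>] x,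
        slope (fun y => mV p Ψ T s t₁ - mV p Ψ T s y) x z < r := by
      filter_upwards [Ioc_mem_nhdsGT (lt_add_of_pos_right x hδ)] with z hz
      have hmz := hmon z hz.1 hz.2
      rw [slope_def_field]
      have hnum : (mV p Ψ T s t₁ - mV p Ψ T s z) - (mV p Ψ T s t₁ - mV p Ψ T s x)
          = mV p Ψ T s x - mV p Ψ T s z := by ring
      rw [hnum]
      have hquot : (mV p Ψ T s x - mV p Ψ T s z) / (z - x) ≤ 0 :=
        div_nonpos_of_nonpos_of_nonneg (by linarith) (by linarith [hz.1])
      linarith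
    exact hev.frequently

end MinSpeedAux

/-- Along the `p`-flow, the minimum of the speed over the circle is
non-decreasing in time. -/
theorem min_speed_nondecreasing (p : ℝ) (Ψ : ℝ → ℝ) (T : EReal) (s : ℝ → ℝ → ℝ)
    (hflow : IsPFlow p Ψ T s) :
    ∀ t₁ ∈ timeDom T, ∀ t₂ ∈ timeDom T, t₁ ≤ t₂ →
      sInf ((fun θ => speed p Ψ s θ t₁) '' Icc 0 (2 * π)) ≤
        sInf ((fun θ => speed p Ψ s θ t₂) '' Icc 0 (2 * π)) := by
  intro t₁ ht₁ t₂ ht₂ hle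
  have himg : ∀ t ∈ timeDom T, (fun θ => speed p Ψ s θ t) '' Icc 0 (2 * π)
      = (fun θ => MinSpeedAux.Vj p Ψ T s (θ, t)) '' Icc 0 (2 * π) :=
    fun t ht => image_congr fun θ _ => (MinSpeedAux.Vj_eq_speed hflow ht θ).symm
  rw [himg t₁ ht₁, himg t₂ ht₂]
  exact MinSpeedAux.mV_mono hflow ht₁ ht₂ hle

end
end

section
/- Let s be a solution of the p-flow on [0,T) and set δ := min over θ ∈ [0,2π] of v(θ,0), which is positive. Then for every (θ,t) ∈ ℝ × [0,T), the radius of curvature satisfies 𝔯(θ,t) ≤ (Ψ(θ)·s(θ,t)^((2−2p)/(p+2)) / δ)^((p+2)/p); in particular the curvature κ = 1/𝔯 remains bounded away from zero wherever s and Ψ are bounded, so convexity of the evolving curves is preserved. -/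
open Real Set Filter MeasureTheory

noncomputable section

/-- θ-slice derivative of a jointly differentiable function. -/
lemma slice1_hasDerivAt {f : ℝ×ℝ → ℝ} {x : ℝ×ℝ} (hf : DifferentiableAt ℝ f x) :
    HasDerivAt (fun θ : ℝ => f (θ, x.2)) (fderiv ℝ f x (1,0)) x.1 := by
  have hj : HasDerivAt (fun θ : ℝ => ((θ, x.2) : ℝ×ℝ)) ((1:ℝ),(0:ℝ)) x.1 :=
    (hasDerivAt_id x.1).prodMk (hasDerivAt_const x.1 x.2)
  exact HasFDerivAt.comp_hasDerivAt x.1 hf.hasFDerivAt hj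

/-- t-slice derivative of a jointly differentiable function. -/
lemma slice2_hasDerivAt {f : ℝ×ℝ → ℝ} {x : ℝ×ℝ} (hf : DifferentiableAt ℝ f x) :
    HasDerivAt (fun t : ℝ => f (x.1, t)) (fderiv ℝ f x (0,1)) x.2 := by
  have hj : HasDerivAt (fun t : ℝ => ((x.1, t) : ℝ×ℝ)) ((0:ℝ),(1:ℝ)) x.2 :=
    (hasDerivAt_const x.2 x.1).prodMk (hasDerivAt_id x.2)
  exact HasFDerivAt.comp_hasDerivAt x.2 hf.hasFDerivAt hj

/-- θ-slice derivative, within-version. -/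
lemma slice1_hasDerivAt_within {f : ℝ×ℝ → ℝ} {D : Set (ℝ×ℝ)} {x : ℝ×ℝ}
    (hD : ∀ θ : ℝ, (θ, x.2) ∈ D) (hf : DifferentiableWithinAt ℝ f D x) :
    HasDerivAt (fun θ : ℝ => f (θ, x.2)) (fderivWithin ℝ f D x (1,0)) x.1 := by
  have hj : HasDerivWithinAt (fun θ : ℝ => ((θ, x.2) : ℝ×ℝ)) ((1:ℝ),(0:ℝ)) univ x.1 :=
    ((hasDerivAt_id x.1).prodMk (hasDerivAt_const x.1 x.2)).hasDerivWithinAt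
  have := HasFDerivWithinAt.comp_hasDerivWithinAt x.1 hf.hasFDerivWithinAt hj
    (fun θ _ => hD θ)
  have h2 : HasDerivWithinAt (fun θ : ℝ => f (θ, x.2)) (fderivWithin ℝ f D x (1,0)) univ x.1 := by
    exact this
  simpa [hasDerivWithinAt_univ] using h2

lemma contDiffOn_clm_apply_fderiv {f : ℝ×ℝ → ℝ} {U : Set (ℝ×ℝ)} (hU : IsOpen U)
    (hf : ContDiffOn ℝ ((⊤:ℕ∞) : WithTop ℕ∞) f U) (a : ℝ×ℝ) :
    ContDiffOn ℝ ((⊤:ℕ∞) : WithTop ℕ∞) (fun y => fderiv ℝ f y a) U := by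
  have h1 : ContDiffOn ℝ ((⊤:ℕ∞) : WithTop ℕ∞) (fderiv ℝ f) U :=
    hf.fderiv_of_isOpen hU (by simp)
  exact (ContinuousLinearMap.apply ℝ ℝ a).contDiff.comp_contDiffOn h1

lemma contDiffOn_clm_apply_fderivWithin {f : ℝ×ℝ → ℝ} {D : Set (ℝ×ℝ)}
    (hD : UniqueDiffOn ℝ D)
    (hf : ContDiffOn ℝ ((⊤:ℕ∞) : WithTop ℕ∞) f D) (a : ℝ×ℝ) :
    ContDiffOn ℝ ((⊤:ℕ∞) : WithTop ℕ∞) (fun y => fderivWithin ℝ f D y a) D := by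
  have h1 : ContDiffOn ℝ ((⊤:ℕ∞) : WithTop ℕ∞) (fderivWithin ℝ f D) D :=
    hf.fderivWithin hD (by simp)
  exact (ContinuousLinearMap.apply ℝ ℝ a).contDiff.comp_contDiffOn h1

/-- Clairaut's theorem, pointwise, for partial derivatives in given directions. -/
lemma pd_comm {f : ℝ×ℝ → ℝ} {U : Set (ℝ×ℝ)} (hU : IsOpen U)
    (hf : ContDiffOn ℝ ((⊤:ℕ∞) : WithTop ℕ∞) f U) {x : ℝ×ℝ} (hx : x ∈ U) (a b : ℝ×ℝ) :
    fderiv ℝ (fun y => fderiv ℝ f y a) x b = fderiv ℝ (fun y => fderiv ℝ f y b) x a := by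
  have hfx : ContDiffAt ℝ ((⊤:ℕ∞) : WithTop ℕ∞) (fderiv ℝ f) x :=
    ((hf.fderiv_of_isOpen hU (by simp)).contDiffAt (hU.mem_nhds hx))
  have hdiff : DifferentiableAt ℝ (fderiv ℝ f) x := hfx.differentiableAt (by simp)
  have h2 : HasFDerivAt (fderiv ℝ f) (fderiv ℝ (fderiv ℝ f) x) x := hdiff.hasFDerivAt
  have hev : ∀ᶠ y in nhds x, HasFDerivAt f (fderiv ℝ f y) y := by
    filter_upwards [hU.mem_nhds hx] with y hy
    exact ((hf.contDiffAt (hU.mem_nhds hy)).differentiableAt (by simp)).hasFDerivAt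
  have hsym := second_derivative_symmetric_of_eventually hev h2 a b
  have hA : fderiv ℝ (fun y => fderiv ℝ f y a) x =
      (ContinuousLinearMap.apply ℝ ℝ a).comp (fderiv ℝ (fderiv ℝ f) x) := by
    exact ((ContinuousLinearMap.apply ℝ ℝ a).hasFDerivAt.comp x h2).fderiv
  have hB : fderiv ℝ (fun y => fderiv ℝ f y b) x =
      (ContinuousLinearMap.apply ℝ ℝ b).comp (fderiv ℝ (fderiv ℝ f) x) := by
    exact ((ContinuousLinearMap.apply ℝ ℝ b).hasFDerivAt.comp x h2).fderiv
  rw [hA, hB]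
  simpa using hsym.symm

/-- Second derivative is nonnegative at a global minimum of a smooth function. -/
lemma second_deriv_nonneg_of_min {f : ℝ → ℝ} (hf : ContDiff ℝ ((⊤:ℕ∞) : WithTop ℕ∞) f)
    {a : ℝ} (hmin : ∀ x, f a ≤ f x) : 0 ≤ iteratedDeriv 2 f a := by
  by_contra hc
  push_neg at hc
  have hd1 : Differentiable ℝ f := hf.differentiable (by simp)
  have hfd : ContDiff ℝ ((⊤:ℕ∞) : WithTop ℕ∞) (deriv f) := (contDiff_infty_iff_deriv.mp hf).2
  have hda : deriv f a = 0 :=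
    (IsLocalMin.deriv_eq_zero (Filter.Eventually.of_forall fun x => hmin x))
  have h2 : iteratedDeriv 2 f = deriv (deriv f) := by
    rw [iteratedDeriv_succ, iteratedDeriv_one]
  have hdd : HasDerivAt (deriv f) (iteratedDeriv 2 f a) a := by
    rw [h2]
    exact (hfd.differentiable (by simp) a).hasDerivAt
  have hslope := hasDerivAt_iff_tendsto_slope.mp hdd
  have hslope' : Tendsto (slope (deriv f) a) (nhdsWithin a (Iio a)) (nhds (iteratedDeriv 2 f a)) :=
    hslope.mono_left (nhdsWithin_mono _ (fun x hx => ne_of_lt hx))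
  have hev : ∀ᶠ x in nhdsWithin a (Iio a), slope (deriv f) a x < 0 :=
    hslope'.eventually (Filter.Tendsto.eventually_lt_const hc tendsto_id) |>.mono (fun x hx => hx)
  rw [eventually_nhdsWithin_iff] at hev
  obtain ⟨u, hu, hua⟩ := eventually_nhds_iff.mp hev
  obtain ⟨l, hl, hlu⟩ := exists_Ioc_subset_of_mem_nhds (hua.1.mem_nhds hua.2)
    ⟨a - 1, by linarith⟩
  have hpos : ∀ x ∈ Ioo l a, 0 < deriv f x := by
    intro x hx
    have hxu : slope (deriv f) a x < 0 := hu x (hlu ⟨hx.1, hx.2.le⟩) hx.2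
    rw [slope_def_field, hda] at hxu
    have hxa : x < a := hx.2
    rcases div_neg_iff.mp hxu with ⟨h1, h2⟩ | ⟨h1, h2⟩
    · linarith
    · linarith
  have hmono : StrictMonoOn f (Icc l a) := by
    apply strictMonoOn_of_deriv_pos (convex_Icc l a) (hd1.continuous.continuousOn)
    intro x hx
    rw [interior_Icc] at hx
    exact hpos x hx
  have hm : (l + a) / 2 ∈ Icc l a := ⟨by linarith, by linarith⟩
  have := hmono hm (right_mem_Icc.mpr (by linarith : l ≤ a)) (by linarith)
  exact absurd (hmin ((l + a) / 2)) (by linarith)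

/-- If `f` has a derivative at `a` and `a` is a minimum from the left, the derivative
is nonpositive. -/
lemma deriv_nonpos_of_left_min {f : ℝ → ℝ} {a L : ℝ} (hL : HasDerivAt f L a)
    (h : ∀ᶠ t in nhdsWithin a (Iio a), f a ≤ f t) : L ≤ 0 := by
  have hslope := (hasDerivAt_iff_tendsto_slope.mp hL).mono_left
    (nhdsWithin_mono _ (fun x (hx : x ∈ Iio a) => ne_of_lt hx))
  refine le_of_tendsto hslope ?_
  filter_upwards [h, self_mem_nhdsWithin] with t ht (ht' : t ∈ Iio a)
  have ht'' : t < a := ht'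
  rw [slope_def_field]
  exact div_nonpos_of_nonneg_of_nonpos (by linarith) (by linarith)


/-- The derivative of a periodic function is periodic. -/
lemma periodic_deriv' {f : ℝ → ℝ} {c : ℝ} (h : Function.Periodic f c) :
    Function.Periodic (deriv f) c := by
  intro x
  have hfe : (fun y => f (y + c)) = f := funext h
  have := deriv_comp_add_const f c x
  rw [hfe] at this
  exact this.symm

lemma periodic_iteratedDeriv2 {f : ℝ → ℝ} {c : ℝ} (h : Function.Periodic f c) :
    Function.Periodic (iteratedDeriv 2 f) c := by
  have : iteratedDeriv 2 f = deriv (deriv f) := by rw [iteratedDeriv_succ, iteratedDeriv_one]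
  rw [this]
  exact periodic_deriv' (periodic_deriv' h)

/-- Converting the speed lower bound into the radius-of-curvature upper bound. -/
lemma rad_le_of_speed_ge {p δ r A : ℝ} (hp1 : 1 < p) (hr : 0 < r) (hδ : 0 < δ)
    (hA : 0 < A) (h : δ ≤ A * r ^ (-p / (p + 2))) :
    r ≤ (A / δ) ^ ((p + 2) / p) := by
  have hp0 : (0:ℝ) < p := by linarith
  have hp2 : (0:ℝ) < p + 2 := by linarith
  set q : ℝ := p / (p + 2) with hqdef
  have hq : 0 < q := div_pos hp0 hp2
  have hrq : 0 < r ^ q := Real.rpow_pos_of_pos hr q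
  have hneg : r ^ (-p / (p + 2)) = (r ^ q)⁻¹ := by
    rw [neg_div, Real.rpow_neg hr.le]
  have h1 : δ * r ^ q ≤ A := by
    have := mul_le_mul_of_nonneg_right h hrq.le
    rw [hneg] at this
    calc δ * r ^ q ≤ A * (r ^ q)⁻¹ * r ^ q := this
      _ = A := by field_simp
  have h2 : r ^ q ≤ A / δ := by
    rw [le_div_iff₀ hδ]; linarith [h1]
  have h3 : (r ^ q) ^ ((p + 2) / p) = r := by
    rw [← Real.rpow_mul hr.le]
    have : q * ((p + 2) / p) = 1 := by
      rw [hqdef]; field_simp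
    rw [this, Real.rpow_one]
  calc r = (r ^ q) ^ ((p + 2) / p) := h3.symm
    _ ≤ (A / δ) ^ ((p + 2) / p) :=
      Real.rpow_le_rpow hrq.le h2 (by positivity)


/-- Along the `p`-flow, with `δ` the (positive) minimum of the initial
speed, the radius of curvature satisfies
`𝔯(θ,t) ≤ (Ψ(θ) s(θ,t)^((2-2p)/(p+2)) / δ)^((p+2)/p)`; in particular the convexity of
the evolving curves is preserved. -/
theorem rad_upper_bound (p : ℝ) (Ψ : ℝ → ℝ) (T : EReal) (s : ℝ → ℝ → ℝ)
    (hflow : IsPFlow p Ψ T s)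
    (δ : ℝ) (hδ : δ = sInf ((fun θ => speed p Ψ s θ 0) '' Icc 0 (2 * π))) :
    0 < δ ∧
      ∀ θ : ℝ, ∀ t ∈ timeDom T,
        rad (fun θ' => s θ' t) θ ≤
          (Ψ θ * s θ t ^ ((2 - 2 * p) / (p + 2)) / δ) ^ ((p + 2) / p) := by
  obtain ⟨hp₁, hp₂, hT, hΨsmooth, hΨpos, hΨper, hsmooth, hper, hpos, hconv, heq⟩ := hflow
  have hπ := Real.pi_pos
  have hp2pos : (0:ℝ) < p + 2 := by linarith
  have hαneg : (2 - 2 * p) / (p + 2) < 0 := div_neg_of_neg_of_pos (by linarith) hp2pos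
  have hβneg : -p / (p + 2) < 0 := div_neg_of_neg_of_pos (by linarith) hp2pos
  have h0T : (0:ℝ) ∈ timeDom T := ⟨le_refl 0, by simpa using hT⟩
  set D : Set (ℝ×ℝ) := Set.univ ×ˢ timeDom T with hDdef
  set F : ℝ×ℝ → ℝ := Function.uncurry s with hFdef
  set vf : ℝ×ℝ → ℝ := fun x => speed p Ψ s x.1 x.2 with hvfdef
  -- time domain facts
  have hseg : ∀ t' ∈ timeDom T, ∀ t : ℝ, 0 ≤ t → t ≤ t' → t ∈ timeDom T := by
    rintro t' ⟨-, ht'⟩ t h0 hle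
    exact ⟨h0, lt_of_le_of_lt (EReal.coe_le_coe_iff.mpr hle) ht'⟩
  have hUDt : UniqueDiffOn ℝ (timeDom T) := by
    rcases eq_or_ne T ⊤ with hTt | hTt
    · have : timeDom T = Ici 0 := by
        ext t; simp [timeDom, hTt, lt_top_iff_ne_top]
      rw [this]; exact uniqueDiffOn_Ici 0
    · have hTb : T ≠ ⊥ := fun h => by simp [h] at hT
      have : timeDom T = Ico 0 T.toReal := by
        ext t
        simp only [timeDom, mem_setOf_eq, mem_Ico]
        constructor
        · rintro ⟨h0, hlt⟩
          refine ⟨h0, ?_⟩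
          rw [← EReal.coe_lt_coe_iff, EReal.coe_toReal hTt hTb]; exact hlt
        · rintro ⟨h0, hlt⟩
          refine ⟨h0, ?_⟩
          rw [← EReal.coe_toReal hTt hTb]; exact_mod_cast hlt
      rw [this]; exact uniqueDiffOn_Ico 0 T.toReal
  have hUD : UniqueDiffOn ℝ D := uniqueDiffOn_univ.prod hUDt
  have hmemD : ∀ (θ : ℝ), ∀ t ∈ timeDom T, ((θ, t) : ℝ×ℝ) ∈ D :=
    fun θ t ht => ⟨mem_univ _, ht⟩
  -- joint continuity of rad and speed on D
  set G1 : ℝ×ℝ → ℝ := fun x => fderivWithin ℝ F D x ((1:ℝ),(0:ℝ)) with hG1def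
  have hG1sm : ContDiffOn ℝ ((⊤:ℕ∞) : WithTop ℕ∞) G1 D :=
    contDiffOn_clm_apply_fderivWithin hUD hsmooth ((1:ℝ),(0:ℝ))
  set Hf : ℝ×ℝ → ℝ := fun x => fderivWithin ℝ G1 D x ((1:ℝ),(0:ℝ)) with hHfdef
  have hHsm : ContDiffOn ℝ ((⊤:ℕ∞) : WithTop ℕ∞) Hf D :=
    contDiffOn_clm_apply_fderivWithin hUD hG1sm ((1:ℝ),(0:ℝ))
  have hrad_eqD : ∀ x ∈ D, rad (fun θ' => s θ' x.2) x.1 = Hf x + F x := by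
    rintro ⟨θ, t⟩ ⟨-, ht⟩
    have hd1 : ∀ θ' : ℝ, deriv (fun θ'' => s θ'' t) θ' = G1 (θ', t) := by
      intro θ'
      exact (slice1_hasDerivAt_within (fun θ'' => hmemD θ'' t ht)
        ((hsmooth.differentiableOn (by simp)) _ (hmemD θ' t ht))).deriv
    have hd2 : deriv (fun θ' => G1 (θ', t)) θ = Hf (θ, t) := by
      exact (slice1_hasDerivAt_within (fun θ'' => hmemD θ'' t ht)
        ((hG1sm.differentiableOn (by simp)) _ (hmemD θ t ht))).deriv
    have : iteratedDeriv 2 (fun θ'' => s θ'' t) θ = Hf (θ, t) := by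
      rw [iteratedDeriv_succ, iteratedDeriv_one]
      rw [funext hd1]
      exact hd2
    rw [rad, this]
    rfl
  have hradcontD : ContinuousOn (fun x : ℝ×ℝ => rad (fun θ' => s θ' x.2) x.1) D :=
    ContinuousOn.congr (hHsm.continuousOn.add hsmooth.continuousOn) hrad_eqD
  have hFposD : ∀ x ∈ D, 0 < F x := fun x hx => hpos x.1 x.2 hx.2
  have hradposD : ∀ x ∈ D, 0 < rad (fun θ' => s θ' x.2) x.1 := fun x hx => hconv x.1 x.2 hx.2
  have hvf_eq : ∀ x : ℝ×ℝ, vf x =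
      Ψ x.1 * F x ^ ((2 - 2 * p) / (p + 2)) * rad (fun θ' => s θ' x.2) x.1 ^ (-p / (p + 2)) :=
    fun x => rfl
  have hvcontD : ContinuousOn vf D := by
    have h1 : ContinuousOn (fun x : ℝ×ℝ => Ψ x.1) D :=
      (hΨsmooth.continuous.comp continuous_fst).continuousOn
    have h2 : ContinuousOn (fun x : ℝ×ℝ => F x ^ ((2 - 2 * p) / (p + 2))) D :=
      hsmooth.continuousOn.rpow_const (fun x hx => Or.inl (hFposD x hx).ne')
    have h3 : ContinuousOn
        (fun x : ℝ×ℝ => rad (fun θ' => s θ' x.2) x.1 ^ (-p / (p + 2))) D :=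
      hradcontD.rpow_const (fun x hx => Or.inl (hradposD x hx).ne')
    exact ((h1.mul h2).mul h3).congr (fun x _ => hvf_eq x)
  have hvposD : ∀ x ∈ D, 0 < vf x := by
    intro x hx
    rw [hvf_eq x]
    exact mul_pos (mul_pos (hΨpos x.1) (Real.rpow_pos_of_pos (hFposD x hx) _))
      (Real.rpow_pos_of_pos (hradposD x hx) _)
  have hvper : ∀ t ∈ timeDom T, Function.Periodic (fun θ => vf (θ, t)) π := by
    intro t ht θ
    have hs : s (θ + π) t = s θ t := hper t ht θ
    have h2 := periodic_iteratedDeriv2 (hper t ht) θ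
    have hradper : rad (fun θ' => s θ' t) (θ + π) = rad (fun θ' => s θ' t) θ := by
      simp only [rad, h2, hs]
    show speed p Ψ s (θ + π) t = speed p Ψ s θ t
    rw [speed, speed, hΨper θ, hs, hradper]
  -- positivity of δ and the bound at time 0
  have hv0cont : Continuous (fun θ : ℝ => vf (θ, 0)) :=
    hvcontD.comp_continuous (continuous_id.prodMk continuous_const)
      (fun θ => hmemD θ 0 h0T)
  have himgcp : IsCompact ((fun θ => speed p Ψ s θ 0) '' Icc 0 (2 * π)) :=
    isCompact_Icc.image hv0cont
  have himgne : ((fun θ => speed p Ψ s θ 0) '' Icc 0 (2 * π)).Nonempty :=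
    (nonempty_Icc.mpr (by linarith)).image _
  have hδmem : δ ∈ (fun θ => speed p Ψ s θ 0) '' Icc 0 (2 * π) := by
    rw [hδ]; exact himgcp.sInf_mem himgne
  obtain ⟨θm, -, hθm⟩ := hδmem
  have hδpos : 0 < δ := by
    rw [← hθm]; exact hvposD (θm, 0) (hmemD θm 0 h0T)
  have hδle : ∀ θ : ℝ, δ ≤ vf (θ, 0) := by
    intro θ
    obtain ⟨y, hy, hyeq⟩ := (hvper 0 h0T).exists_mem_Ico₀ hπ θ
    have : δ ≤ vf (y, 0) := by
      rw [hδ]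
      exact csInf_le himgcp.bddBelow
        (mem_image_of_mem _ ⟨hy.1, by linarith [hy.2, hπ]⟩)
    simpa [hyeq] using this
  -- the main claim : the speed never drops below δ
  have hmain : ∀ θ : ℝ, ∀ t ∈ timeDom T, δ ≤ vf (θ, t) := by
    by_contra hcon
    push_neg at hcon
    obtain ⟨θh, th, hth, hlt⟩ := hcon
    -- the bad time is positive
    set m : ℝ := (vf (θh, th) + δ) / 2 with hmdef
    have hm1 : vf (θh, th) ≤ m := by
      have : vf (θh, th) = speed p Ψ s θh th := rfl
      rw [hmdef]; linarith
    have hmδ : m < δ := by rw [hmdef]; linarith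
    obtain ⟨θh', hθh', hval⟩ := (hvper th hth).exists_mem_Ico₀ hπ θh
    -- the compact region and the set of bad points
    set box : Set (ℝ×ℝ) := Icc (0:ℝ) π ×ˢ Icc (0:ℝ) th with hboxdef
    have hboxD : box ⊆ D := fun x hx => ⟨mem_univ _, hseg th hth x.2 hx.2.1 hx.2.2⟩
    have hboxcp : IsCompact box := isCompact_Icc.prod isCompact_Icc
    set S : Set (ℝ×ℝ) := box ∩ vf ⁻¹' (Iic m) with hSdef
    have hScl : IsClosed S :=
      (hvcontD.mono hboxD).preimage_isClosed_of_isClosed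
        (isClosed_Icc.prod isClosed_Icc) isClosed_Iic
    have hScp : IsCompact S := hboxcp.of_isClosed_subset hScl inter_subset_left
    have hSne : S.Nonempty := by
      refine ⟨(θh', th), ⟨⟨hθh'.1, hθh'.2.le⟩, ⟨hth.1, le_refl th⟩⟩, ?_⟩
      simp only [mem_preimage, mem_Iic]
      have : vf (θh, th) = vf (θh', th) := hval
      rw [← this]; exact hm1
    obtain ⟨x₀, hx₀S, hx₀min⟩ := hScp.exists_isMinOn hSne continuous_snd.continuousOn
    have hθ₀box : x₀.1 ∈ Icc (0:ℝ) π := hx₀S.1.1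
    have ht₀box : x₀.2 ∈ Icc (0:ℝ) th := hx₀S.1.2
    have ht₀D : x₀.2 ∈ timeDom T := hseg th hth _ ht₀box.1 ht₀box.2
    have hvx₀ : vf x₀ ≤ m := hx₀S.2
    have ht₀pos : 0 < x₀.2 := by
      rcases eq_or_lt_of_le ht₀box.1 with h | h
      · exfalso
        have h1 : δ ≤ vf (x₀.1, 0) := hδle x₀.1
        rw [h, Prod.mk.eta] at h1
        linarith
      · exact h
    -- no bad point strictly before time x₀.2
    have hA : ∀ y ∈ box, y.2 < x₀.2 → m < vf y := by
      intro y hy hlt2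
      by_contra hc2
      push_neg at hc2
      exact absurd (hx₀min ⟨hy, hc2⟩) (not_le.mpr hlt2)
    -- at time x₀.2 the speed is everywhere at least m
    have hB0 : ∀ θ ∈ Icc (0:ℝ) π, m ≤ vf (θ, x₀.2) := by
      intro θ hθ
      have hne2 : (nhdsWithin x₀.2 (Ioo 0 x₀.2)).NeBot := by
        rw [← mem_closure_iff_nhdsWithin_neBot, closure_Ioo (ne_of_lt ht₀pos)]
        exact ⟨ht₀pos.le, le_refl _⟩
      have htend : Tendsto (fun t => vf (θ, t)) (nhdsWithin x₀.2 (Ioo 0 x₀.2))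
          (nhds (vf (θ, x₀.2))) := by
        have hc : ContinuousWithinAt vf D (θ, x₀.2) := hvcontD _ (hmemD θ x₀.2 ht₀D)
        have hline : Tendsto (fun t : ℝ => ((θ, t) : ℝ×ℝ))
            (nhdsWithin x₀.2 (Ioo 0 x₀.2)) (nhdsWithin (θ, x₀.2) D) := by
          apply tendsto_nhdsWithin_of_tendsto_nhds_of_eventually_within
          · exact ((continuous_const.prodMk continuous_id).tendsto _).mono_left
              nhdsWithin_le_nhds
          · filter_upwards [self_mem_nhdsWithin] with t ht2
            exact hmemD θ t (hseg th hth t ht2.1.le (le_trans ht2.2.le ht₀box.2))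
        exact hc.tendsto.comp hline
      haveI := hne2
      refine ge_of_tendsto htend ?_
      filter_upwards [self_mem_nhdsWithin] with t ht2
      exact (hA (θ, t) ⟨hθ, ⟨ht2.1.le, le_trans ht2.2.le ht₀box.2⟩⟩ ht2.2).le
    have hB : ∀ θ : ℝ, m ≤ vf (θ, x₀.2) := by
      intro θ
      obtain ⟨y, hy, hyeq⟩ := (hvper _ ht₀D).exists_mem_Ico₀ hπ θ
      have : vf (θ, x₀.2) = vf (y, x₀.2) := hyeq
      rw [this]
      exact hB0 y ⟨hy.1, hy.2.le⟩
    have hvm : vf x₀ = m := le_antisymm hvx₀ (hB x₀.1)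
    -- interior setup
    obtain ⟨z, hz1, hz2⟩ := exists_between (show (th : EReal) < T from hth.2)
    have hzneT : z ≠ ⊤ := (lt_of_lt_of_le hz2 le_top).ne
    have hzneB : z ≠ ⊥ := by
      intro h
      rw [h] at hz1
      exact absurd hz1 (by simp)
    set bT : ℝ := z.toReal with hbTdef
    have hcoez : (bT : EReal) = z := EReal.coe_toReal hzneT hzneB
    have hthbT : th < bT := by
      rw [← EReal.coe_lt_coe_iff, hcoez]; exact hz1
    have hbTD : ∀ t ∈ Ioo (0:ℝ) bT, t ∈ timeDom T := by
      intro t ht2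
      refine ⟨ht2.1.le, ?_⟩
      calc (t : EReal) < (bT : EReal) := EReal.coe_lt_coe_iff.mpr ht2.2
        _ = z := hcoez
        _ < T := hz2
    set U : Set (ℝ×ℝ) := (Set.univ : Set ℝ) ×ˢ Ioo (0:ℝ) bT with hUdef
    have hUopen : IsOpen U := isOpen_univ.prod isOpen_Ioo
    have hUsubD : U ⊆ D := fun x hx => ⟨mem_univ _, hbTD _ hx.2⟩
    have hFU : ContDiffOn ℝ ((⊤:ℕ∞) : WithTop ℕ∞) F U := hsmooth.mono hUsubD
    have hmemU : ∀ (θ : ℝ), ∀ t ∈ Ioo (0:ℝ) bT, ((θ, t) : ℝ×ℝ) ∈ U :=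
      fun θ t ht2 => ⟨mem_univ _, ht2⟩
    have ht₀I : x₀.2 ∈ Ioo (0:ℝ) bT := ⟨ht₀pos, lt_of_le_of_lt ht₀box.2 hthbT⟩
    have hx₀U : x₀ ∈ U := ⟨mem_univ _, ht₀I⟩
    have htdnhds : ∀ t ∈ Ioo (0:ℝ) bT, timeDom T ∈ nhds t := by
      intro t ht2
      exact mem_nhds_iff.mpr ⟨Ioo 0 bT, fun u hu => hbTD u hu, isOpen_Ioo, ht2⟩
    have hdiffat : ∀ f : ℝ×ℝ → ℝ, ContDiffOn ℝ ((⊤:ℕ∞) : WithTop ℕ∞) f U →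
        ∀ x ∈ U, DifferentiableAt ℝ f x := fun f hf x hx =>
      (hf.contDiffAt (hUopen.mem_nhds hx)).differentiableAt (by simp)
    -- partial derivative operators in the two coordinate directions
    set e1 : ℝ×ℝ := ((1:ℝ), (0:ℝ)) with he1
    set e2 : ℝ×ℝ := ((0:ℝ), (1:ℝ)) with he2
    set P1 : (ℝ×ℝ → ℝ) → ℝ×ℝ → ℝ := fun f y => fderiv ℝ f y e1 with hP1def
    set P2 : (ℝ×ℝ → ℝ) → ℝ×ℝ → ℝ := fun f y => fderiv ℝ f y e2 with hP2def
    have hP1sm : ∀ f : ℝ×ℝ → ℝ, ContDiffOn ℝ ((⊤:ℕ∞) : WithTop ℕ∞) f U →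
        ContDiffOn ℝ ((⊤:ℕ∞) : WithTop ℕ∞) (P1 f) U := fun f hf =>
      contDiffOn_clm_apply_fderiv hUopen hf e1
    have hP1F := hP1sm F hFU
    have hP1P1F := hP1sm _ hP1F
    -- slice derivative identities on U
    have hslU : ∀ (g : ℝ×ℝ → ℝ), ContDiffOn ℝ ((⊤:ℕ∞) : WithTop ℕ∞) g U →
        ∀ (θ : ℝ), ∀ t ∈ Ioo (0:ℝ) bT, deriv (fun θ' => g (θ', t)) θ = P1 g (θ, t) := by
      intro g hg θ t ht2
      exact (slice1_hasDerivAt (hdiffat g hg _ (hmemU θ t ht2))).deriv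
    have hsl2U : ∀ (g : ℝ×ℝ → ℝ), ContDiffOn ℝ ((⊤:ℕ∞) : WithTop ℕ∞) g U →
        ∀ (θ : ℝ), ∀ t ∈ Ioo (0:ℝ) bT,
          iteratedDeriv 2 (fun θ' => g (θ', t)) θ = P1 (P1 g) (θ, t) := by
      intro g hg θ t ht2
      rw [iteratedDeriv_succ, iteratedDeriv_one]
      have hfe : deriv (fun θ' => g (θ', t)) = fun θ' => P1 g (θ', t) :=
        funext fun θ' => hslU g hg θ' t ht2
      rw [hfe]
      exact hslU (P1 g) (hP1sm g hg) θ t ht2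
    -- in the interior, the time partial derivative of s is -vf
    have hu1 : ∀ x ∈ U, P2 F x = -vf x := by
      rintro ⟨θ, t⟩ hx
      have h1 : HasDerivAt (fun τ => s θ τ) (-speed p Ψ s θ t) t :=
        (heq θ t (hbTD t hx.2)).hasDerivAt (htdnhds t hx.2)
      have h2 : HasDerivAt (fun τ => F (θ, τ)) (P2 F (θ, t)) t :=
        slice2_hasDerivAt (hdiffat F hFU _ hx)
      exact h2.unique h1
    -- in the interior, the radius of curvature in terms of partial derivatives
    have hu2 : ∀ (θ : ℝ), ∀ t ∈ Ioo (0:ℝ) bT,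
        rad (fun θ' => s θ' t) θ = P1 (P1 F) (θ, t) + F (θ, t) := by
      intro θ t ht2
      rw [rad]
      have h := hsl2U F hFU θ t ht2
      exact congrArg₂ HAdd.hAdd h rfl
    have hradposU : ∀ x ∈ U, 0 < P1 (P1 F) x + F x := by
      rintro ⟨θ, t⟩ hx
      have h := hu2 θ t hx.2
      have h2 := hconv θ t (hbTD t hx.2)
      rw [h] at h2
      exact h2
    -- a globally smooth version of the speed in the interior
    set W : ℝ×ℝ → ℝ := fun x =>
      Ψ x.1 * F x ^ ((2 - 2*p)/(p+2)) * (P1 (P1 F) x + F x) ^ (-p/(p+2)) with hWdef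
    have hWsm : ContDiffOn ℝ ((⊤:ℕ∞) : WithTop ℕ∞) W U := by
      have h1 : ContDiffOn ℝ ((⊤:ℕ∞) : WithTop ℕ∞) (fun x : ℝ×ℝ => Ψ x.1) U :=
        (hΨsmooth.comp contDiff_fst).contDiffOn
      have h2 := hFU.rpow_const_of_ne (p := (2 - 2*p)/(p+2))
        (fun x hx => (hFposD x (hUsubD hx)).ne')
      have h3 := ((hP1P1F.add hFU).rpow_const_of_ne (p := -p/(p+2))
        (fun x hx => (hradposU x hx).ne'))
      exact (h1.mul h2).mul h3
    have hWvf : ∀ x ∈ U, W x = vf x := by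
      rintro ⟨θ, t⟩ hx
      have h := hu2 θ t hx.2
      rw [hvf_eq (θ, t), h]
    -- the spatial second derivative of the speed at the minimum point
    set q : ℝ := iteratedDeriv 2 (fun θ => vf (θ, x₀.2)) x₀.1 with hqdef
    have hWslice_eq : (fun θ => W (θ, x₀.2)) = fun θ => vf (θ, x₀.2) :=
      funext fun θ => hWvf (θ, x₀.2) (hmemU θ x₀.2 ht₀I)
    have hWslice : ContDiff ℝ ((⊤:ℕ∞) : WithTop ℕ∞) (fun θ => vf (θ, x₀.2)) := by
      rw [← hWslice_eq]
      exact hWsm.comp_contDiff (contDiff_id.prodMk contDiff_const)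
        (fun θ => hmemU θ x₀.2 ht₀I)
    have hq : 0 ≤ q := by
      apply second_deriv_nonneg_of_min hWslice
      intro θ'
      show vf (x₀.1, x₀.2) ≤ vf (θ', x₀.2)
      rw [Prod.mk.eta, hvm]
      exact hB θ'
    -- time derivatives at x₀
    have hsderx : HasDerivAt (fun τ => s x₀.1 τ) (-vf x₀) x₀.2 :=
      (heq x₀.1 x₀.2 ht₀D).hasDerivAt (htdnhds x₀.2 ht₀I)
    have hFderx : HasDerivAt (fun τ => F (x₀.1, τ)) (-vf x₀) x₀.2 := hsderx
    have h5 : HasDerivAt (fun τ => P1 (P1 F) (x₀.1, τ)) (P2 (P1 (P1 F)) x₀) x₀.2 :=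
      slice2_hasDerivAt (hdiffat _ hP1P1F _ hx₀U)
    -- the mixed partials commute : P2 (P1 (P1 F)) x₀ = -q
    have h9 : P2 (P1 (P1 F)) x₀ = -q := by
      have s1 : P2 (P1 (P1 F)) x₀ = fderiv ℝ (fun y => fderiv ℝ (P1 F) y e2) x₀ e1 :=
        pd_comm hUopen hP1F hx₀U e1 e2
      have s2 : ∀ y ∈ U, fderiv ℝ (P1 F) y e2 = P1 (fun z => -W z) y := by
        intro y hy
        have c1 : fderiv ℝ (fun z => fderiv ℝ F z e1) y e2
            = fderiv ℝ (fun z => fderiv ℝ F z e2) y e1 := pd_comm hUopen hFU hy e1 e2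
        have c2 : (fun z => fderiv ℝ F z e2) =ᶠ[nhds y] (fun z => -W z) := by
          filter_upwards [hUopen.mem_nhds hy] with z hz
          show P2 F z = -W z
          rw [hu1 z hz, hWvf z hz]
        calc fderiv ℝ (P1 F) y e2 = fderiv ℝ (fun z => fderiv ℝ F z e2) y e1 := c1
          _ = fderiv ℝ (fun z => -W z) y e1 := by rw [c2.fderiv_eq]
          _ = P1 (fun z => -W z) y := rfl
      have s3 : fderiv ℝ (fun y => fderiv ℝ (P1 F) y e2) x₀ e1
          = fderiv ℝ (P1 (fun z => -W z)) x₀ e1 := by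
        have hee : (fun y => fderiv ℝ (P1 F) y e2) =ᶠ[nhds x₀] (P1 (fun z => -W z)) := by
          filter_upwards [hUopen.mem_nhds hx₀U] with y hy
          exact s2 y hy
        rw [hee.fderiv_eq]
      have s4 : P1 (fun z => -W z) = fun y => -(P1 W y) := by
        funext y
        show fderiv ℝ (fun z => -W z) y e1 = -(fderiv ℝ W y e1)
        rw [fderiv_fun_neg]
        simp
      have s5 : fderiv ℝ (fun y => -(P1 W y)) x₀ e1 = -(P1 (P1 W) x₀) := by
        have : fderiv ℝ (fun y => -(P1 W y)) x₀ = -(fderiv ℝ (P1 W) x₀) := fderiv_fun_neg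
        rw [this]
        simp only [ContinuousLinearMap.neg_apply]
        rfl
      have s6 : P1 (P1 W) x₀ = q := by
        have h := hsl2U W hWsm x₀.1 x₀.2 ht₀I
        rw [Prod.mk.eta] at h
        rw [hqdef, ← hWslice_eq, ← h]
      calc P2 (P1 (P1 F)) x₀ = fderiv ℝ (fun y => fderiv ℝ (P1 F) y e2) x₀ e1 := s1
        _ = fderiv ℝ (P1 (fun z => -W z)) x₀ e1 := s3
        _ = fderiv ℝ (fun y => -(P1 W y)) x₀ e1 := by rw [s4]
        _ = -(P1 (P1 W) x₀) := s5
        _ = -q := by rw [s6]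
    -- time derivative of the radius of curvature at x₀
    have hRder : HasDerivAt (fun τ => rad (fun θ' => s θ' τ) x₀.1) (-(q + vf x₀)) x₀.2 := by
      have h7 : HasDerivAt (fun τ => P1 (P1 F) (x₀.1, τ) + F (x₀.1, τ))
          (P2 (P1 (P1 F)) x₀ + -vf x₀) x₀.2 := h5.add hFderx
      rw [h9] at h7
      have h8 : (fun τ => rad (fun θ' => s θ' τ) x₀.1) =ᶠ[nhds x₀.2]
          (fun τ => P1 (P1 F) (x₀.1, τ) + F (x₀.1, τ)) := by
        filter_upwards [isOpen_Ioo.mem_nhds ht₀I] with t ht2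
        exact hu2 x₀.1 t ht2
      have h10 := h7.congr_of_eventuallyEq h8
      rw [show -(q + vf x₀) = -q + -vf x₀ by ring]
      exact h10
    -- the PDE computation : the time derivative of the speed at x₀ is positive
    have hS0 : 0 < s x₀.1 x₀.2 := hpos _ _ ht₀D
    have hR0 : 0 < rad (fun θ' => s θ' x₀.2) x₀.1 := hconv _ _ ht₀D
    have hv₀pos : 0 < vf x₀ := hvposD x₀ (hUsubD hx₀U)
    have hd1 : HasDerivAt (fun τ => Ψ x₀.1 * s x₀.1 τ ^ ((2 - 2*p)/(p+2)))
        (Ψ x₀.1 * (-vf x₀ * ((2 - 2*p)/(p+2)) * s x₀.1 x₀.2 ^ ((2 - 2*p)/(p+2) - 1)))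
        x₀.2 :=
      (hsderx.rpow_const (Or.inl hS0.ne')).const_mul _
    have hd2 : HasDerivAt (fun τ => rad (fun θ' => s θ' τ) x₀.1 ^ (-p/(p+2)))
        (-(q + vf x₀) * (-p/(p+2)) * rad (fun θ' => s θ' x₀.2) x₀.1 ^ (-p/(p+2) - 1))
        x₀.2 :=
      hRder.rpow_const (Or.inl hR0.ne')
    have hmulder : HasDerivAt (fun τ => vf (x₀.1, τ))
        (Ψ x₀.1 * (-vf x₀ * ((2 - 2*p)/(p+2)) * s x₀.1 x₀.2 ^ ((2 - 2*p)/(p+2) - 1)) *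
            rad (fun θ' => s θ' x₀.2) x₀.1 ^ (-p/(p+2)) +
          Ψ x₀.1 * s x₀.1 x₀.2 ^ ((2 - 2*p)/(p+2)) *
            (-(q + vf x₀) * (-p/(p+2)) * rad (fun θ' => s θ' x₀.2) x₀.1 ^ (-p/(p+2) - 1)))
        x₀.2 := hd1.mul hd2
    -- but x₀ is a minimum in time from the left, so this derivative is ≤ 0
    have hLle := deriv_nonpos_of_left_min hmulder (by
      filter_upwards [Ioo_mem_nhdsLT_of_mem (⟨ht₀pos, le_refl x₀.2⟩ : x₀.2 ∈ Ioc 0 x₀.2)]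
        with t ht2
      show vf (x₀.1, x₀.2) ≤ vf (x₀.1, t)
      rw [Prod.mk.eta, hvm]
      exact (hA (x₀.1, t) ⟨hθ₀box, ⟨ht2.1.le, le_trans ht2.2.le ht₀box.2⟩⟩ ht2.2).le)
    -- positivity of the derivative
    have hv₀eq : vf x₀ = Ψ x₀.1 * s x₀.1 x₀.2 ^ ((2 - 2*p)/(p+2)) *
        rad (fun θ' => s θ' x₀.2) x₀.1 ^ (-p/(p+2)) := rfl
    have ea : Ψ x₀.1 * s x₀.1 x₀.2 ^ ((2 - 2*p)/(p+2) - 1) *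
        rad (fun θ' => s θ' x₀.2) x₀.1 ^ (-p/(p+2)) = vf x₀ / s x₀.1 x₀.2 := by
      rw [Real.rpow_sub hS0, Real.rpow_one, hv₀eq]
      field_simp
    have eb : Ψ x₀.1 * s x₀.1 x₀.2 ^ ((2 - 2*p)/(p+2)) *
        rad (fun θ' => s θ' x₀.2) x₀.1 ^ (-p/(p+2) - 1) = vf x₀ /
        rad (fun θ' => s θ' x₀.2) x₀.1 := by
      rw [Real.rpow_sub hR0, Real.rpow_one, hv₀eq]
      field_simp
    have hLeq : Ψ x₀.1 * (-vf x₀ * ((2 - 2*p)/(p+2)) * s x₀.1 x₀.2 ^ ((2 - 2*p)/(p+2) - 1)) *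
            rad (fun θ' => s θ' x₀.2) x₀.1 ^ (-p/(p+2)) +
          Ψ x₀.1 * s x₀.1 x₀.2 ^ ((2 - 2*p)/(p+2)) *
            (-(q + vf x₀) * (-p/(p+2)) * rad (fun θ' => s θ' x₀.2) x₀.1 ^ (-p/(p+2) - 1))
        = (-((2 - 2*p)/(p+2))) * vf x₀ * (vf x₀ / s x₀.1 x₀.2) +
          (-(-p/(p+2))) * (q + vf x₀) * (vf x₀ / rad (fun θ' => s θ' x₀.2) x₀.1) := by
      rw [← ea, ← eb]
      ring
    rw [hLeq] at hLle
    have ht1 : 0 < (-((2 - 2*p)/(p+2))) * vf x₀ * (vf x₀ / s x₀.1 x₀.2) :=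
      mul_pos (mul_pos (neg_pos.mpr hαneg) hv₀pos) (div_pos hv₀pos hS0)
    have ht2 : 0 ≤ (-(-p/(p+2))) * (q + vf x₀) * (vf x₀ / rad (fun θ' => s θ' x₀.2) x₀.1) :=
      mul_nonneg (mul_nonneg (neg_nonneg.mpr hβneg.le) (by linarith))
        (div_pos hv₀pos hR0).le
    linarith
  -- conclusion
  refine ⟨hδpos, fun θ t ht => ?_⟩
  have hv := hmain θ t ht
  rw [hvf_eq (θ, t)] at hv
  have hApos : 0 < Ψ θ * F (θ, t) ^ ((2 - 2 * p) / (p + 2)) :=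
    mul_pos (hΨpos θ) (Real.rpow_pos_of_pos (hFposD (θ,t) (hmemD θ t ht)) _)
  exact rad_le_of_speed_ge hp₁ (hconv θ t ht) hδpos hApos (by rw [mul_assoc] at hv ⊢; exact hv)


end
end

section
/- Let s be a solution of the p-flow on [0,T). Then the area A(t) is differentiable on [0,T) and its derivative equals minus the weighted p-affine length: A'(t) = −Ω_p^Ψ(t) = −∫₀^{2π} Ψ(θ)·s(θ,t)^((2−2p)/(p+2))·𝔯(θ,t)^(2/(p+2)) dθ for every t ∈ [0,T). -/
open Real Set Filter MeasureTheory
open Topology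

noncomputable section

/-! ### Auxiliary lemmas -/


lemma timeDom_convex' (T : EReal) : Convex ℝ (timeDom T) := by
  have h : timeDom T = {t : ℝ | 0 ≤ t} ∩ {t : ℝ | (t : EReal) < T} := rfl
  rw [h]
  refine (convex_Ici (0:ℝ)).inter ?_
  refine OrdConnected.convex ⟨fun x hx y hy => fun z hz => ?_⟩
  simp only [mem_setOf_eq] at *
  calc (z : EReal) ≤ (y : EReal) := by exact_mod_cast hz.2
  _ < T := hy

lemma timeDom_uniqueDiffOn' (T : EReal) (hT : 0 < T) : UniqueDiffOn ℝ (timeDom T) := by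
  refine uniqueDiffOn_convex (timeDom_convex' T) ?_
  obtain ⟨b, hb0, hbT⟩ := EReal.lt_iff_exists_real_btwn.1 hT
  have hb0' : (0:ℝ) < b := by exact_mod_cast hb0
  have hsub : Ico (0:ℝ) b ⊆ timeDom T := fun x hx =>
    ⟨hx.1, lt_trans (by exact_mod_cast hx.2) hbT⟩
  have h2 : interior (Ico (0:ℝ) b) ⊆ interior (timeDom T) := interior_mono hsub
  rw [interior_Ico] at h2
  exact (nonempty_Ioo.2 hb0').mono h2

/-- Extracting the partial derivative in the first variable of a function on `univ ×ˢ D`. -/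
lemma hasDerivAt_slice {f : ℝ × ℝ → ℝ} {D : Set ℝ} {θ t : ℝ}
    (hf : DifferentiableWithinAt ℝ f (Set.univ ×ˢ D) (θ, t)) (ht : t ∈ D) :
    HasDerivAt (fun θ' => f (θ', t))
      (fderivWithin ℝ f (Set.univ ×ˢ D) (θ, t) (1, 0)) θ := by
  have hι : HasFDerivAt (fun θ' : ℝ => (θ', t))
      ((ContinuousLinearMap.id ℝ ℝ).prod (0 : ℝ →L[ℝ] ℝ)) θ :=
    (hasFDerivAt_id θ).prodMk (hasFDerivAt_const t θ)
  have hmaps : Set.MapsTo (fun θ' : ℝ => (θ', t)) Set.univ (Set.univ ×ˢ D) :=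
    fun x _ => ⟨trivial, ht⟩
  have h := (hf.hasFDerivWithinAt.comp θ (hι.hasFDerivWithinAt) hmaps)
  rw [hasFDerivWithinAt_univ] at h
  have h' := h.hasDerivAt
  simp at h'
  exact h'

lemma periodic_deriv'_s4 {f : ℝ → ℝ} (hf : Function.Periodic f π) :
    Function.Periodic (deriv f) π := by
  intro x
  have h : (fun y => f (y + π)) = f := funext hf
  calc deriv f (x + π) = deriv (fun y => f (y + π)) x := (deriv_comp_add_const f π x).symm
  _ = deriv f x := by rw [h]

lemma parts_aux (f g : ℝ → ℝ) (hf : ContDiff ℝ (⊤:ℕ∞) f) (hg : ContDiff ℝ (⊤:ℕ∞) g)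
    (hfp : Function.Periodic f π) (hgp : Function.Periodic g π) :
    (∫ θ in (0:ℝ)..(2*π), (g θ * rad f θ - f θ * rad g θ)) = 0 := by
  set W : ℝ → ℝ := fun θ => g θ * deriv f θ - f θ * deriv g θ with hW
  have hder : ∀ θ : ℝ, HasDerivAt W (g θ * rad f θ - f θ * rad g θ) θ := by
    intro θ
    have h1 : HasDerivAt g (deriv g θ) θ :=
      ((hg.differentiable (by simp)) θ).hasDerivAt
    have h2 : HasDerivAt f (deriv f θ) θ :=
      ((hf.differentiable (by simp)) θ).hasDerivAt
    have h3 : HasDerivAt (deriv f) (iteratedDeriv 2 f θ) θ := by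
      have h := ((hf.iterate_deriv 1).differentiable (by simp) θ).hasDerivAt
      simp only [Function.iterate_one] at h
      have e : iteratedDeriv 2 f θ = deriv (deriv f) θ := by
        rw [iteratedDeriv_succ, iteratedDeriv_one]
      rw [e]; exact h
    have h4 : HasDerivAt (deriv g) (iteratedDeriv 2 g θ) θ := by
      have h := ((hg.iterate_deriv 1).differentiable (by simp) θ).hasDerivAt
      simp only [Function.iterate_one] at h
      have e : iteratedDeriv 2 g θ = deriv (deriv g) θ := by
        rw [iteratedDeriv_succ, iteratedDeriv_one]
      rw [e]; exact h
    have h5 := ((h1.mul h3).sub (h2.mul h4))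
    refine h5.congr_deriv ?_
    simp only [rad]; ring
  have hcont : Continuous fun θ => g θ * rad f θ - f θ * rad g θ := by
    have c1 := hf.continuous_iteratedDeriv 2 (by norm_cast)
    have c2 := hg.continuous_iteratedDeriv 2 (by norm_cast)
    unfold rad
    exact (hg.continuous.mul (c1.add hf.continuous)).sub
      (hf.continuous.mul (c2.add hg.continuous))
  have hFTC := intervalIntegral.integral_eq_sub_of_hasDerivAt
    (f := W) (a := (0:ℝ)) (b := 2*π)
    (fun θ _ => hder θ) (hcont.intervalIntegrable _ _)
  rw [hFTC]
  have hWper : ∀ x, W (x + π) = W x := by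
    intro x
    simp only [hW, hfp x, hgp x, periodic_deriv'_s4 hfp x, periodic_deriv'_s4 hgp x]
  have hfin : W (2*π) = W 0 := by
    have h1 := hWper π
    have h0 := hWper 0
    rw [zero_add] at h0
    rw [two_mul, h1, h0]
  rw [hfin, sub_self]

/-- Along the `p`-flow, the enclosed area is differentiable and
`A'(t) = -Ω_p^Ψ(t)`. -/
theorem area_deriv (p : ℝ) (Ψ : ℝ → ℝ) (T : EReal) (s : ℝ → ℝ → ℝ)
    (hflow : IsPFlow p Ψ T s) :
    ∀ t ∈ timeDom T,
      HasDerivWithinAt (area s) (-(wAffLen p Ψ s t)) (timeDom T) t := by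
  intro t ht
  set D := timeDom T with hD
  set U : Set (ℝ × ℝ) := Set.univ ×ˢ D with hU
  set F := Function.uncurry s with hF
  have hDu : UniqueDiffOn ℝ D := timeDom_uniqueDiffOn' T hflow.hT
  have hUu : UniqueDiffOn ℝ U := by exact UniqueDiffOn.prod uniqueDiffOn_univ hDu
  -- slice smoothness
  have hslice : ∀ t' ∈ D, ContDiff ℝ (⊤:ℕ∞) (fun θ => s θ t') := by
    intro t' ht'
    rw [← contDiffOn_univ]
    exact hflow.hsmooth.comp ((contDiff_id.prodMk contDiff_const).contDiffOn)
      (fun x _ => ⟨trivial, ht'⟩)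
  -- first partial derivative in θ
  set G1 : ℝ × ℝ → ℝ := fun q => fderivWithin ℝ F U q (1, 0) with hG1def
  have hG1smooth : ContDiffOn ℝ (⊤:ℕ∞) G1 U :=
    (hflow.hsmooth.fderivWithin hUu (by simp)).clm_apply contDiffOn_const
  have hG1 : ∀ (θ : ℝ), ∀ t' ∈ D, HasDerivAt (fun θ' => s θ' t') (G1 (θ, t')) θ := by
    intro θ t' ht'
    exact hasDerivAt_slice
      (hflow.hsmooth.differentiableOn (by simp) (θ, t') ⟨trivial, ht'⟩) ht'
  -- second partial derivative in θ
  set G2 : ℝ × ℝ → ℝ := fun q => fderivWithin ℝ G1 U q (1, 0) with hG2def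
  have hG2smooth : ContDiffOn ℝ (⊤:ℕ∞) G2 U :=
    (hG1smooth.fderivWithin hUu (by simp)).clm_apply contDiffOn_const
  have hG2cont : ContinuousOn G2 U := hG2smooth.continuousOn
  have hG2 : ∀ (θ : ℝ), ∀ t' ∈ D, HasDerivAt (fun θ' => G1 (θ', t')) (G2 (θ, t')) θ := by
    intro θ t' ht'
    exact hasDerivAt_slice
      (hG1smooth.differentiableOn (by simp) (θ, t') ⟨trivial, ht'⟩) ht'
  -- identification of rad
  set R : ℝ × ℝ → ℝ := fun q => G2 q + F q with hRdef
  have hRcont : ContinuousOn R U := hG2cont.add hflow.hsmooth.continuousOn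
  have hRR : ∀ (θ : ℝ), ∀ t' ∈ D, rad (fun θ' => s θ' t') θ = R (θ, t') := by
    intro θ t' ht'
    have hd : deriv (fun θ' => s θ' t') = fun θ' => G1 (θ', t') :=
      funext fun θ' => (hG1 θ' t' ht').deriv
    show iteratedDeriv 2 (fun θ' => s θ' t') θ + s θ t' = G2 (θ, t') + F (θ, t')
    have h2 : iteratedDeriv 2 (fun θ' => s θ' t') θ = G2 (θ, t') := by
      rw [iteratedDeriv_succ, iteratedDeriv_one, hd]
      exact (hG2 θ t' ht').deriv
    rw [h2]; rfl
  -- the speed as a continuous function on U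
  set V : ℝ × ℝ → ℝ :=
    fun q => Ψ q.1 * F q ^ ((2 - 2*p)/(p+2)) * R q ^ (-p/(p+2)) with hVdef
  have hFpos : ∀ q ∈ U, 0 < F q := fun q hq => hflow.hpos q.1 q.2 hq.2
  have hRpos : ∀ q ∈ U, 0 < R q := by
    intro q hq
    have := hflow.hconv q.1 q.2 hq.2
    rwa [hRR q.1 q.2 hq.2] at this
  have hVcont : ContinuousOn V U := by
    refine ContinuousOn.mul (ContinuousOn.mul ?_ ?_) ?_
    · exact (hflow.hΨsmooth.continuous.comp continuous_fst).continuousOn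
    · exact hflow.hsmooth.continuousOn.rpow_const
        (fun q hq => Or.inl (ne_of_gt (hFpos q hq)))
    · exact hRcont.rpow_const (fun q hq => Or.inl (ne_of_gt (hRpos q hq)))
  have hVeq : ∀ (θ : ℝ), ∀ t' ∈ D, speed p Ψ s θ t' = V (θ, t') := by
    intro θ t' ht'
    show Ψ θ * s θ t' ^ ((2 - 2*p)/(p+2)) * rad (fun θ' => s θ' t') θ ^ (-p/(p+2)) = _
    rw [hRR θ t' ht']
    rfl
  -- choice of a compact time interval around t inside D
  obtain ⟨b, htb, hbT⟩ : ∃ b : ℝ, t < b ∧ (b : EReal) < T := by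
    obtain ⟨b, h1, h2⟩ := EReal.lt_iff_exists_real_btwn.1 ht.2
    exact ⟨b, by exact_mod_cast h1, h2⟩
  set a : ℝ := max 0 (t - 1) with hadef
  have hat : a ≤ t := max_le ht.1 (by linarith)
  have hIccD : Icc a b ⊆ D := by
    intro x hx
    refine ⟨le_trans (le_max_left _ _) hx.1, lt_of_le_of_lt ?_ hbT⟩
    exact_mod_cast hx.2
  have htab : t ∈ Icc a b := ⟨hat, le_of_lt htb⟩
  have hnbhd : Icc a b ∈ 𝓝[D] t := by
    refine mem_nhdsWithin.2 ⟨Ioo (t-1) b, isOpen_Ioo, ⟨by linarith, htb⟩, ?_⟩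
    rintro x ⟨hx1, hx2⟩
    exact ⟨max_le hx2.1 (le_of_lt hx1.1), le_of_lt hx1.2⟩
  -- compact bounds
  set K : Set (ℝ × ℝ) := Icc (0:ℝ) (2*π) ×ˢ Icc a b with hKdef
  have hK : IsCompact K := isCompact_Icc.prod isCompact_Icc
  have hKU : K ⊆ U := fun q hq => ⟨trivial, hIccD hq.2⟩
  obtain ⟨M, hM⟩ := hK.exists_bound_of_continuousOn (hVcont.mono hKU)
  obtain ⟨C, hC⟩ := hK.exists_bound_of_continuousOn (hRcont.mono hKU)
  have hM0 : 0 ≤ M := le_trans (norm_nonneg _) (hM (0, t) ⟨⟨le_refl 0, by positivity⟩, htab⟩)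
  -- MVT slope bound
  have hslope : ∀ θ ∈ Icc (0:ℝ) (2*π), ∀ t' ∈ Icc a b,
      |s θ t' - s θ t| ≤ M * |t' - t| := by
    intro θ hθ t' ht'
    have hmvt := Convex.norm_image_sub_le_of_norm_hasDerivWithin_le
      (f := fun τ => s θ τ) (f' := fun τ => -speed p Ψ s θ τ) (s := Icc a b) (C := M)
      (fun x hx => (hflow.heq θ x (hIccD hx)).mono hIccD)
      (fun x hx => by
        rw [Real.norm_eq_abs, abs_neg, hVeq θ x (hIccD hx)]
        exact hM (θ, x) ⟨hθ, hx⟩)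
      (convex_Icc a b) htab ht'
    simpa [Real.norm_eq_abs] using hmvt
  -- the difference-of-areas identity
  have hkey : ∀ t₁ ∈ D, ∀ t₂ ∈ D,
      area s t₂ - area s t₁ = (1/2) * ∫ θ in (0:ℝ)..(2*π),
        (s θ t₂ - s θ t₁) *
          (rad (fun θ' => s θ' t₁) θ + rad (fun θ' => s θ' t₂) θ) := by
    intro t₁ ht₁ t₂ ht₂
    have hc1 : Continuous (fun θ => rad (fun θ' => s θ' t₁) θ) := by
      have := (hslice t₁ ht₁).continuous_iteratedDeriv 2 (by norm_cast)
      exact this.add (hslice t₁ ht₁).continuous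
    have hc2 : Continuous (fun θ => rad (fun θ' => s θ' t₂) θ) := by
      have := (hslice t₂ ht₂).continuous_iteratedDeriv 2 (by norm_cast)
      exact this.add (hslice t₂ ht₂).continuous
    have hs1 : Continuous (fun θ => s θ t₁) := (hslice t₁ ht₁).continuous
    have hs2 : Continuous (fun θ => s θ t₂) := (hslice t₂ ht₂).continuous
    have h0 := parts_aux (fun θ => s θ t₁) (fun θ => s θ t₂)
      (hslice t₁ ht₁) (hslice t₂ ht₂) (hflow.hper t₁ ht₁) (hflow.hper t₂ ht₂)
    have hsplit : (∫ θ in (0:ℝ)..(2*π),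
        (s θ t₂ - s θ t₁) *
          (rad (fun θ' => s θ' t₁) θ + rad (fun θ' => s θ' t₂) θ))
        = (∫ θ in (0:ℝ)..(2*π),
            (s θ t₂ * rad (fun θ' => s θ' t₂) θ - s θ t₁ * rad (fun θ' => s θ' t₁) θ))
          + ∫ θ in (0:ℝ)..(2*π),
            (s θ t₂ * rad (fun θ' => s θ' t₁) θ - s θ t₁ * rad (fun θ' => s θ' t₂) θ) := by
      rw [← intervalIntegral.integral_add]
      · apply intervalIntegral.integral_congr
        intro θ _
        ring
      · exact ((hs2.mul hc2).sub (hs1.mul hc1)).intervalIntegrable _ _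
      · exact ((hs2.mul hc1).sub (hs1.mul hc2)).intervalIntegrable _ _
    rw [hsplit, h0, add_zero, intervalIntegral.integral_sub
      (f := fun θ => s θ t₂ * rad (fun θ' => s θ' t₂) θ)
      (g := fun θ => s θ t₁ * rad (fun θ' => s θ' t₁) θ)
      ((hs2.mul hc2).intervalIntegrable _ _) ((hs1.mul hc1).intervalIntegrable _ _)]
    unfold area
    ring
  -- limit of integrals via dominated convergence
  set rT : ℝ → ℝ := fun θ => rad (fun θ' => s θ' t) θ with hrTdef
  set Q : ℝ → ℝ → ℝ := fun t' θ =>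
    slope (fun τ => s θ τ) t t' * (rT θ + rad (fun θ' => s θ' t') θ) with hQdef
  set L0 : ℝ := ∫ θ in (0:ℝ)..(2*π), (-speed p Ψ s θ t) * (rT θ + rT θ) with hL0def
  have hrTc : Continuous rT := by
    have := (hslice t ht).continuous_iteratedDeriv 2 (by norm_cast)
    exact this.add (hslice t ht).continuous
  have hev : ∀ᶠ t' in 𝓝[D \ {t}] t, t' ∈ (D \ {t}) ∩ Icc a b := by
    have h1 : ∀ᶠ t' in 𝓝[D \ {t}] t, t' ∈ D \ {t} := eventually_mem_nhdsWithin
    have h2 : Icc a b ∈ 𝓝[D \ {t}] t :=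
      nhdsWithin_mono t diff_subset hnbhd
    filter_upwards [h1, h2] with x hx1 hx2 using ⟨hx1, hx2⟩
  have htend : Tendsto (fun t' => ∫ θ in (0:ℝ)..(2*π), Q t' θ) (𝓝[D \ {t}] t) (𝓝 L0) := by
    refine intervalIntegral.tendsto_integral_filter_of_dominated_convergence
      (fun _ => M * (‖C‖ + ‖C‖)) ?_ ?_ ?_ ?_
    · -- measurability
      filter_upwards [hev] with t' ht'
      have ht'D : t' ∈ D := ht'.1.1
      have hc : Continuous (Q t') := by
        have hc2 : Continuous (fun θ => rad (fun θ' => s θ' t') θ) := by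
          have := (hslice t' ht'D).continuous_iteratedDeriv 2 (by norm_cast)
          exact this.add (hslice t' ht'D).continuous
        have hsl : Continuous (fun θ => slope (fun τ => s θ τ) t t') := by
          simp only [slope_def_field]
          exact ((hslice t' ht'D).continuous.sub (hslice t ht).continuous).div_const _
        exact hsl.mul (hrTc.add hc2)
      exact hc.aestronglyMeasurable.restrict
    · -- bound
      filter_upwards [hev] with t' ht'
      refine ae_of_all _ fun θ hθ => ?_
      have hθ' : θ ∈ Icc (0:ℝ) (2*π) := by
        rcases hθ with hθ
        have := Real.pi_pos
        rw [uIoc_of_le (by positivity)] at hθ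
        exact ⟨le_of_lt hθ.1, hθ.2⟩
      have ht'D : t' ∈ D := ht'.1.1
      have htne : t' ≠ t := ht'.1.2
      have habs : 0 < |t' - t| := abs_pos.2 (sub_ne_zero.2 htne)
      have h1 : |slope (fun τ => s θ τ) t t'| ≤ M := by
        rw [slope_def_field, abs_div]
        rw [div_le_iff₀ habs]
        exact hslope θ hθ' t' ht'.2
      have hK1 : ((θ, t) : ℝ × ℝ) ∈ K := ⟨hθ', htab⟩
      have hK2 : ((θ, t') : ℝ × ℝ) ∈ K := ⟨hθ', ht'.2⟩
      have h2 : |rT θ + rad (fun θ' => s θ' t') θ| ≤ ‖C‖ + ‖C‖ := by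
        refine le_trans (abs_add_le _ _) (add_le_add ?_ ?_)
        · rw [hrTdef]
          show |rad (fun θ' => s θ' t) θ| ≤ ‖C‖
          rw [hRR θ t ht]
          exact le_trans (hC _ hK1) (le_abs_self C)
        · rw [hRR θ t' ht'D]
          exact le_trans (hC _ hK2) (le_abs_self C)
      calc ‖Q t' θ‖ = |slope (fun τ => s θ τ) t t'| * |rT θ + rad (fun θ' => s θ' t') θ| := by
            rw [hQdef]; exact abs_mul _ _
      _ ≤ M * (‖C‖ + ‖C‖) := mul_le_mul h1 h2 (abs_nonneg _) hM0
    · exact intervalIntegrable_const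
    · -- pointwise limit
      refine ae_of_all _ fun θ hθ => ?_
      have hsl : Tendsto (fun t' => slope (fun τ => s θ τ) t t') (𝓝[D \ {t}] t)
          (𝓝 (-speed p Ψ s θ t)) :=
        hasDerivWithinAt_iff_tendsto_slope.1 (hflow.heq θ t ht)
      have hradt : Tendsto (fun t' => rad (fun θ' => s θ' t') θ) (𝓝[D \ {t}] t)
          (𝓝 (rT θ)) := by
        have hcw : ContinuousWithinAt R U (θ, t) := hRcont (θ, t) ⟨trivial, ht⟩
        have hg : ContinuousWithinAt (fun t' : ℝ => ((θ, t') : ℝ × ℝ)) (D \ {t}) t :=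
          (continuous_const.prodMk continuous_id).continuousWithinAt
        have hmap : Set.MapsTo (fun t' : ℝ => ((θ, t') : ℝ × ℝ)) (D \ {t}) U :=
          fun x hx => ⟨trivial, hx.1⟩
        have hcomp := hcw.comp hg hmap
        have heq : ∀ᶠ t' in 𝓝[D \ {t}] t,
            rad (fun θ' => s θ' t') θ = R (θ, t') := by
          filter_upwards [eventually_mem_nhdsWithin] with x hx
          exact hRR θ x hx.1
        refine Tendsto.congr' (Filter.EventuallyEq.symm heq) ?_
        have : rT θ = R (θ, t) := hRR θ t ht
        rw [this]
        exact hcomp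
      exact hsl.mul (tendsto_const_nhds.add hradt)
  -- identify the slope of the area with (1/2) ∫ Q
  have hcongr : ∀ᶠ t' in 𝓝[D \ {t}] t,
      (1/2) * ∫ θ in (0:ℝ)..(2*π), Q t' θ = slope (area s) t t' := by
    filter_upwards [eventually_mem_nhdsWithin] with t' ht'
    have ht'D : t' ∈ D := ht'.1
    have htne : t' ≠ t := ht'.2
    have h1 : (∫ θ in (0:ℝ)..(2*π), Q t' θ)
        = (t' - t)⁻¹ * ∫ θ in (0:ℝ)..(2*π),
            (s θ t' - s θ t) * (rT θ + rad (fun θ' => s θ' t') θ) := by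
      rw [← intervalIntegral.integral_const_mul]
      apply intervalIntegral.integral_congr
      intro θ _
      simp only [hQdef, slope_def_field]
      field_simp
    have hk := hkey t ht t' ht'D
    simp only [hrTdef] at h1 ⊢
    rw [slope_def_field, h1, hk]
    ring
  -- final identification of the limit value
  have hval : (1/2) * L0 = -(wAffLen p Ψ s t) := by
    rw [hL0def]
    have hpt : ∀ θ ∈ uIcc (0:ℝ) (2*π),
        (-speed p Ψ s θ t) * (rT θ + rT θ)
        = (-2) * (Ψ θ * s θ t ^ ((2 - 2*p)/(p+2)) * rT θ ^ ((2:ℝ)/(p+2))) := by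
      intro θ _
      have hr : 0 < rT θ := hflow.hconv θ t ht
      have hp2 : p + 2 ≠ 0 := by linarith [hflow.hp₁]
      have hexp : rT θ ^ (-p/(p+2)) * rT θ = rT θ ^ ((2:ℝ)/(p+2)) := by
        nth_rewrite 2 [← Real.rpow_one (rT θ)]
        rw [← Real.rpow_add hr]
        congr 1
        field_simp
        ring
      show (-(Ψ θ * s θ t ^ ((2 - 2*p)/(p+2)) * rT θ ^ (-p/(p+2)))) * (rT θ + rT θ) = _
      rw [← hexp]
      ring
    rw [intervalIntegral.integral_congr hpt, intervalIntegral.integral_const_mul]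
    unfold wAffLen
    ring
  rw [hD, hasDerivWithinAt_iff_tendsto_slope]
  rw [← hval]
  exact Tendsto.congr' hcongr (htend.const_mul (1/2))


end
end

section
/- Let k ≥ 2 be an integer and let s: ℝ → ℝ be a smooth, π/k-periodic function with 𝔯(θ) := s''(θ) + s(θ) > 0 for all θ and enclosed area (1/2)∫₀^{2π} s(θ)·𝔯(θ) dθ = π. Set c_k := (2k/π)·tan(π/(2k)). Then for every θ ∈ ℝ, 1/(π·√(c_k)) < s(θ) ≤ (π/2)·√(c_k). In particular s admits uniform lower and upper bounds depending only on k. -/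
open Real Set Filter MeasureTheory
open scoped ContDiff

noncomputable section

namespace SFB

variable {s : ℝ → ℝ}

lemma rad_eq (s : ℝ → ℝ) (θ : ℝ) : rad s θ = deriv (deriv s) θ + s θ := by
  have : iteratedDeriv 2 s = deriv (deriv s) := by
    rw [iteratedDeriv_succ, iteratedDeriv_one]
  rw [rad, this]

lemma hs1 (hs : ContDiff ℝ (⊤ : ℕ∞) s) : Differentiable ℝ s :=
  hs.differentiable (by simp)

lemma hs2 (hs : ContDiff ℝ (⊤ : ℕ∞) s) : Differentiable ℝ (deriv s) := by
  have h2 : ContDiff ℝ ∞ (deriv s) := by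
    have := hs.iterate_deriv 1
    simpa using this
  exact h2.differentiable (by simp)

lemma hrcont (hs : ContDiff ℝ (⊤ : ℕ∞) s) : Continuous (rad s) := by
  have h2 : ContDiff ℝ ∞ (deriv^[2] s) := hs.iterate_deriv 2
  have : Continuous (deriv (deriv s)) := by
    have := h2.continuous
    simpa [Function.iterate_succ, Function.comp] using this
  have hc : Continuous (fun θ => deriv (deriv s) θ + s θ) := this.add (hs1 hs).continuous
  have : rad s = fun θ => deriv (deriv s) θ + s θ := funext fun θ => rad_eq s θ
  rw [this]; exact hc

/-- support-coordinate function `G`: component along `u(ψ)`. -/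
def A (s : ℝ → ℝ) (ψ φ : ℝ) : ℝ := s φ * Real.cos (φ - ψ) - deriv s φ * Real.sin (φ - ψ)

/-- component along `u'(ψ)`. -/
def B (s : ℝ → ℝ) (ψ φ : ℝ) : ℝ := s φ * Real.sin (φ - ψ) + deriv s φ * Real.cos (φ - ψ)

lemma hasDerivAt_cos_shift (ψ φ : ℝ) :
    HasDerivAt (fun φ => Real.cos (φ - ψ)) (-Real.sin (φ - ψ)) φ := by
  have h1 : HasDerivAt (fun φ : ℝ => φ - ψ) 1 φ := (hasDerivAt_id φ).sub_const ψ
  simpa [Function.comp_def] using (Real.hasDerivAt_cos (φ - ψ)).comp φ h1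

lemma hasDerivAt_sin_shift (ψ φ : ℝ) :
    HasDerivAt (fun φ => Real.sin (φ - ψ)) (Real.cos (φ - ψ)) φ := by
  have h1 : HasDerivAt (fun φ : ℝ => φ - ψ) 1 φ := (hasDerivAt_id φ).sub_const ψ
  simpa [Function.comp_def] using (Real.hasDerivAt_sin (φ - ψ)).comp φ h1

lemma hasDerivAt_A (hs : ContDiff ℝ (⊤ : ℕ∞) s) (ψ φ : ℝ) :
    HasDerivAt (A s ψ) (-(rad s φ * Real.sin (φ - ψ))) φ := by
  have h1 : HasDerivAt s (deriv s φ) φ := ((hs1 hs) φ).hasDerivAt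
  have h2 : HasDerivAt (deriv s) (deriv (deriv s) φ) φ := ((hs2 hs) φ).hasDerivAt
  have := (h1.mul (hasDerivAt_cos_shift ψ φ)).sub (h2.mul (hasDerivAt_sin_shift ψ φ))
  convert this using 1
  · rfl
  · rfl
  · rfl
  · rw [rad_eq]; ring

lemma hasDerivAt_B (hs : ContDiff ℝ (⊤ : ℕ∞) s) (ψ φ : ℝ) :
    HasDerivAt (B s ψ) (rad s φ * Real.cos (φ - ψ)) φ := by
  have h1 : HasDerivAt s (deriv s φ) φ := ((hs1 hs) φ).hasDerivAt
  have h2 : HasDerivAt (deriv s) (deriv (deriv s) φ) φ := ((hs2 hs) φ).hasDerivAt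
  have := (h1.mul (hasDerivAt_sin_shift ψ φ)).add (h2.mul (hasDerivAt_cos_shift ψ φ))
  convert this using 1
  · rfl
  · rfl
  · rfl
  · rw [rad_eq]; ring

lemma contA (hs : ContDiff ℝ (⊤ : ℕ∞) s) (ψ : ℝ) : Continuous (A s ψ) := by
  have : Continuous (deriv s) := (hs2 hs).continuous
  exact ((hs1 hs).continuous.mul (by fun_prop)).sub (this.mul (by fun_prop))

lemma contB (hs : ContDiff ℝ (⊤ : ℕ∞) s) (ψ : ℝ) : Continuous (B s ψ) := by
  have : Continuous (deriv s) := (hs2 hs).continuous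
  exact ((hs1 hs).continuous.mul (by fun_prop)).add (this.mul (by fun_prop))

/-- the key pointwise identity `s·r = 2 A B' − (A·B)'`, used via FTC. -/
lemma sr_eq (s : ℝ → ℝ) (ψ φ : ℝ) :
    s φ * rad s φ =
      2 * (A s ψ φ * (rad s φ * Real.cos (φ - ψ)))
        - (A s ψ φ * (rad s φ * Real.cos (φ - ψ)) + B s ψ φ * (-(rad s φ * Real.sin (φ - ψ)))) := by
  have : Real.cos (φ - ψ) ^ 2 + Real.sin (φ - ψ) ^ 2 = 1 := by
    rw [add_comm]; exact Real.sin_sq_add_cos_sq _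
  simp only [A, B]
  linear_combination (-(s φ * rad s φ)) * this

lemma periodic_deriv' {T : ℝ} (hs : Differentiable ℝ s) (hper : Function.Periodic s T) :
    Function.Periodic (deriv s) T := by
  intro x
  have h : s = fun y => s (y + T) := (funext fun y => (hper y).symm)
  calc deriv s (x + T) = deriv (fun y => s (y + T)) x := (deriv_comp_add_const s T x).symm
    _ = deriv s x := by rw [← h]

lemma periodic_rad {T : ℝ} (hs : ContDiff ℝ (⊤ : ℕ∞) s) (hper : Function.Periodic s T) :
    Function.Periodic (rad s) T := by
  have h1 := periodic_deriv' (hs1 hs) hper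
  have h2 := periodic_deriv' (hs2 hs) h1
  intro x
  rw [rad_eq, rad_eq, h2, hper]

/-- positivity of the support function: `2 s θ = ∫_θ^{θ+π} r sin(t−θ) dt > 0`,
assuming `s` is `π`-periodic. -/
lemma s_pos (hs : ContDiff ℝ (⊤ : ℕ∞) s) (hconv : ∀ θ, 0 < rad s θ)
    (hperπ : Function.Periodic s π) (θ : ℝ) : 0 < s θ := by
  have hint : ∫ t in θ..(θ + π), rad s t * Real.sin (t - θ) = 2 * s θ := by
    have hft : ∀ t ∈ Set.uIcc θ (θ + π),
        HasDerivAt (fun t => -(s t * Real.cos (t - θ)) + deriv s t * Real.sin (t - θ))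
          (rad s t * Real.sin (t - θ)) t := by
      intro t _
      have h1 : HasDerivAt s (deriv s t) t := ((hs1 hs) t).hasDerivAt
      have h2 : HasDerivAt (deriv s) (deriv (deriv s) t) t := ((hs2 hs) t).hasDerivAt
      have := ((h1.mul (hasDerivAt_cos_shift θ t)).neg).add (h2.mul (hasDerivAt_sin_shift θ t))
      convert this using 1
      · rfl
      · rfl
      · rfl
      · rw [rad_eq]; ring
    have hcont : Continuous fun t => rad s t * Real.sin (t - θ) :=
      (hrcont hs).mul (by fun_prop)
    rw [intervalIntegral.integral_eq_sub_of_hasDerivAt hft (hcont.intervalIntegrable _ _)]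
    have e1 : θ + π - θ = π := by ring
    have e2 : θ - θ = (0:ℝ) := by ring
    rw [e1, e2]
    rw [hperπ θ]
    simp [Real.cos_pi, Real.sin_pi]
    ring
  have hpos : 0 < ∫ t in θ..(θ + π), rad s t * Real.sin (t - θ) := by
    apply intervalIntegral.intervalIntegral_pos_of_pos_on
    · exact (((hrcont hs).mul (by fun_prop : Continuous fun t : ℝ => Real.sin (t - θ))).intervalIntegrable _ _)
    · intro x hx
      have h1 : 0 < Real.sin (x - θ) := by
        apply Real.sin_pos_of_pos_of_lt_pi
        · linarith [hx.1]
        · linarith [hx.2]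
      exact mul_pos (hconv x) h1
    · linarith [Real.pi_pos]
  linarith

/-- a continuous periodic function attains a global minimum at a critical point. -/
lemma exists_min (hs : ContDiff ℝ (⊤ : ℕ∞) s) {T : ℝ} (hT : 0 < T)
    (hper : Function.Periodic s T) :
    ∃ ψ, deriv s ψ = 0 ∧ ∀ θ, s ψ ≤ s θ := by
  obtain ⟨ψ, -, hmin⟩ := isCompact_Icc.exists_isMinOn (Set.nonempty_Icc.2 (le_of_lt hT))
    ((hs1 hs).continuous.continuousOn (s := Set.Icc 0 T))
  have hglobal : ∀ θ, s ψ ≤ s θ := by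
    intro θ
    obtain ⟨y, hy, hyeq⟩ := hper.exists_mem_Ico₀ hT θ
    rw [hyeq]
    exact hmin ⟨hy.1, le_of_lt hy.2⟩
  refine ⟨ψ, ?_, hglobal⟩
  have : IsLocalMin s ψ := by
    apply IsMinOn.isLocalMin (s := Set.univ)
    · intro y _; exact hglobal y
    · exact Filter.univ_mem
  exact this.deriv_eq_zero

lemma exists_max (hs : ContDiff ℝ (⊤ : ℕ∞) s) {T : ℝ} (hT : 0 < T)
    (hper : Function.Periodic s T) :
    ∃ ψ, deriv s ψ = 0 ∧ ∀ θ, s θ ≤ s ψ := by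
  obtain ⟨ψ, h0, hmax⟩ := exists_min (s := fun x => -(s x)) (hs.neg) hT (fun x => by simp [hper x])
  refine ⟨ψ, ?_, fun θ => by have := hmax θ; simpa using this⟩
  have : deriv (fun x => -(s x)) ψ = -(deriv s ψ) := by
    simp [deriv.neg]
  rw [this] at h0
  linarith [h0]

lemma periodic_int {f : ℝ → ℝ} (hf : Continuous f) {T : ℝ}
    (hper : Function.Periodic f T) (n : ℕ) (c : ℝ) :
    ∫ x in (0:ℝ)..(n * T), f x = n * ∫ x in c..(c + T), f x := by
  have hint : ∀ t₁ t₂, IntervalIntegrable f MeasureSpace.volume t₁ t₂ :=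
    fun t₁ t₂ => hf.intervalIntegrable _ _
  have h1 := hper.intervalIntegral_add_zsmul_eq (n : ℤ) c hint
  have h2 : Function.Periodic f (n * T) := hper.nat_mul n
  have h3 := h2.intervalIntegral_add_eq 0 c
  have e1 : ((n : ℤ) • T) = (n : ℝ) * T := by
    rw [zsmul_eq_mul]; norm_num
  have e2 : (0 : ℝ) + n * T = n * T := by ring
  rw [e1] at h1
  rw [e2] at h3
  rw [h3, h1]
  norm_num

/-- pointwise bound `s ψ · cos (φ − ψ) ≤ s φ` for `φ ∈ [ψ, ψ+π]`, `ψ` critical. -/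
lemma cos_support_le (hs : ContDiff ℝ (⊤ : ℕ∞) s) (hconv : ∀ θ, 0 < rad s θ)
    {ψ φ : ℝ} (hcrit : deriv s ψ = 0) (h1 : ψ ≤ φ) (h2 : φ ≤ ψ + π) :
    s ψ * Real.cos (φ - ψ) ≤ s φ := by
  have hint : ∫ t in ψ..φ, rad s t * Real.sin (φ - t) = s φ - s ψ * Real.cos (φ - ψ) := by
    have hft : ∀ t ∈ Set.uIcc ψ φ,
        HasDerivAt (fun t => deriv s t * Real.sin (φ - t) + s t * Real.cos (φ - t))
          (rad s t * Real.sin (φ - t)) t := by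
      intro t _
      have hd1 : HasDerivAt s (deriv s t) t := ((hs1 hs) t).hasDerivAt
      have hd2 : HasDerivAt (deriv s) (deriv (deriv s) t) t := ((hs2 hs) t).hasDerivAt
      have hc : HasDerivAt (fun t => Real.cos (φ - t)) (Real.sin (φ - t)) t := by
        have hlin : HasDerivAt (fun t : ℝ => φ - t) (-1) t := by
          simpa using (hasDerivAt_id t).const_sub φ
        simpa [Function.comp_def] using (Real.hasDerivAt_cos (φ - t)).comp t hlin
      have hsn : HasDerivAt (fun t => Real.sin (φ - t)) (-Real.cos (φ - t)) t := by
        have hlin : HasDerivAt (fun t : ℝ => φ - t) (-1) t := by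
          simpa using (hasDerivAt_id t).const_sub φ
        simpa [Function.comp_def] using (Real.hasDerivAt_sin (φ - t)).comp t hlin
      have := (hd2.mul hsn).add (hd1.mul hc)
      convert this using 1
      · rfl
      · rfl
      · rfl
      · rw [rad_eq]; ring
    have hcont : Continuous fun t => rad s t * Real.sin (φ - t) :=
      (hrcont hs).mul (by fun_prop)
    rw [intervalIntegral.integral_eq_sub_of_hasDerivAt hft (hcont.intervalIntegrable _ _)]
    simp [hcrit]
  have hnn : 0 ≤ ∫ t in ψ..φ, rad s t * Real.sin (φ - t) := by
    apply intervalIntegral.integral_nonneg h1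
    intro t ht
    have : 0 ≤ Real.sin (φ - t) := by
      apply Real.sin_nonneg_of_nonneg_of_le_pi
      · linarith [ht.1, ht.2]
      · linarith [ht.1, ht.2]
    exact mul_nonneg (le_of_lt (hconv t)) this
  linarith [hint ▸ hnn]

/-- sector lower bound at a critical point. -/
lemma sector_lower (hs : ContDiff ℝ (⊤ : ℕ∞) s) (hconv : ∀ θ, 0 < rad s θ)
    {T : ℝ} (hT : 0 < T) (hT2 : T ≤ π / 2) (hper : Function.Periodic s T)
    {ψ : ℝ} (hcrit : deriv s ψ = 0) :
    s ψ ^ 2 * Real.sin T ≤ ∫ φ in ψ..(ψ + T), s φ * rad s φ := by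
  have hπ : T ≤ π := le_trans hT2 (by linarith [Real.pi_pos])
  have hmono : ∫ φ in ψ..(ψ + T), (s ψ * Real.cos (φ - ψ)) * rad s φ
      ≤ ∫ φ in ψ..(ψ + T), s φ * rad s φ := by
    apply intervalIntegral.integral_mono_on (by linarith)
    · exact ((continuous_const.mul (by fun_prop)).mul (hrcont hs)).intervalIntegrable _ _
    · exact ((hs1 hs).continuous.mul (hrcont hs)).intervalIntegrable _ _
    · intro x hx
      have := cos_support_le hs hconv hcrit hx.1 (by linarith [hx.2])
      exact mul_le_mul_of_nonneg_right this (le_of_lt (hconv x))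
  have hcompute : ∫ φ in ψ..(ψ + T), (s ψ * Real.cos (φ - ψ)) * rad s φ
      = s ψ ^ 2 * Real.sin T := by
    have heq : ∀ φ, (s ψ * Real.cos (φ - ψ)) * rad s φ = s ψ * (rad s φ * Real.cos (φ - ψ)) := by
      intro φ; ring
    simp_rw [heq]
    rw [intervalIntegral.integral_const_mul]
    have hft : ∀ φ ∈ Set.uIcc ψ (ψ + T),
        HasDerivAt (B s ψ) (rad s φ * Real.cos (φ - ψ)) φ := fun φ _ => hasDerivAt_B hs ψ φ
    have hcont : Continuous fun φ => rad s φ * Real.cos (φ - ψ) :=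
      (hrcont hs).mul (by fun_prop)
    rw [intervalIntegral.integral_eq_sub_of_hasDerivAt hft (hcont.intervalIntegrable _ _)]
    have hd : Function.Periodic (deriv s) T := periodic_deriv' (hs1 hs) hper
    have e1 : B s ψ (ψ + T) = s ψ * Real.sin T := by
      have : ψ + T - ψ = T := by ring
      rw [B, this, hper ψ, hd ψ, hcrit]; ring
    have e2 : B s ψ ψ = 0 := by
      rw [B]; simp [hcrit]
    rw [e1, e2]; ring
  linarith

lemma monoOn_of_hasDerivAt {f f' : ℝ → ℝ} (hf : ∀ x, HasDerivAt f (f' x) x) {lo hi : ℝ}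
    (h : ∀ x ∈ Set.Ioo lo hi, 0 ≤ f' x) : MonotoneOn f (Set.Icc lo hi) := by
  apply monotoneOn_of_deriv_nonneg (convex_Icc lo hi)
  · exact fun x _ => (hf x).continuousAt.continuousWithinAt
  · intro x hx
    rw [interior_Icc] at hx
    exact ((hf x).differentiableAt).differentiableWithinAt
  · intro x hx
    rw [interior_Icc] at hx
    rw [(hf x).deriv]
    exact h x hx

lemma antiOn_of_hasDerivAt {f f' : ℝ → ℝ} (hf : ∀ x, HasDerivAt f (f' x) x) {lo hi : ℝ}
    (h : ∀ x ∈ Set.Ioo lo hi, f' x ≤ 0) : AntitoneOn f (Set.Icc lo hi) := by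
  apply antitoneOn_of_deriv_nonpos (convex_Icc lo hi)
  · exact fun x _ => (hf x).continuousAt.continuousWithinAt
  · intro x hx
    rw [interior_Icc] at hx
    exact ((hf x).differentiableAt).differentiableWithinAt
  · intro x hx
    rw [interior_Icc] at hx
    rw [(hf x).deriv]
    exact h x hx

lemma A_at (hcrit : deriv s ψ = 0) : A s ψ ψ = s ψ := by
  simp [A]

lemma B_at (hcrit : deriv s ψ = 0) : B s ψ ψ = 0 := by
  simp [B, hcrit]

lemma half_right (hs : ContDiff ℝ (⊤ : ℕ∞) s) (hconv : ∀ θ, 0 < rad s θ)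
    {β ψ : ℝ} (hβ1 : 0 < β) (hβ2 : β ≤ π / 4) (hcrit : deriv s ψ = 0)
    (hA : ∀ φ ∈ Set.Icc ψ (ψ + β), A s ψ φ ≤ s ψ)
    (hL : ∀ φ ∈ Set.Icc ψ (ψ + β),
      A s ψ φ + Real.tan β * B s ψ φ ≤ A s ψ (ψ + β) + Real.tan β * B s ψ (ψ + β)) :
    ∫ φ in ψ..(ψ + β), A s ψ φ * (rad s φ * Real.cos (φ - ψ))
      ≤ s ψ * B s ψ (ψ + β) - (s ψ - A s ψ (ψ + β)) ^ 2 / (2 * Real.tan β) := by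
  have hπ4 : π / 4 < π / 2 := by linarith [Real.pi_pos]
  have hτ : 0 < Real.tan β := Real.tan_pos_of_pos_of_lt_pi_div_two hβ1 (by linarith)
  set τ := Real.tan β with hτdef
  set m := s ψ with hm
  set Gp := A s ψ (ψ + β) with hGp
  set Fp := B s ψ (ψ + β) with hFp
  have hmGp : 0 ≤ m - Gp := by
    have := hA (ψ + β) ⟨by linarith, le_refl _⟩
    linarith
  have hmL : m ≤ Gp + τ * Fp := by
    have := hL ψ ⟨le_refl _, by linarith⟩
    rw [A_at hcrit, B_at hcrit] at this
    linarith
  set c₀ := Fp - (m - Gp) / τ with hc₀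
  have hc₀0 : 0 ≤ c₀ := by
    have h1 : (m - Gp) / τ ≤ Fp := by
      rw [div_le_iff₀ hτ]
      nlinarith
    rw [hc₀]
    linarith
  have hc₀Fp : c₀ ≤ Fp := by
    rw [hc₀]
    have : 0 ≤ (m - Gp) / τ := div_nonneg hmGp (le_of_lt hτ)
    linarith
  -- IVT to find the crossing point
  have hBψ : B s ψ ψ = 0 := B_at hcrit
  obtain ⟨φs, hφs, hBφs⟩ : ∃ φs ∈ Set.Icc ψ (ψ + β), B s ψ φs = c₀ := by
    have hsub := intermediate_value_Icc (by linarith : ψ ≤ ψ + β)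
      ((contB hs ψ).continuousOn)
    have : c₀ ∈ Set.Icc (B s ψ ψ) (B s ψ (ψ + β)) := by
      rw [hBψ]; exact ⟨hc₀0, hc₀Fp⟩
    obtain ⟨φs, hmem, heq⟩ := hsub this
    exact ⟨φs, hmem, heq⟩
  have hcontAB : Continuous fun φ => A s ψ φ * (rad s φ * Real.cos (φ - ψ)) :=
    (contA hs ψ).mul ((hrcont hs).mul (by fun_prop))
  have hBnn : ∀ φ ∈ Set.Icc ψ (ψ + β), 0 ≤ rad s φ * Real.cos (φ - ψ) := by
    intro φ hφ
    apply mul_nonneg (le_of_lt (hconv φ))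
    apply Real.cos_nonneg_of_mem_Icc
    constructor
    · linarith [hφ.1, Real.pi_pos]
    · linarith [hφ.2]
  -- first piece
  have hpiece1 : ∫ φ in ψ..φs, A s ψ φ * (rad s φ * Real.cos (φ - ψ)) ≤ m * c₀ := by
    have hmono : ∫ φ in ψ..φs, A s ψ φ * (rad s φ * Real.cos (φ - ψ))
        ≤ ∫ φ in ψ..φs, m * (rad s φ * Real.cos (φ - ψ)) := by
      apply intervalIntegral.integral_mono_on hφs.1
      · exact hcontAB.intervalIntegrable _ _
      · exact (continuous_const.mul ((hrcont hs).mul (by fun_prop))).intervalIntegrable _ _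
      · intro x hx
        have hx' : x ∈ Set.Icc ψ (ψ + β) := ⟨hx.1, le_trans hx.2 hφs.2⟩
        exact mul_le_mul_of_nonneg_right (hA x hx') (hBnn x hx')
    have hval : ∫ φ in ψ..φs, m * (rad s φ * Real.cos (φ - ψ)) = m * c₀ := by
      rw [intervalIntegral.integral_const_mul]
      rw [intervalIntegral.integral_eq_sub_of_hasDerivAt
        (fun φ _ => hasDerivAt_B hs ψ φ)
        (((hrcont hs).mul (by fun_prop)).intervalIntegrable _ _)]
      rw [hBφs, hBψ]; ring
    linarith
  -- second piece
  have hpiece2 : ∫ φ in φs..(ψ + β), A s ψ φ * (rad s φ * Real.cos (φ - ψ))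
      ≤ (Gp + τ * Fp) * (Fp - c₀) - τ * (Fp ^ 2 - c₀ ^ 2) / 2 := by
    have hmono : ∫ φ in φs..(ψ + β), A s ψ φ * (rad s φ * Real.cos (φ - ψ))
        ≤ ∫ φ in φs..(ψ + β),
            ((Gp + τ * Fp) - τ * B s ψ φ) * (rad s φ * Real.cos (φ - ψ)) := by
      apply intervalIntegral.integral_mono_on hφs.2
      · exact hcontAB.intervalIntegrable _ _
      · exact ((continuous_const.sub (continuous_const.mul (contB hs ψ))).mul
          ((hrcont hs).mul (by fun_prop))).intervalIntegrable _ _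
      · intro x hx
        have hx' : x ∈ Set.Icc ψ (ψ + β) := ⟨le_trans hφs.1 hx.1, hx.2⟩
        have := hL x hx'
        have hAle : A s ψ x ≤ (Gp + τ * Fp) - τ * B s ψ x := by linarith
        exact mul_le_mul_of_nonneg_right hAle (hBnn x hx')
    have hval : ∫ φ in φs..(ψ + β),
        ((Gp + τ * Fp) - τ * B s ψ φ) * (rad s φ * Real.cos (φ - ψ))
        = (Gp + τ * Fp) * (Fp - c₀) - τ * (Fp ^ 2 - c₀ ^ 2) / 2 := by
      have hft : ∀ φ ∈ Set.uIcc φs (ψ + β),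
          HasDerivAt (fun φ => (Gp + τ * Fp) * B s ψ φ - τ * (B s ψ φ) ^ 2 / 2)
            (((Gp + τ * Fp) - τ * B s ψ φ) * (rad s φ * Real.cos (φ - ψ))) φ := by
        intro φ _
        have hB := hasDerivAt_B hs ψ φ
        have := (hB.const_mul (Gp + τ * Fp)).sub ((hB.mul hB).const_mul (τ / 2))
        convert this using 1
        · rfl
        · rfl
        · funext y; simp only [Pi.sub_apply, Pi.add_apply, Pi.mul_apply]; ring
        · ring
      rw [intervalIntegral.integral_eq_sub_of_hasDerivAt hft
        (((continuous_const.sub (continuous_const.mul (contB hs ψ))).mul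
          ((hrcont hs).mul (by fun_prop))).intervalIntegrable _ _)]
      rw [hBφs]
      ring
    linarith
  have hsplit : ∫ φ in ψ..(ψ + β), A s ψ φ * (rad s φ * Real.cos (φ - ψ))
      = (∫ φ in ψ..φs, A s ψ φ * (rad s φ * Real.cos (φ - ψ)))
        + ∫ φ in φs..(ψ + β), A s ψ φ * (rad s φ * Real.cos (φ - ψ)) :=
    (intervalIntegral.integral_add_adjacent_intervals
      (hcontAB.intervalIntegrable _ _) (hcontAB.intervalIntegrable _ _)).symm
  have key : m * c₀ + ((Gp + τ * Fp) * (Fp - c₀) - τ * (Fp ^ 2 - c₀ ^ 2) / 2)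
      = m * Fp - (m - Gp) ^ 2 / (2 * τ) := by
    rw [hc₀]
    field_simp
    ring
  rw [hsplit]
  exact le_of_le_of_eq (add_le_add hpiece1 hpiece2) key

lemma half_left (hs : ContDiff ℝ (⊤ : ℕ∞) s) (hconv : ∀ θ, 0 < rad s θ)
    {β ψ : ℝ} (hβ1 : 0 < β) (hβ2 : β ≤ π / 4) (hcrit : deriv s ψ = 0)
    (hA : ∀ φ ∈ Set.Icc (ψ - β) ψ, A s ψ φ ≤ s ψ)
    (hL : ∀ φ ∈ Set.Icc (ψ - β) ψ,
      A s ψ φ - Real.tan β * B s ψ φ ≤ A s ψ (ψ - β) - Real.tan β * B s ψ (ψ - β)) :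
    ∫ φ in (ψ - β)..ψ, A s ψ φ * (rad s φ * Real.cos (φ - ψ))
      ≤ -(s ψ * B s ψ (ψ - β)) - (s ψ - A s ψ (ψ - β)) ^ 2 / (2 * Real.tan β) := by
  have hπ4 : π / 4 < π / 2 := by linarith [Real.pi_pos]
  have hτ : 0 < Real.tan β := Real.tan_pos_of_pos_of_lt_pi_div_two hβ1 (by linarith)
  set τ := Real.tan β with hτdef
  set m := s ψ with hm
  set Gm := A s ψ (ψ - β) with hGm
  set Fm := B s ψ (ψ - β) with hFm
  have hmGm : 0 ≤ m - Gm := by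
    have := hA (ψ - β) ⟨le_refl _, by linarith⟩
    linarith
  have hmL : m ≤ Gm - τ * Fm := by
    have := hL ψ ⟨by linarith, le_refl _⟩
    rw [A_at hcrit, B_at hcrit] at this
    linarith
  set c₀ := Fm + (m - Gm) / τ with hc₀
  have hc₀0 : c₀ ≤ 0 := by
    have h1 : (m - Gm) / τ ≤ -Fm := by
      rw [div_le_iff₀ hτ]
      nlinarith
    rw [hc₀]
    linarith
  have hc₀Fm : Fm ≤ c₀ := by
    have : 0 ≤ (m - Gm) / τ := div_nonneg hmGm (le_of_lt hτ)
    rw [hc₀]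
    linarith
  have hBψ : B s ψ ψ = 0 := B_at hcrit
  obtain ⟨φs, hφs, hBφs⟩ : ∃ φs ∈ Set.Icc (ψ - β) ψ, B s ψ φs = c₀ := by
    have hsub := intermediate_value_Icc (by linarith : ψ - β ≤ ψ)
      ((contB hs ψ).continuousOn)
    have : c₀ ∈ Set.Icc (B s ψ (ψ - β)) (B s ψ ψ) := by
      rw [hBψ]; exact ⟨hc₀Fm, hc₀0⟩
    obtain ⟨φs, hmem, heq⟩ := hsub this
    exact ⟨φs, hmem, heq⟩
  have hcontAB : Continuous fun φ => A s ψ φ * (rad s φ * Real.cos (φ - ψ)) :=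
    (contA hs ψ).mul ((hrcont hs).mul (by fun_prop))
  have hBnn : ∀ φ ∈ Set.Icc (ψ - β) ψ, 0 ≤ rad s φ * Real.cos (φ - ψ) := by
    intro φ hφ
    apply mul_nonneg (le_of_lt (hconv φ))
    apply Real.cos_nonneg_of_mem_Icc
    constructor
    · linarith [hφ.1, Real.pi_pos]
    · linarith [hφ.2, Real.pi_pos]
  -- first piece: line bound on [ψ-β, φs]
  have hpiece1 : ∫ φ in (ψ - β)..φs, A s ψ φ * (rad s φ * Real.cos (φ - ψ))
      ≤ (Gm - τ * Fm) * (c₀ - Fm) + τ * (c₀ ^ 2 - Fm ^ 2) / 2 := by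
    have hmono : ∫ φ in (ψ - β)..φs, A s ψ φ * (rad s φ * Real.cos (φ - ψ))
        ≤ ∫ φ in (ψ - β)..φs,
            ((Gm - τ * Fm) + τ * B s ψ φ) * (rad s φ * Real.cos (φ - ψ)) := by
      apply intervalIntegral.integral_mono_on hφs.1
      · exact hcontAB.intervalIntegrable _ _
      · exact ((continuous_const.add (continuous_const.mul (contB hs ψ))).mul
          ((hrcont hs).mul (by fun_prop))).intervalIntegrable _ _
      · intro x hx
        have hx' : x ∈ Set.Icc (ψ - β) ψ := ⟨hx.1, le_trans hx.2 hφs.2⟩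
        have := hL x hx'
        have hAle : A s ψ x ≤ (Gm - τ * Fm) + τ * B s ψ x := by linarith
        exact mul_le_mul_of_nonneg_right hAle (hBnn x hx')
    have hval : ∫ φ in (ψ - β)..φs,
        ((Gm - τ * Fm) + τ * B s ψ φ) * (rad s φ * Real.cos (φ - ψ))
        = (Gm - τ * Fm) * (c₀ - Fm) + τ * (c₀ ^ 2 - Fm ^ 2) / 2 := by
      have hft : ∀ φ ∈ Set.uIcc (ψ - β) φs,
          HasDerivAt (fun φ => (Gm - τ * Fm) * B s ψ φ + τ * (B s ψ φ) ^ 2 / 2)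
            (((Gm - τ * Fm) + τ * B s ψ φ) * (rad s φ * Real.cos (φ - ψ))) φ := by
        intro φ _
        have hB := hasDerivAt_B hs ψ φ
        have := (hB.const_mul (Gm - τ * Fm)).add ((hB.mul hB).const_mul (τ / 2))
        convert this using 1
        · rfl
        · rfl
        · funext y; simp only [Pi.sub_apply, Pi.add_apply, Pi.mul_apply]; ring
        · ring
      rw [intervalIntegral.integral_eq_sub_of_hasDerivAt hft
        (((continuous_const.add (continuous_const.mul (contB hs ψ))).mul
          ((hrcont hs).mul (by fun_prop))).intervalIntegrable _ _)]
      rw [hBφs]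
      ring
    linarith
  -- second piece: constant bound on [φs, ψ]
  have hpiece2 : ∫ φ in φs..ψ, A s ψ φ * (rad s φ * Real.cos (φ - ψ)) ≤ -(m * c₀) := by
    have hmono : ∫ φ in φs..ψ, A s ψ φ * (rad s φ * Real.cos (φ - ψ))
        ≤ ∫ φ in φs..ψ, m * (rad s φ * Real.cos (φ - ψ)) := by
      apply intervalIntegral.integral_mono_on hφs.2
      · exact hcontAB.intervalIntegrable _ _
      · exact (continuous_const.mul ((hrcont hs).mul (by fun_prop))).intervalIntegrable _ _
      · intro x hx
        have hx' : x ∈ Set.Icc (ψ - β) ψ := ⟨le_trans hφs.1 hx.1, hx.2⟩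
        exact mul_le_mul_of_nonneg_right (hA x hx') (hBnn x hx')
    have hval : ∫ φ in φs..ψ, m * (rad s φ * Real.cos (φ - ψ)) = -(m * c₀) := by
      rw [intervalIntegral.integral_const_mul]
      rw [intervalIntegral.integral_eq_sub_of_hasDerivAt
        (fun φ _ => hasDerivAt_B hs ψ φ)
        (((hrcont hs).mul (by fun_prop)).intervalIntegrable _ _)]
      rw [hBφs, hBψ]; ring
    linarith
  have hsplit : ∫ φ in (ψ - β)..ψ, A s ψ φ * (rad s φ * Real.cos (φ - ψ))
      = (∫ φ in (ψ - β)..φs, A s ψ φ * (rad s φ * Real.cos (φ - ψ)))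
        + ∫ φ in φs..ψ, A s ψ φ * (rad s φ * Real.cos (φ - ψ)) :=
    (intervalIntegral.integral_add_adjacent_intervals
      (hcontAB.intervalIntegrable _ _) (hcontAB.intervalIntegrable _ _)).symm
  have key : ((Gm - τ * Fm) * (c₀ - Fm) + τ * (c₀ ^ 2 - Fm ^ 2) / 2) + -(m * c₀)
      = -(m * Fm) - (m - Gm) ^ 2 / (2 * τ) := by
    rw [hc₀]
    field_simp
    ring
  rw [hsplit]
  exact le_of_le_of_eq (add_le_add hpiece1 hpiece2) key

lemma final_algebra (m a b sn cβ : ℝ) (hsn : 0 < sn) (hcβ : 0 < cβ)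
    (hpy : sn ^ 2 + cβ ^ 2 = 1) :
    2 * ((-(m * (-(a * sn) + b * cβ)) - (m - (a * cβ + b * sn)) ^ 2 / (2 * (sn / cβ)))
        + (m * (a * sn + b * cβ) - (m - (a * cβ - b * sn)) ^ 2 / (2 * (sn / cβ))))
      - ((a * cβ - b * sn) * (a * sn + b * cβ) - (a * cβ + b * sn) * (-(a * sn) + b * cβ))
      ≤ 2 * m ^ 2 * (sn / cβ) := by
  have hkey : 2 * m ^ 2 * (sn / cβ)
      - (2 * ((-(m * (-(a * sn) + b * cβ)) - (m - (a * cβ + b * sn)) ^ 2 / (2 * (sn / cβ)))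
        + (m * (a * sn + b * cβ) - (m - (a * cβ - b * sn)) ^ 2 / (2 * (sn / cβ))))
      - ((a * cβ - b * sn) * (a * sn + b * cβ) - (a * cβ + b * sn) * (-(a * sn) + b * cβ)))
      = 2 * (m - a * cβ) ^ 2 / (sn * cβ) := by
    field_simp
    linear_combination (2 * (m - a * cβ) ^ 2) * hpy
  have hslack : 0 ≤ 2 * (m - a * cβ) ^ 2 / (sn * cβ) :=
    div_nonneg (by positivity) (le_of_lt (mul_pos hsn hcβ))
  linarith

lemma sector_upper (hs : ContDiff ℝ (⊤ : ℕ∞) s) (hconv : ∀ θ, 0 < rad s θ)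
    {β ψ : ℝ} (hβ1 : 0 < β) (hβ2 : β ≤ π / 4)
    (hper : Function.Periodic s (2 * β)) (hcrit : deriv s ψ = 0) :
    ∫ φ in (ψ - β)..(ψ + β), s φ * rad s φ ≤ 2 * s ψ ^ 2 * Real.tan β := by
  have hπ4 : π / 4 < π / 2 := by linarith [Real.pi_pos]
  have hcβ : 0 < Real.cos β := Real.cos_pos_of_mem_Ioo ⟨by linarith, by linarith⟩
  have hsn : 0 < Real.sin β := Real.sin_pos_of_pos_of_lt_pi hβ1 (by linarith [Real.pi_pos])
  have hτeq : Real.tan β = Real.sin β / Real.cos β := Real.tan_eq_sin_div_cos β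
  have hτ : 0 < Real.tan β := Real.tan_pos_of_pos_of_lt_pi_div_two hβ1 (by linarith)
  have hcne : Real.cos β ≠ 0 := ne_of_gt hcβ
  have hd : Function.Periodic (deriv s) (2 * β) := periodic_deriv' (hs1 hs) hper
  have hsm : s (ψ - β) = s (ψ + β) := by
    have := hper (ψ - β)
    have e : ψ - β + 2 * β = ψ + β := by ring
    rw [e] at this
    exact this.symm
  have hdm : deriv s (ψ - β) = deriv s (ψ + β) := by
    have := hd (ψ - β)
    have e : ψ - β + 2 * β = ψ + β := by ring
    rw [e] at this
    exact this.symm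
  have ep : ψ + β - ψ = β := by ring
  have em : ψ - β - ψ = -β := by ring
  have hGp : A s ψ (ψ + β) = s (ψ + β) * Real.cos β - deriv s (ψ + β) * Real.sin β := by
    rw [A, ep]
  have hFp : B s ψ (ψ + β) = s (ψ + β) * Real.sin β + deriv s (ψ + β) * Real.cos β := by
    rw [B, ep]
  have hGm : A s ψ (ψ - β) = s (ψ + β) * Real.cos β + deriv s (ψ + β) * Real.sin β := by
    rw [A, em, Real.cos_neg, Real.sin_neg, hsm, hdm]; ring
  have hFm : B s ψ (ψ - β) = -(s (ψ + β) * Real.sin β) + deriv s (ψ + β) * Real.cos β := by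
    rw [B, em, Real.cos_neg, Real.sin_neg, hsm, hdm]; ring
  -- support bound A ≤ s ψ on both halves
  have hAr : ∀ φ ∈ Set.Icc ψ (ψ + β), A s ψ φ ≤ s ψ := by
    have hanti : AntitoneOn (A s ψ) (Set.Icc ψ (ψ + β)) := by
      apply antiOn_of_hasDerivAt (fun x => hasDerivAt_A hs ψ x)
      intro x hx
      have hsx : 0 ≤ Real.sin (x - ψ) := by
        apply Real.sin_nonneg_of_nonneg_of_le_pi
        · linarith [hx.1]
        · linarith [hx.2, Real.pi_pos]
      have := mul_nonneg (le_of_lt (hconv x)) hsx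
      linarith
    intro φ hφ
    have := hanti (Set.left_mem_Icc.2 (by linarith)) hφ hφ.1
    rw [A_at hcrit] at this
    exact this
  have hAl : ∀ φ ∈ Set.Icc (ψ - β) ψ, A s ψ φ ≤ s ψ := by
    have hmono : MonotoneOn (A s ψ) (Set.Icc (ψ - β) ψ) := by
      apply monoOn_of_hasDerivAt (fun x => hasDerivAt_A hs ψ x)
      intro x hx
      have h1 : 0 ≤ Real.sin (ψ - x) := by
        apply Real.sin_nonneg_of_nonneg_of_le_pi
        · linarith [hx.2]
        · linarith [hx.1, Real.pi_pos]
      have h2 : Real.sin (x - ψ) = -Real.sin (ψ - x) := by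
        rw [← Real.sin_neg]; ring_nf
      have := mul_nonneg (le_of_lt (hconv x)) h1
      have h3 : rad s x * Real.sin (x - ψ) = -(rad s x * Real.sin (ψ - x)) := by
        rw [h2]; ring
      rw [h3]
      linarith
    intro φ hφ
    have := hmono hφ (Set.right_mem_Icc.2 (by linarith)) hφ.2
    rw [A_at hcrit] at this
    exact this
  -- tangent line bounds
  have hLr : ∀ φ ∈ Set.Icc ψ (ψ + β),
      A s ψ φ + Real.tan β * B s ψ φ
        ≤ A s ψ (ψ + β) + Real.tan β * B s ψ (ψ + β) := by
    have hmono : MonotoneOn (fun φ => A s ψ φ + Real.tan β * B s ψ φ)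
        (Set.Icc ψ (ψ + β)) := by
      apply monoOn_of_hasDerivAt (f' := fun φ =>
        -(rad s φ * Real.sin (φ - ψ)) + Real.tan β * (rad s φ * Real.cos (φ - ψ)))
        (fun x => (hasDerivAt_A hs ψ x).add ((hasDerivAt_B hs ψ x).const_mul (Real.tan β)))
      intro x hx
      have hsb : 0 ≤ Real.sin (β - (x - ψ)) := by
        apply Real.sin_nonneg_of_nonneg_of_le_pi
        · linarith [hx.2]
        · linarith [hx.1, Real.pi_pos]
      rw [Real.sin_sub] at hsb
      have hkey : 0 ≤ Real.tan β * Real.cos (x - ψ) - Real.sin (x - ψ) := by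
        rw [hτeq]
        have h5 : Real.sin β / Real.cos β * Real.cos (x - ψ) - Real.sin (x - ψ)
            = (Real.sin β * Real.cos (x - ψ) - Real.cos β * Real.sin (x - ψ)) / Real.cos β := by
          field_simp
        rw [h5]
        exact div_nonneg hsb (le_of_lt hcβ)
      nlinarith [hconv x]
    intro φ hφ
    exact hmono hφ (Set.right_mem_Icc.2 (by linarith)) hφ.2
  have hLl : ∀ φ ∈ Set.Icc (ψ - β) ψ,
      A s ψ φ - Real.tan β * B s ψ φ
        ≤ A s ψ (ψ - β) - Real.tan β * B s ψ (ψ - β) := by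
    have hanti : AntitoneOn (fun φ => A s ψ φ - Real.tan β * B s ψ φ)
        (Set.Icc (ψ - β) ψ) := by
      apply antiOn_of_hasDerivAt (f' := fun φ =>
        -(rad s φ * Real.sin (φ - ψ)) - Real.tan β * (rad s φ * Real.cos (φ - ψ)))
        (fun x => (hasDerivAt_A hs ψ x).sub ((hasDerivAt_B hs ψ x).const_mul (Real.tan β)))
      intro x hx
      have hsb : 0 ≤ Real.sin (β + (x - ψ)) := by
        apply Real.sin_nonneg_of_nonneg_of_le_pi
        · linarith [hx.1]
        · linarith [hx.2, Real.pi_pos]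
      rw [Real.sin_add] at hsb
      have hkey : 0 ≤ Real.sin (x - ψ) + Real.tan β * Real.cos (x - ψ) := by
        rw [hτeq]
        have h5 : Real.sin (x - ψ) + Real.sin β / Real.cos β * Real.cos (x - ψ)
            = (Real.sin β * Real.cos (x - ψ) + Real.cos β * Real.sin (x - ψ)) / Real.cos β := by
          field_simp; ring
        rw [h5]
        exact div_nonneg hsb (le_of_lt hcβ)
      nlinarith [hconv x]
    intro φ hφ
    exact hanti (Set.left_mem_Icc.2 (by linarith)) hφ hφ.1
  -- the two half bounds
  have hR := half_right hs hconv hβ1 hβ2 hcrit hAr hLr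
  have hL := half_left hs hconv hβ1 hβ2 hcrit hAl hLl
  -- total integral identity
  have hcontAB : Continuous fun φ => A s ψ φ * (rad s φ * Real.cos (φ - ψ)) :=
    (contA hs ψ).mul ((hrcont hs).mul (by fun_prop))
  have hcontBA : Continuous fun φ => B s ψ φ * (-(rad s φ * Real.sin (φ - ψ))) :=
    (contB hs ψ).mul (((hrcont hs).mul (by fun_prop)).neg)
  have hprod : ∫ φ in (ψ - β)..(ψ + β),
      (A s ψ φ * (rad s φ * Real.cos (φ - ψ)) + B s ψ φ * (-(rad s φ * Real.sin (φ - ψ))))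
      = A s ψ (ψ + β) * B s ψ (ψ + β) - A s ψ (ψ - β) * B s ψ (ψ - β) := by
    apply intervalIntegral.integral_eq_sub_of_hasDerivAt
      (f := fun φ => A s ψ φ * B s ψ φ)
    · intro φ _
      have := (hasDerivAt_A hs ψ φ).mul (hasDerivAt_B hs ψ φ)
      convert this using 1
      · rfl
      · rfl
      · ring
    · exact (hcontAB.add hcontBA).intervalIntegrable _ _
  have hsr : ∫ φ in (ψ - β)..(ψ + β), s φ * rad s φ
      = 2 * (∫ φ in (ψ - β)..(ψ + β), A s ψ φ * (rad s φ * Real.cos (φ - ψ)))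
        - (A s ψ (ψ + β) * B s ψ (ψ + β) - A s ψ (ψ - β) * B s ψ (ψ - β)) := by
    rw [← hprod]
    have h1 : ∫ φ in (ψ - β)..(ψ + β), s φ * rad s φ
        = ∫ φ in (ψ - β)..(ψ + β),
          (2 * (A s ψ φ * (rad s φ * Real.cos (φ - ψ)))
            - (A s ψ φ * (rad s φ * Real.cos (φ - ψ))
              + B s ψ φ * (-(rad s φ * Real.sin (φ - ψ))))) := by
      apply intervalIntegral.integral_congr
      intro φ _
      exact sr_eq s ψ φ
    rw [h1, intervalIntegral.integral_sub
      (f := fun φ => 2 * (A s ψ φ * (rad s φ * Real.cos (φ - ψ))))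
      (g := fun φ => A s ψ φ * (rad s φ * Real.cos (φ - ψ)) + B s ψ φ * (-(rad s φ * Real.sin (φ - ψ))))
      ((continuous_const.mul hcontAB).intervalIntegrable _ _)
      ((hcontAB.add hcontBA).intervalIntegrable _ _),
      intervalIntegral.integral_const_mul]
  have hsplitAB : ∫ φ in (ψ - β)..(ψ + β), A s ψ φ * (rad s φ * Real.cos (φ - ψ))
      = (∫ φ in (ψ - β)..ψ, A s ψ φ * (rad s φ * Real.cos (φ - ψ)))
        + ∫ φ in ψ..(ψ + β), A s ψ φ * (rad s φ * Real.cos (φ - ψ)) :=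
    (intervalIntegral.integral_add_adjacent_intervals
      (hcontAB.intervalIntegrable _ _) (hcontAB.intervalIntegrable _ _)).symm
  rw [hsr, hsplitAB, hGp, hGm, hFp, hFm]
  rw [hGp, hFp, hτeq] at hR
  rw [hGm, hFm, hτeq] at hL
  rw [hτeq]
  have hpy : Real.sin β ^ 2 + Real.cos β ^ 2 = 1 := Real.sin_sq_add_cos_sq β
  have := final_algebra (s ψ) (s (ψ + β)) (deriv s (ψ + β)) (Real.sin β) (Real.cos β)
    hsn hcβ hpy
  linarith

end SFB

open SFB in
set_option maxHeartbeats 1000000 in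
/-- Let `k ≥ 2` and let `s` be a smooth, `π/k`-periodic support
function with positive radius of curvature whose curve encloses area `π`. With
`c_k = (2k/π) tan(π/(2k))`, one has `1/(π√(c_k)) < s(θ) ≤ (π/2)√(c_k)` for all `θ`;
in particular `s` has uniform bounds depending only on `k`. -/
theorem support_function_bounds_of_symmetry
    (k : ℕ) (hk : 2 ≤ k) (s : ℝ → ℝ) (hsmooth : ContDiff ℝ (⊤ : ℕ∞) s)
    (hper : Function.Periodic s (π / k))
    (hconv : ∀ θ, 0 < rad s θ)
    (harea : (1 / 2) * ∫ θ in (0:ℝ)..(2 * π), s θ * rad s θ = π)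
    (ck : ℝ) (hck : ck = (2 * k / π) * Real.tan (π / (2 * k))) :
    ∀ θ : ℝ, 1 / (π * Real.sqrt ck) < s θ ∧ s θ ≤ (π / 2) * Real.sqrt ck := by
  intro θ
  have hπ := Real.pi_pos
  have hπ1 : (1:ℝ) < π := by linarith [Real.pi_gt_three]
  have hkR : (2:ℝ) ≤ (k:ℝ) := by exact_mod_cast hk
  have hk0 : (0:ℝ) < (k:ℝ) := by linarith
  set T := π / (k:ℝ) with hTdef
  set β := π / (2 * (k:ℝ)) with hβdef
  have hT : 0 < T := div_pos hπ hk0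
  have hβ1 : 0 < β := div_pos hπ (by linarith)
  have hβ2 : β ≤ π / 4 := by
    rw [hβdef]
    apply div_le_div_of_nonneg_left (le_of_lt hπ) (by norm_num) (by linarith)
  have hTβ : T = 2 * β := by
    rw [hTdef, hβdef]
    field_simp
    try ring
  have hT2 : T ≤ π / 2 := by rw [hTβ]; linarith
  have hper2β : Function.Periodic s (2 * β) := by rw [← hTβ]; exact hper
  -- positivity of s
  have hperπ : Function.Periodic s π := by
    have h := hper.nat_mul k
    have e : (k:ℝ) * (π / k) = π := by field_simp
    rwa [e] at h
  have hpos : ∀ x, 0 < s x := s_pos hsmooth hconv hperπ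
  -- trig facts
  have hcβ : 0 < Real.cos β := Real.cos_pos_of_mem_Ioo ⟨by linarith, by linarith⟩
  have hsn : 0 < Real.sin β := Real.sin_pos_of_pos_of_lt_pi hβ1 (by linarith)
  have hτ : 0 < Real.tan β := Real.tan_pos_of_pos_of_lt_pi_div_two hβ1 (by linarith)
  have htaneq : Real.tan β = Real.sin β / Real.cos β := Real.tan_eq_sin_div_cos β
  have hcne : Real.cos β ≠ 0 := ne_of_gt hcβ
  have hck0 : 0 < ck := by
    rw [hck]
    have h1 : 0 < 2 * (k:ℝ) / π := by positivity
    exact mul_pos h1 hτ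
  have hsck : 0 < Real.sqrt ck := Real.sqrt_pos.2 hck0
  -- integral over the full circle equals 2k times any sector of length T
  have hcont : Continuous fun x => s x * rad s x := (hs1 hsmooth).continuous.mul (hrcont hsmooth)
  have hperf : Function.Periodic (fun x => s x * rad s x) T := by
    intro x
    simp only [hper x, (periodic_rad hsmooth hper) x]
  have hfull : ∀ c, ∫ x in (0:ℝ)..(2 * π), s x * rad s x
      = (2 * (k:ℝ)) * ∫ x in c..(c + T), s x * rad s x := by
    intro c
    have h := periodic_int hcont hperf (2 * k) c
    have e : ((2 * k : ℕ) : ℝ) * T = 2 * π := by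
      push_cast
      rw [hTdef]
      field_simp
      try ring
    have e2 : ((2 * k : ℕ) : ℝ) = 2 * (k:ℝ) := by push_cast; ring
    rw [e, e2] at h
    exact h
  have harea2 : ∫ x in (0:ℝ)..(2 * π), s x * rad s x = 2 * π := by linarith
  -- tan β identity with ck
  have hcktan : 2 * (k:ℝ) * Real.tan β = ck * π := by
    rw [hck]
    field_simp
    try ring
  constructor
  · -- lower bound via the minimum
    obtain ⟨ψ, hcrit, hmin⟩ := exists_min hsmooth hT hper
    have hup := sector_upper hsmooth hconv hβ1 hβ2 hper2β hcrit
    have hsect := hfull (ψ - β)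
    have e : ψ - β + T = ψ + β := by rw [hTβ]; ring
    rw [e, harea2] at hsect
    have h2 : 2 * π ≤ 2 * (k:ℝ) * (2 * s ψ ^ 2 * Real.tan β) := by
      have := mul_le_mul_of_nonneg_left hup (by linarith : (0:ℝ) ≤ 2 * (k:ℝ))
      linarith
    have h4 : 2 * (k:ℝ) * (2 * s ψ ^ 2 * Real.tan β) = (ck * s ψ ^ 2) * (2 * π) := by
      linear_combination (2 * s ψ ^ 2) * hcktan
    have h5 : (1:ℝ) * (2 * π) ≤ (ck * s ψ ^ 2) * (2 * π) := by
      rw [← h4]; linarith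
    have h3 : 1 ≤ ck * s ψ ^ 2 := le_of_mul_le_mul_right h5 (by linarith)
    have hm2 : 1 / ck ≤ s ψ ^ 2 := by
      rw [div_le_iff₀ hck0]
      linarith
    have hms : 1 / Real.sqrt ck ≤ s ψ := by
      have h5' : Real.sqrt (1 / ck) ≤ Real.sqrt (s ψ ^ 2) := Real.sqrt_le_sqrt hm2
      rw [Real.sqrt_sq (le_of_lt (hpos ψ))] at h5'
      rw [one_div, Real.sqrt_inv, ← one_div] at h5'
      exact h5'
    have h6 : 1 / (π * Real.sqrt ck) < 1 / Real.sqrt ck := by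
      apply div_lt_div_of_pos_left one_pos hsck
      nlinarith
    calc 1 / (π * Real.sqrt ck) < 1 / Real.sqrt ck := h6
      _ ≤ s ψ := hms
      _ ≤ s θ := hmin θ
  · -- upper bound via the maximum
    obtain ⟨ψ, hcrit, hmax⟩ := exists_max hsmooth hT hper
    have hlow := sector_lower hsmooth hconv hT hT2 hper hcrit
    have hsect := hfull ψ
    rw [harea2] at hsect
    have h2 : 2 * (k:ℝ) * (s ψ ^ 2 * Real.sin T) ≤ 2 * π := by
      have := mul_le_mul_of_nonneg_left hlow (by linarith : (0:ℝ) ≤ 2 * (k:ℝ))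
      linarith
    have hsinT : Real.sin T = 2 * Real.sin β * Real.cos β := by
      rw [hTβ, Real.sin_two_mul]
      try ring
    -- Jordan: k sin β ≥ 1
    have hjordan : 1 ≤ (k:ℝ) * Real.sin β := by
      have hj := Real.mul_le_sin (x := β) (le_of_lt hβ1) (by linarith)
      have e : 2 / π * β = 1 / (k:ℝ) := by
        rw [hβdef]
        field_simp
      rw [e, div_le_iff₀ hk0] at hj
      linarith [hj, mul_comm (Real.sin β) (k:ℝ)]
    -- M² ≤ (π/2)² ck
    have hckcβ : ck * π * Real.cos β = 2 * (k:ℝ) * Real.sin β := by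
      rw [← hcktan, htaneq, mul_assoc, div_mul_cancel₀ _ hcne]
    have hQ : 0 < (k:ℝ) * (2 * Real.sin β * Real.cos β) := by positivity
    have h3 : s ψ ^ 2 * ((k:ℝ) * (2 * Real.sin β * Real.cos β)) ≤ π := by
      rw [hsinT] at h2
      nlinarith [h2]
    have hrhs : (π / 2) ^ 2 * ck * ((k:ℝ) * (2 * Real.sin β * Real.cos β))
        = π * ((k:ℝ) * Real.sin β) ^ 2 := by
      linear_combination (π * (k:ℝ) * Real.sin β / 2) * hckcβ
    have hπle : π ≤ (π / 2) ^ 2 * ck * ((k:ℝ) * (2 * Real.sin β * Real.cos β)) := by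
      have h7 : (1:ℝ) * 1 ≤ ((k:ℝ) * Real.sin β) * ((k:ℝ) * Real.sin β) :=
        mul_le_mul hjordan hjordan (by norm_num) (by positivity)
      have h8 : (1:ℝ) ≤ ((k:ℝ) * Real.sin β) ^ 2 := by rw [sq]; linarith
      rw [hrhs]
      exact le_mul_of_one_le_right (le_of_lt hπ) h8
    have h6 : s ψ ^ 2 * ((k:ℝ) * (2 * Real.sin β * Real.cos β))
        ≤ ((π / 2) ^ 2 * ck) * ((k:ℝ) * (2 * Real.sin β * Real.cos β)) := le_trans h3 hπle
    have hM2 : s ψ ^ 2 ≤ (π / 2) ^ 2 * ck := le_of_mul_le_mul_right h6 hQ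
    have hfin : s ψ ≤ (π / 2) * Real.sqrt ck := by
      have h9 : s ψ ^ 2 ≤ ((π / 2) * Real.sqrt ck) ^ 2 := by
        rw [mul_pow, Real.sq_sqrt (le_of_lt hck0)]
        exact hM2
      have h10 : 0 ≤ (π / 2) * Real.sqrt ck := by positivity
      nlinarith [h9, h10, hpos ψ]
    exact le_trans (hmax θ) hfin

end
end

section
/- Let k ≥ 2 be an integer, n ≥ 1 an integer, and let s: ℝ → ℝ be a smooth, π/k-periodic function with s''(θ) + s(θ) > 0 for all θ. Then |∫₀^{2π} s(θ)·cos(2nkθ) dθ| ≤ (1/(4n²k² − 1))·∫₀^{2π} s(θ) dθ. (Equivalently, the Fourier cosine coefficients s_n of s satisfy |s_n| ≤ 2s₀/(4n²k² − 1), where s₀ is the mean of s.) -/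
open Real Set Filter MeasureTheory

noncomputable section

/-- Let `k ≥ 2`, `n ≥ 1`, and let `s` be a smooth, `π/k`-periodic
function with `s'' + s > 0`. Then its Fourier cosine coefficients satisfy
`|∫₀^{2π} s(θ) cos(2nkθ) dθ| ≤ (1/(4n²k² - 1)) ∫₀^{2π} s(θ) dθ`. -/
theorem fourier_coefficient_bound
    (k : ℕ) (hk : 2 ≤ k) (n : ℕ) (hn : 1 ≤ n)
    (s : ℝ → ℝ) (hsmooth : ContDiff ℝ (⊤ : ℕ∞) s)
    (hper : Function.Periodic s (π / k))
    (hconv : ∀ θ, 0 < rad s θ) :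
    |∫ θ in (0:ℝ)..(2 * π), s θ * Real.cos (2 * n * k * θ)| ≤
      (1 / (4 * (n:ℝ)^2 * (k:ℝ)^2 - 1)) * ∫ θ in (0:ℝ)..(2 * π), s θ := by
  have hk0 : (k:ℝ) ≠ 0 := by positivity
  -- basic smoothness facts
  have hs_inf := hsmooth
  have hd1 := (contDiff_infty_iff_deriv.mp hs_inf).2
  have hd2 := (contDiff_infty_iff_deriv.mp hd1).2
  have hds : ∀ x, HasDerivAt s (deriv s x) x := fun x =>
    (hs_inf.differentiable (by simp)).differentiableAt.hasDerivAt
  have hds' : ∀ x, HasDerivAt (deriv s) (deriv (deriv s) x) x := fun x =>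
    (hd1.differentiable (by simp)).differentiableAt.hasDerivAt
  have hcont_s : Continuous s := hs_inf.continuous
  have hcont1 : Continuous (deriv s) := hd1.continuous
  have hcont2 : Continuous (deriv (deriv s)) := hd2.continuous
  -- periodicity with period 2π
  have hper2 : Function.Periodic s (2 * π) := by
    have := hper.nat_mul (2 * k)
    have h2k : ((2 * k : ℕ) : ℝ) * (π / k) = 2 * π := by
      push_cast; field_simp
    rwa [h2k] at this
  have hper1' : Function.Periodic (deriv s) (2 * π) := periodic_deriv' hper2
  set M : ℝ := 2 * n * k with hM
  have hM_nat : M = ((2 * n * k : ℕ) : ℝ) := by push_cast [hM]; ring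
  have hM4 : (4:ℝ) ≤ M := by
    rw [hM]
    have : (1:ℝ) ≤ (n:ℝ) := by exact_mod_cast hn
    have h2 : (2:ℝ) ≤ (k:ℝ) := by exact_mod_cast hk
    nlinarith
  have hM2 : (1:ℝ) < M ^ 2 := by nlinarith
  -- trig values at 2π
  have hcos2π : Real.cos (M * (2 * π)) = 1 := by
    rw [hM_nat]; exact Real.cos_nat_mul_two_pi _
  have hsin2π : Real.sin (M * (2 * π)) = 0 := by
    have h : M * (2 * π) = ((2 * (2 * n * k) : ℕ) : ℝ) * π := by push_cast [hM]; ring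
    rw [h]; exact Real.sin_nat_mul_pi _
  -- antiderivative g for ∫ (s'' + M² s) cos(Mθ)
  set g : ℝ → ℝ := fun θ => deriv s θ * Real.cos (M * θ) + M * s θ * Real.sin (M * θ) with hg
  have hg' : ∀ θ, HasDerivAt g ((deriv (deriv s) θ + M ^ 2 * s θ) * Real.cos (M * θ)) θ := by
    intro θ
    have hcos : HasDerivAt (fun θ : ℝ => Real.cos (M * θ)) (-Real.sin (M * θ) * M) θ := by
      simpa using ((hasDerivAt_id θ).const_mul M).cos
    have hsin : HasDerivAt (fun θ : ℝ => Real.sin (M * θ)) (Real.cos (M * θ) * M) θ := by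
      simpa using ((hasDerivAt_id θ).const_mul M).sin
    have h1 := (hds' θ).mul hcos
    have h2 := (((hds θ).const_mul M).mul hsin)
    convert h1.add h2 using 1
    · rfl
    · rfl
    · rfl
    · ring
  have hint_cont : Continuous (fun θ => (deriv (deriv s) θ + M ^ 2 * s θ) * Real.cos (M * θ)) := by
    fun_prop
  have key1 : ∫ θ in (0:ℝ)..(2 * π),
      (deriv (deriv s) θ + M ^ 2 * s θ) * Real.cos (M * θ) = 0 := by
    rw [intervalIntegral.integral_eq_sub_of_hasDerivAt (fun x _ => hg' x)
      (hint_cont.intervalIntegrable _ _)]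
    have e1 : s (2 * π) = s 0 := by simpa using hper2 0
    have e2 : deriv s (2 * π) = deriv s 0 := by simpa using hper1' 0
    simp [hg, hcos2π, hsin2π, e1, e2]
  -- integrability facts
  have int_s : IntervalIntegrable s volume 0 (2 * π) := hcont_s.intervalIntegrable _ _
  have int_s2 : IntervalIntegrable (deriv (deriv s)) volume 0 (2 * π) :=
    hcont2.intervalIntegrable _ _
  have int_scos : IntervalIntegrable (fun θ => s θ * Real.cos (M * θ)) volume 0 (2 * π) :=
    (hcont_s.mul (by fun_prop)).intervalIntegrable _ _
  have int_s2cos : IntervalIntegrable (fun θ => deriv (deriv s) θ * Real.cos (M * θ))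
      volume 0 (2 * π) := (hcont2.mul (by fun_prop)).intervalIntegrable _ _
  -- split key1
  have key1' : (∫ θ in (0:ℝ)..(2 * π), deriv (deriv s) θ * Real.cos (M * θ))
      = -(M ^ 2) * ∫ θ in (0:ℝ)..(2 * π), s θ * Real.cos (M * θ) := by
    have int_c : IntervalIntegrable (fun θ => M ^ 2 * (s θ * Real.cos (M * θ)))
        volume 0 (2 * π) := int_scos.const_mul _
    have hsplit : ∫ θ in (0:ℝ)..(2 * π),
        (deriv (deriv s) θ + M ^ 2 * s θ) * Real.cos (M * θ)
        = (∫ θ in (0:ℝ)..(2 * π), deriv (deriv s) θ * Real.cos (M * θ))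
          + M ^ 2 * ∫ θ in (0:ℝ)..(2 * π), s θ * Real.cos (M * θ) := by
      have he : (fun θ => (deriv (deriv s) θ + M ^ 2 * s θ) * Real.cos (M * θ))
          = fun θ => deriv (deriv s) θ * Real.cos (M * θ)
            + M ^ 2 * (s θ * Real.cos (M * θ)) := by ext θ; ring
      rw [he, intervalIntegral.integral_add int_s2cos int_c,
        intervalIntegral.integral_const_mul]
    linarith [hsplit ▸ key1]
  -- ∫ rad s · cos = (1 - M²) ∫ s cos
  have hrad_eq : ∀ θ, rad s θ = deriv (deriv s) θ + s θ := by
    intro θ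
    unfold rad
    rw [iteratedDeriv_succ, iteratedDeriv_one]
  have key2 : (∫ θ in (0:ℝ)..(2 * π), rad s θ * Real.cos (M * θ))
      = (1 - M ^ 2) * ∫ θ in (0:ℝ)..(2 * π), s θ * Real.cos (M * θ) := by
    have : (∫ θ in (0:ℝ)..(2 * π), rad s θ * Real.cos (M * θ))
        = (∫ θ in (0:ℝ)..(2 * π), deriv (deriv s) θ * Real.cos (M * θ))
          + ∫ θ in (0:ℝ)..(2 * π), s θ * Real.cos (M * θ) := by
      rw [← intervalIntegral.integral_add int_s2cos int_scos]
      congr 1; ext θ; rw [hrad_eq θ]; ring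
    rw [this, key1']; ring
  -- ∫ rad s = ∫ s
  have key3 : (∫ θ in (0:ℝ)..(2 * π), rad s θ) = ∫ θ in (0:ℝ)..(2 * π), s θ := by
    have : (∫ θ in (0:ℝ)..(2 * π), rad s θ)
        = (∫ θ in (0:ℝ)..(2 * π), deriv (deriv s) θ) + ∫ θ in (0:ℝ)..(2 * π), s θ := by
      rw [← intervalIntegral.integral_add int_s2 int_s]
      congr 1; ext θ; rw [hrad_eq θ]
    rw [this, intervalIntegral.integral_deriv_eq_sub (fun x _ =>
      (hd1.differentiable (by simp)).differentiableAt)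
      (hcont2.intervalIntegrable _ _)]
    have e2 : deriv s (2 * π) = deriv s 0 := by simpa using hper1' 0
    rw [e2]; ring
  -- |∫ rad cos| ≤ ∫ rad
  have hpos2π : (0:ℝ) ≤ 2 * π := by positivity
  have hbound : |∫ θ in (0:ℝ)..(2 * π), rad s θ * Real.cos (M * θ)|
      ≤ ∫ θ in (0:ℝ)..(2 * π), rad s θ := by
    have int_radcos : IntervalIntegrable (fun θ => rad s θ * Real.cos (M * θ))
        volume 0 (2 * π) := by
      apply Continuous.intervalIntegrable
      have : Continuous (rad s) := by
        simp only [funext hrad_eq]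
        exact hcont2.add hcont_s
      fun_prop
    calc |∫ θ in (0:ℝ)..(2 * π), rad s θ * Real.cos (M * θ)|
        ≤ ∫ θ in (0:ℝ)..(2 * π), |rad s θ * Real.cos (M * θ)| :=
          intervalIntegral.abs_integral_le_integral_abs hpos2π
      _ ≤ ∫ θ in (0:ℝ)..(2 * π), rad s θ := by
          apply intervalIntegral.integral_mono_on hpos2π int_radcos.abs
          · apply Continuous.intervalIntegrable
            simp only [funext hrad_eq]; exact hcont2.add hcont_s
          · intro x _
            rw [abs_mul]
            calc |rad s x| * |Real.cos (M * x)| ≤ |rad s x| * 1 :=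
                  mul_le_mul_of_nonneg_left (Real.abs_cos_le_one _) (abs_nonneg _)
              _ = rad s x := by rw [mul_one, abs_of_pos (hconv x)]
    -- done
  -- conclude
  rw [key3] at hbound
  rw [key2] at hbound
  rw [abs_mul, abs_of_nonpos (by nlinarith : 1 - M ^ 2 ≤ 0)] at hbound
  have hMeq : 4 * (n:ℝ)^2 * (k:ℝ)^2 = M ^ 2 := by rw [hM]; ring
  have hcosrw : (∫ θ in (0:ℝ)..(2 * π), s θ * Real.cos (2 * n * k * θ))
      = ∫ θ in (0:ℝ)..(2 * π), s θ * Real.cos (M * θ) := by rw [hM]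
  rw [hcosrw, hMeq]
  rw [div_mul_eq_mul_div, one_mul, le_div_iff₀ (by linarith)]
  calc |∫ θ in (0:ℝ)..(2 * π), s θ * Real.cos (M * θ)| * (M ^ 2 - 1)
      = -(1 - M ^ 2) * |∫ θ in (0:ℝ)..(2 * π), s θ * Real.cos (M * θ)| := by ring
    _ ≤ ∫ θ in (0:ℝ)..(2 * π), s θ := hbound

end
end

section
/- Let k ≥ 2 be an integer and let s: ℝ → ℝ be a smooth, π/k-periodic function with 𝔯(θ) := s''(θ) + s(θ) > 0 for all θ and enclosed area (1/2)∫₀^{2π} s(θ)·𝔯(θ) dθ = π. Then the mean value of s satisfies (1/(2π))∫₀^{2π} s(θ) dθ ≤ √(c_k), where c_k := (2k/π)·tan(π/(2k)). -/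
open Real Set Filter MeasureTheory

noncomputable section

lemma rad_eq (s : ℝ → ℝ) (θ : ℝ) : rad s θ = deriv (deriv s) θ + s θ := by
  simp [rad, iteratedDeriv_succ, iteratedDeriv_one]

/-- Key wedge estimate: the total integral of `s` is controlled by each single value. -/
lemma wedge_bound (k : ℕ) (hk : 2 ≤ k) (s : ℝ → ℝ) (hsmooth : ContDiff ℝ (⊤ : ℕ∞) s)
    (hper : Function.Periodic s (π / k))
    (hconv : ∀ θ, 0 < rad s θ) (θ₀ : ℝ) :
    (∫ θ in (0:ℝ)..(2 * π), s θ) ≤ 4 * k * Real.tan (π / (2 * k)) * s θ₀ := by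
  have hk2 : (2:ℝ) ≤ (k:ℝ) := by exact_mod_cast hk
  have hkpos : (0:ℝ) < k := by linarith
  have hπ := Real.pi_pos
  -- differentiability package
  have hsm := hsmooth
  rw [contDiff_infty_iff_deriv] at hsm
  obtain ⟨hd1, hsm2⟩ := hsm
  rw [contDiff_infty_iff_deriv] at hsm2
  obtain ⟨hd2, hsm3⟩ := hsm2
  have hconts : Continuous s := hd1.continuous
  have hcont1 : Continuous (deriv s) := hd2.continuous
  have hcont2 : Continuous (deriv (deriv s)) := hsm3.continuous
  set δ : ℝ := π / k with hδdef
  have hδpos : 0 < δ := by positivity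
  have hδlt : δ < π := by
    rw [hδdef, div_lt_iff₀ hkpos]; nlinarith
  set θ₁ : ℝ := θ₀ + δ with hθ₁
  -- the two barrier functions
  set F : ℝ → ℝ := fun θ => s θ * Real.cos (θ - θ₀) - deriv s θ * Real.sin (θ - θ₀) with hF
  set G : ℝ → ℝ := fun θ => s θ * Real.cos (θ - θ₁) - deriv s θ * Real.sin (θ - θ₁) with hG
  have hFd : ∀ x, HasDerivAt F (-(rad s x * Real.sin (x - θ₀))) x := by
    intro x
    have hid : HasDerivAt (fun θ : ℝ => θ - θ₀) 1 x := (hasDerivAt_id x).sub_const θ₀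
    have hcos : HasDerivAt (fun θ : ℝ => Real.cos (θ - θ₀)) (-Real.sin (x - θ₀)) x := by
      simpa [Function.comp_def] using (Real.hasDerivAt_cos (x - θ₀)).comp x hid
    have hsin : HasDerivAt (fun θ : ℝ => Real.sin (θ - θ₀)) (Real.cos (x - θ₀)) x := by
      simpa [Function.comp_def] using (Real.hasDerivAt_sin (x - θ₀)).comp x hid
    have h1 : HasDerivAt s (deriv s x) x := (hd1 x).hasDerivAt
    have h2 : HasDerivAt (deriv s) (deriv (deriv s) x) x := (hd2 x).hasDerivAt
    have := (h1.mul hcos).sub (h2.mul hsin)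
    refine this.congr_deriv ?_
    rw [rad_eq]
    ring
  have hGd : ∀ x, HasDerivAt G (-(rad s x * Real.sin (x - θ₁))) x := by
    intro x
    have hid : HasDerivAt (fun θ : ℝ => θ - θ₁) 1 x := (hasDerivAt_id x).sub_const θ₁
    have hcos : HasDerivAt (fun θ : ℝ => Real.cos (θ - θ₁)) (-Real.sin (x - θ₁)) x := by
      simpa [Function.comp_def] using (Real.hasDerivAt_cos (x - θ₁)).comp x hid
    have hsin : HasDerivAt (fun θ : ℝ => Real.sin (θ - θ₁)) (Real.cos (x - θ₁)) x := by
      simpa [Function.comp_def] using (Real.hasDerivAt_sin (x - θ₁)).comp x hid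
    have h1 : HasDerivAt s (deriv s x) x := (hd1 x).hasDerivAt
    have h2 : HasDerivAt (deriv s) (deriv (deriv s) x) x := (hd2 x).hasDerivAt
    have := (h1.mul hcos).sub (h2.mul hsin)
    refine this.congr_deriv ?_
    rw [rad_eq]
    ring
  have hFc : Continuous F :=
    (hconts.mul (Real.continuous_cos.comp (continuous_id.sub continuous_const))).sub
      (hcont1.mul (Real.continuous_sin.comp (continuous_id.sub continuous_const)))
  have hGc : Continuous G :=
    (hconts.mul (Real.continuous_cos.comp (continuous_id.sub continuous_const))).sub
      (hcont1.mul (Real.continuous_sin.comp (continuous_id.sub continuous_const)))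
  -- F is antitone on [θ₀, θ₁]
  have hFanti : AntitoneOn F (Icc θ₀ θ₁) := by
    apply antitoneOn_of_deriv_nonpos (convex_Icc θ₀ θ₁) hFc.continuousOn
    · intro x hx
      exact (hFd x).differentiableAt.differentiableWithinAt
    · intro x hx
      rw [interior_Icc] at hx
      rw [(hFd x).deriv]
      have hsin : 0 ≤ Real.sin (x - θ₀) := by
        apply Real.sin_nonneg_of_nonneg_of_le_pi
        · linarith [hx.1]
        · have : x - θ₀ ≤ δ := by simp only [hθ₁] at hx; linarith [hx.2]
          linarith
      have := (hconv x).le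
      simp only [neg_nonpos]
      positivity
  have hGmono : MonotoneOn G (Icc θ₀ θ₁) := by
    apply monotoneOn_of_deriv_nonneg (convex_Icc θ₀ θ₁) hGc.continuousOn
    · intro x hx
      exact (hGd x).differentiableAt.differentiableWithinAt
    · intro x hx
      rw [interior_Icc] at hx
      rw [(hGd x).deriv]
      have hsin : Real.sin (x - θ₁) ≤ 0 := by
        apply Real.sin_nonpos_of_nonpos_of_neg_pi_le
        · linarith [hx.2]
        · have : θ₁ - x ≤ δ := by simp only [hθ₁]; linarith [hx.1]
          linarith
      nlinarith [(hconv x)]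
  have hFval : F θ₀ = s θ₀ := by simp [hF]
  have hGval : G θ₁ = s θ₀ := by
    have := hper θ₀
    simp only [hG, sub_self, Real.cos_zero, Real.sin_zero, mul_one, mul_zero, sub_zero]
    rw [hθ₁, hδdef]
    exact this
  -- pointwise wedge bound
  have hwedge : ∀ θ ∈ Icc θ₀ θ₁,
      s θ * Real.sin δ ≤ s θ₀ * (Real.sin (θ - θ₀) + Real.sin (θ₁ - θ)) := by
    intro θ hθ
    have hFθ : F θ ≤ s θ₀ := hFval ▸ hFanti (left_mem_Icc.mpr (by linarith [hδpos])) hθ hθ.1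
    have hGθ : G θ ≤ s θ₀ := hGval ▸ hGmono hθ (right_mem_Icc.mpr (by linarith [hδpos])) hθ.2
    have ha : 0 ≤ Real.sin (θ - θ₀) := by
      apply Real.sin_nonneg_of_nonneg_of_le_pi
      · linarith [hθ.1]
      · have h2 := hθ.2
        rw [hθ₁] at h2
        linarith
    have hb : 0 ≤ Real.sin (θ₁ - θ) := by
      apply Real.sin_nonneg_of_nonneg_of_le_pi
      · linarith [hθ.2]
      · have : θ₁ - θ ≤ δ := by simp only [hθ₁]; linarith [hθ.1]
        linarith
    have hkey : s θ * Real.sin δ = Real.sin (θ₁ - θ) * F θ + Real.sin (θ - θ₀) * G θ := by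
      have hδeq : δ = θ₁ - θ₀ := by rw [hθ₁]; ring
      rw [hδeq]
      simp only [hF, hG, Real.sin_sub, Real.cos_sub]
      linear_combination (-(s θ * (Real.sin θ₁ * Real.cos θ₀ - Real.cos θ₁ * Real.sin θ₀))) *
        (Real.sin_sq_add_cos_sq θ)
    rw [hkey]
    calc Real.sin (θ₁ - θ) * F θ + Real.sin (θ - θ₀) * G θ
        ≤ Real.sin (θ₁ - θ) * s θ₀ + Real.sin (θ - θ₀) * s θ₀ := by
          gcongr
      _ = s θ₀ * (Real.sin (θ - θ₀) + Real.sin (θ₁ - θ)) := by ring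
  -- integrate the wedge bound
  have hθ₀₁ : θ₀ ≤ θ₁ := by rw [hθ₁]; linarith
  have hint1 : IntervalIntegrable (fun θ => s θ * Real.sin δ) volume θ₀ θ₁ :=
    (hconts.mul continuous_const).intervalIntegrable _ _
  have hint2 : IntervalIntegrable
      (fun θ => s θ₀ * (Real.sin (θ - θ₀) + Real.sin (θ₁ - θ))) volume θ₀ θ₁ := by
    exact (continuous_const.mul
      ((Real.continuous_sin.comp (continuous_id.sub continuous_const)).add
        (Real.continuous_sin.comp (continuous_const.sub continuous_id)))).intervalIntegrable _ _
  have hImono := intervalIntegral.integral_mono_on hθ₀₁ hint1 hint2 hwedge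
  have hIL : ∫ θ in θ₀..θ₁, s θ * Real.sin δ = (∫ θ in θ₀..θ₁, s θ) * Real.sin δ :=
    intervalIntegral.integral_mul_const _ _
  have hIa : ∫ θ in θ₀..θ₁, Real.sin (θ - θ₀) = 1 - Real.cos δ := by
    rw [intervalIntegral.integral_comp_sub_right (fun x => Real.sin x) θ₀]
    simp [hθ₁, integral_sin]
  have hIb : ∫ θ in θ₀..θ₁, Real.sin (θ₁ - θ) = 1 - Real.cos δ := by
    rw [intervalIntegral.integral_comp_sub_left (fun x => Real.sin x) θ₁]
    simp [hθ₁, integral_sin]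
  have hIR : ∫ θ in θ₀..θ₁, s θ₀ * (Real.sin (θ - θ₀) + Real.sin (θ₁ - θ))
      = s θ₀ * (2 - 2 * Real.cos δ) := by
    have i1 : IntervalIntegrable (fun θ : ℝ => Real.sin (θ - θ₀)) volume θ₀ θ₁ :=
      Continuous.intervalIntegrable (by fun_prop) _ _
    have i2 : IntervalIntegrable (fun θ : ℝ => Real.sin (θ₁ - θ)) volume θ₀ θ₁ :=
      Continuous.intervalIntegrable (by fun_prop) _ _
    rw [intervalIntegral.integral_const_mul, intervalIntegral.integral_add i1 i2, hIa, hIb]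
    ring
  rw [hIL, hIR] at hImono
  -- relate total integral to wedge integral using periodicity
  have hii : ∀ a b : ℝ, IntervalIntegrable s volume a b :=
    fun a b => hconts.intervalIntegrable a b
  have h2k : (∫ x in (0:ℝ)..(0 + ((2 * k : ℕ) : ℤ) • δ), s x)
      = ((2 * k : ℕ) : ℤ) • ∫ x in (0:ℝ)..(0 + δ), s x := by
    exact hper.intervalIntegral_add_zsmul_eq _ 0 hii
  have hc1 : (0:ℝ) + ((2 * k : ℕ) : ℤ) • δ = 2 * π := by
    push_cast
    rw [hδdef]
    field_simp
    rw [zsmul_eq_mul]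
    push_cast
    field_simp
    ring
  have hshift : (∫ x in (0:ℝ)..(0 + δ), s x) = ∫ x in θ₀..θ₁, s x := by
    rw [hθ₁]
    exact hper.intervalIntegral_add_eq 0 θ₀
  have hL2k : (∫ θ in (0:ℝ)..(2 * π), s θ) = 2 * k * ∫ x in θ₀..θ₁, s x := by
    rw [← hc1, h2k, hshift, zsmul_eq_mul]
    push_cast
    ring
  -- trig identity: 1 - cos δ = tan (δ/2) * sin δ
  set a : ℝ := π / (2 * k) with hadef
  have hapos : 0 < a := by positivity
  have halt : a < π / 2 := by
    rw [hadef, div_lt_div_iff₀ (by positivity) (by norm_num)]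
    nlinarith
  have hca : 0 < Real.cos a := Real.cos_pos_of_mem_Ioo ⟨by linarith, halt⟩
  have hδa : δ = 2 * a := by rw [hδdef, hadef]; field_simp; try ring
  have htan : 1 - Real.cos δ = Real.tan a * Real.sin δ := by
    have h1 : Real.sin δ = 2 * Real.sin a * Real.cos a := by
      rw [hδa, Real.sin_two_mul]
    have h2 : Real.cos δ = 2 * Real.cos a ^ 2 - 1 := by rw [hδa, Real.cos_two_mul]
    have h3 : Real.tan a = Real.sin a / Real.cos a := Real.tan_eq_sin_div_cos a
    rw [h1, h2, h3]
    have h5 : Real.sin a / Real.cos a * (2 * Real.sin a * Real.cos a)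
        = 2 * Real.sin a ^ 2 := by
      field_simp
    rw [h5]
    linear_combination (-2 : ℝ) * Real.sin_sq_add_cos_sq a
  have hsinδ : 0 < Real.sin δ := Real.sin_pos_of_pos_of_lt_pi hδpos hδlt
  -- put it together
  have hfinal : (∫ θ in (0:ℝ)..(2 * π), s θ) * Real.sin δ
      ≤ (4 * k * Real.tan a * s θ₀) * Real.sin δ := by
    rw [hL2k]
    calc (2 * ↑k * ∫ x in θ₀..θ₁, s x) * Real.sin δ
        = 2 * k * ((∫ x in θ₀..θ₁, s x) * Real.sin δ) := by ring
      _ ≤ 2 * k * (s θ₀ * (2 - 2 * Real.cos δ)) := by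
          apply mul_le_mul_of_nonneg_left hImono (by positivity)
      _ = (4 * k * Real.tan a * s θ₀) * Real.sin δ := by
          rw [show s θ₀ * (2 - 2 * Real.cos δ) = 2 * s θ₀ * (1 - Real.cos δ) by ring, htan]
          ring
  exact le_of_mul_le_mul_right hfinal hsinδ

/-- Let `k ≥ 2` and let `s` be a smooth, `π/k`-periodic support
function with positive radius of curvature whose curve encloses area `π`. Then the
mean value of `s` satisfies `(1/(2π)) ∫₀^{2π} s ≤ √(c_k)`, where
`c_k = (2k/π) tan(π/(2k))`. -/
theorem mean_support_function_bound
    (k : ℕ) (hk : 2 ≤ k) (s : ℝ → ℝ) (hsmooth : ContDiff ℝ (⊤ : ℕ∞) s)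
    (hper : Function.Periodic s (π / k))
    (hconv : ∀ θ, 0 < rad s θ)
    (harea : (1 / 2) * ∫ θ in (0:ℝ)..(2 * π), s θ * rad s θ = π)
    (ck : ℝ) (hck : ck = (2 * k / π) * Real.tan (π / (2 * k))) :
    (1 / (2 * π)) * ∫ θ in (0:ℝ)..(2 * π), s θ ≤ Real.sqrt ck := by
  have hk2 : (2:ℝ) ≤ (k:ℝ) := by exact_mod_cast hk
  have hkpos : (0:ℝ) < k := by linarith
  have hπ := Real.pi_pos
  have hsm := hsmooth
  rw [contDiff_infty_iff_deriv] at hsm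
  obtain ⟨hd1, hsm2⟩ := hsm
  rw [contDiff_infty_iff_deriv] at hsm2
  obtain ⟨hd2, hsm3⟩ := hsm2
  have hconts : Continuous s := hd1.continuous
  have hcont1 : Continuous (deriv s) := hd2.continuous
  have hcont2 : Continuous (deriv (deriv s)) := hsm3.continuous
  have hcontr : Continuous (rad s) := by
    have : (rad s) = fun θ => deriv (deriv s) θ + s θ := funext (rad_eq s)
    rw [this]; exact hcont2.add hconts
  set t : ℝ := Real.tan (π / (2 * k)) with htdef
  have htpos : 0 < t := by
    apply Real.tan_pos_of_pos_of_lt_pi_div_two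
    · positivity
    · rw [div_lt_div_iff₀ (by positivity) (by norm_num)]
      nlinarith
  set L : ℝ := ∫ θ in (0:ℝ)..(2 * π), s θ with hLdef
  have hkey : ∀ θ₀, L / (4 * k * t) ≤ s θ₀ := by
    intro θ₀
    have := wedge_bound k hk s hsmooth hper hconv θ₀
    rw [div_le_iff₀ (by positivity)]
    calc L ≤ 4 * k * t * s θ₀ := this
      _ = s θ₀ * (4 * k * t) := by ring
  -- deriv s is periodic
  have hperd : Function.Periodic (deriv s) (π / k) := by
    intro x
    rw [← deriv_comp_add_const]
    congr 1
    ext y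
    exact hper y
  have hds : deriv s (2 * π) = deriv s 0 := by
    have h := (hperd.nat_mul (2 * k)) 0
    have hc : (0:ℝ) + (2 * k : ℕ) * (π / k) = 2 * π := by
      push_cast; field_simp; ring
    rw [hc] at h
    exact h
  -- integral of rad equals L
  have hradL : (∫ θ in (0:ℝ)..(2 * π), rad s θ) = L := by
    have he : (∫ θ in (0:ℝ)..(2 * π), rad s θ)
        = ∫ θ in (0:ℝ)..(2 * π), (deriv (deriv s) θ + s θ) := by
      apply intervalIntegral.integral_congr
      intro x _
      exact rad_eq s x
    rw [he, intervalIntegral.integral_add (hcont2.intervalIntegrable _ _)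
      (hconts.intervalIntegrable _ _)]
    have hftc : (∫ θ in (0:ℝ)..(2 * π), deriv (deriv s) θ) = deriv s (2 * π) - deriv s 0 :=
      intervalIntegral.integral_deriv_eq_sub (fun x _ => hd2 x)
        (hcont2.intervalIntegrable _ _)
    rw [hftc, hds]
    simp [hLdef]
  -- area lower bound
  have harea2 : (∫ θ in (0:ℝ)..(2 * π), s θ * rad s θ) = 2 * π := by linarith
  have hmono : (∫ θ in (0:ℝ)..(2 * π), L / (4 * k * t) * rad s θ)
      ≤ ∫ θ in (0:ℝ)..(2 * π), s θ * rad s θ := by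
    apply intervalIntegral.integral_mono_on (by positivity)
      ((continuous_const.mul hcontr).intervalIntegrable _ _)
      ((hconts.mul hcontr).intervalIntegrable _ _)
    intro x _
    exact mul_le_mul_of_nonneg_right (hkey x) (hconv x).le
  have hlhs : (∫ θ in (0:ℝ)..(2 * π), L / (4 * k * t) * rad s θ)
      = L / (4 * k * t) * L := by
    rw [intervalIntegral.integral_const_mul, hradL]
  rw [hlhs, harea2] at hmono
  have hL2 : L ^ 2 ≤ 8 * π * k * t := by
    have h4 : (0:ℝ) < 4 * k * t := by positivity
    rw [div_mul_eq_mul_div, div_le_iff₀ h4] at hmono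
    nlinarith
  have hsq : (1 / (2 * π) * L) ^ 2 ≤ ck := by
    rw [hck]
    have h1 : (1 / (2 * π) * L) ^ 2 = L ^ 2 / (4 * π ^ 2) := by
      ring
    rw [h1, div_le_iff₀ (by positivity : (0:ℝ) < 4 * π ^ 2)]
    calc L ^ 2 ≤ 8 * π * ↑k * t := hL2
      _ = 2 * ↑k / π * t * (4 * π ^ 2) := by field_simp; ring
  exact Real.le_sqrt_of_sq_le hsq

end
end
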